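/- arXiv:2405.08075 — 5 statements merged into one kernel-verified Lean document; each statement's English description precedes it below -/
import Mathlib

section
/- Let G be a finite 2-group such that G/Z(G) is isomorphic to a dihedral group of order 2^(ℓ+1) with ℓ ≥ 2. Then the derived subgroup [G,G] is cyclic of order 2^ℓ. -/
open Subgroup DihedralGroup
open scoped commutatorElement

/-- Let G be a finite 2-group such that G/Z(G) is isomorphic to a dihedral
group of order 2^(ℓ+1) (i.e. `DihedralGroup (2^ℓ)`) with ℓ ≥ 2. Then the derived subgroup
[G,G] is cyclic of order 2^ℓ. -/
theorem stmt0 {G : Type*} [Group G] [Finite G] (hG : IsPGroup 2 G) (ℓ : ℕ) (hℓ : 2 ≤ ℓ)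
    (h : Nonempty ((G ⧸ Subgroup.center G) ≃* DihedralGroup (2 ^ ℓ))) :
    IsCyclic (commutator G) ∧ Nat.card (commutator G) = 2 ^ ℓ := by
  obtain ⟨e⟩ := h
  haveI : NeZero (2 ^ ℓ) := ⟨by positivity⟩
  set π : G →* G ⧸ Subgroup.center G := QuotientGroup.mk' (Subgroup.center G) with hπdef
  have hker : ∀ x : G, π x = 1 ↔ x ∈ Subgroup.center G := by
    intro x
    rw [← MonoidHom.mem_ker, QuotientGroup.ker_mk']
  obtain ⟨a, ha⟩ := QuotientGroup.mk'_surjective (Subgroup.center G) (e.symm (r 1))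
  obtain ⟨b, hb⟩ := QuotientGroup.mk'_surjective (Subgroup.center G) (e.symm (sr 0))
  have hπa : ∀ k : ℕ, π (a ^ k) = e.symm (r (k : ZMod (2 ^ ℓ))) := by
    intro k
    rw [map_pow, ha, ← map_pow, r_one_pow]
  -- decomposition of arbitrary elements
  have hdec : ∀ g : G, ∃ (n : ℕ) (z : G), z ∈ Subgroup.center G ∧
      (g = a ^ n * z ∨ g = b * a ^ n * z) := by
    intro g
    cases hq : e (π g) with
    | r i =>
        refine ⟨i.val, (a ^ i.val)⁻¹ * g, ?_, Or.inl (by group)⟩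
        rw [← hker]
        have h1 : π g = π (a ^ i.val) := by
          rw [hπa, ZMod.natCast_rightInverse i]
          calc π g = e.symm (e (π g)) := (e.symm_apply_apply _).symm
            _ = e.symm (r i) := by rw [hq]
        simp [map_mul, map_inv, h1]
    | sr i =>
        refine ⟨i.val, (b * a ^ i.val)⁻¹ * g, ?_, Or.inr (by group)⟩
        rw [← hker]
        have h1 : π g = π (b * a ^ i.val) := by
          rw [map_mul, hb, hπa, ZMod.natCast_rightInverse i]
          calc π g = e.symm (e (π g)) := (e.symm_apply_apply _).symm
            _ = e.symm (sr i) := by rw [hq]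
            _ = e.symm (sr 0) * e.symm (r i) := by rw [← map_mul, sr_mul_r, zero_add]
        rw [map_mul, map_inv, h1]
        group
  set c : G := ⁅a, b⁆ with hcdef
  have hcd : c = a * b * a⁻¹ * b⁻¹ := commutatorElement_def a b
  -- π c = π (a * a)
  have hπc : π c = π a * π a := by
    have hdih : (r 1 * sr 0 * (r 1)⁻¹ * (sr 0)⁻¹ : DihedralGroup (2 ^ ℓ)) = r 1 * r 1 := by
      have invr : ((r 1 : DihedralGroup (2 ^ ℓ)))⁻¹ = r (-1) := rfl
      have invsr : ((sr 0 : DihedralGroup (2 ^ ℓ)))⁻¹ = sr 0 := rfl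
      rw [invr, invsr, r_mul_sr, sr_mul_r, sr_mul_sr, r_mul_r]
      congr 1
      ring
    have h0 : π c = π a * π b * (π a)⁻¹ * (π b)⁻¹ := by
      rw [hcdef, commutatorElement_def]
      simp only [map_mul, map_inv]
    rw [h0, ha, hb, ← map_inv e.symm, ← map_inv e.symm, ← map_mul e.symm, ← map_mul e.symm,
      ← map_mul e.symm, hdih, map_mul e.symm]
  have hc2 : ∃ z ∈ Subgroup.center G, c = a * a * z := by
    refine ⟨(a * a)⁻¹ * c, (hker _).mp ?_, by group⟩
    rw [map_mul, map_inv, map_mul, hπc]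
    group
  have hac : Commute a c := by
    obtain ⟨z, hz, hczz⟩ := hc2
    rw [hczz]
    exact ((Commute.refl a).mul_right (Commute.refl a)).mul_right
      (Subgroup.mem_center_iff.mp hz a)
  have hzb : b * b ∈ Subgroup.center G := by
    rw [← hker, map_mul, hb, ← map_mul, sr_mul_sr, sub_self, ← one_def, map_one]
  have hzb' := Subgroup.mem_center_iff.mp hzb
  -- conjugation by b inverts c
  have hmid : b * a⁻¹ * b⁻¹ = b⁻¹ * a⁻¹ * b := by
    calc b * a⁻¹ * b⁻¹ = b⁻¹ * ((b * b) * a⁻¹) * b⁻¹ := by group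
      _ = b⁻¹ * (a⁻¹ * (b * b)) * b⁻¹ := by rw [← hzb' a⁻¹]
      _ = b⁻¹ * a⁻¹ * b := by group
  have hbc : b * c * b⁻¹ = c⁻¹ := by
    calc b * c * b⁻¹ = (b * a) * (b * a⁻¹ * b⁻¹) * b⁻¹ := by rw [hcd]; group
      _ = (b * a) * (b⁻¹ * a⁻¹ * b) * b⁻¹ := by rw [hmid]
      _ = c⁻¹ := by rw [hcd]; group
  have hbcz : ∀ k : ℤ, b * c ^ k * b⁻¹ = (c ^ k)⁻¹ := by
    intro k
    have h1 : b * c ^ k * b⁻¹ = (b * c * b⁻¹) ^ k := by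
      rw [show b * c * b⁻¹ = (MulAut.conj b) c from rfl, ← map_zpow]
      rfl
    rw [h1, hbc, inv_zpow]
  have hba1 : b * a * b⁻¹ = c⁻¹ * a := by rw [hcd]; group
  have hcn : ∀ n : ℕ, ⁅a ^ n, b⁆ = c ^ n := by
    intro n
    have h1 : b * a ^ n * b⁻¹ = (b * a * b⁻¹) ^ n := by
      rw [show b * a * b⁻¹ = (MulAut.conj b) a from rfl, ← map_pow]
      rfl
    rw [hba1] at h1
    have h2 : (c⁻¹ * a) ^ n = (c⁻¹) ^ n * a ^ n := (hac.symm.inv_left).mul_pow n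
    calc ⁅a ^ n, b⁆ = a ^ n * (b * a ^ n * b⁻¹)⁻¹ := by rw [commutatorElement_def]; group
      _ = a ^ n * ((c⁻¹) ^ n * a ^ n)⁻¹ := by rw [h1, h2]
      _ = a ^ n * ((a ^ n)⁻¹ * c ^ n) := by group
      _ = c ^ n := by group
  -- central conjugation helper
  have hconjz : ∀ (u v w : G), w ∈ Subgroup.center G → (u * w) * v * (u * w)⁻¹ = u * v * u⁻¹ := by
    intro u v w hw
    have h1 := Subgroup.mem_center_iff.mp hw v
    calc (u * w) * v * (u * w)⁻¹ = u * (w * v) * (w⁻¹ * u⁻¹) := by group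
      _ = u * (v * w) * (w⁻¹ * u⁻¹) := by rw [← h1]
      _ = u * v * u⁻¹ := by group
  -- zpowers c is normal
  haveI hNnormal : (Subgroup.zpowers c).Normal := by
    constructor
    intro x hx g
    obtain ⟨k, hk⟩ := Subgroup.mem_zpowers_iff.mp hx
    obtain ⟨m, z, hz, rfl | rfl⟩ := hdec g
    · rw [← hk, hconjz _ _ _ hz]
      have hcomm : Commute (a ^ m) (c ^ k) := (hac.pow_left m).zpow_right k
      rw [show a ^ m * c ^ k * (a ^ m)⁻¹ = c ^ k from by rw [hcomm.eq]; group]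
      exact Subgroup.zpow_mem _ (Subgroup.mem_zpowers c) k
    · rw [← hk, show b * a ^ m * z = (b * a ^ m) * z from by group, hconjz _ _ _ hz]
      have hcomm : Commute (a ^ m) (c ^ k) := (hac.pow_left m).zpow_right k
      rw [show (b * a ^ m) * c ^ k * (b * a ^ m)⁻¹ = b * (a ^ m * c ^ k * (a ^ m)⁻¹) * b⁻¹ from
        by group, show a ^ m * c ^ k * (a ^ m)⁻¹ = c ^ k from by rw [hcomm.eq]; group, hbcz k]
      exact Subgroup.inv_mem _ (Subgroup.zpow_mem _ (Subgroup.mem_zpowers c) k)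
  -- the quotient by zpowers c is abelian on images
  set ρ : G →* G ⧸ Subgroup.zpowers c := QuotientGroup.mk' (Subgroup.zpowers c) with hρdef
  have hρker : ∀ x : G, ρ x = 1 ↔ x ∈ Subgroup.zpowers c := by
    intro x
    rw [← MonoidHom.mem_ker, QuotientGroup.ker_mk']
  have hZρ : ∀ z ∈ Subgroup.center G, ∀ x : G, Commute (ρ z) (ρ x) := by
    intro z hz x
    have h1 := Subgroup.mem_center_iff.mp hz x
    show ρ z * ρ x = ρ x * ρ z
    rw [← map_mul, ← map_mul, ← h1]
  have hABρ : Commute (ρ a) (ρ b) := by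
    rw [← commutatorElement_eq_one_iff_commute, ← map_commutatorElement]
    exact (hρker _).mpr (Subgroup.mem_zpowers c)
  have hAall : ∀ g : G, Commute (ρ a) (ρ g) := by
    intro g
    obtain ⟨n, z, hz, rfl | rfl⟩ := hdec g
    · simp only [map_mul, map_pow]
      exact (((Commute.refl (ρ a)).pow_right n)).mul_right (hZρ z hz a).symm
    · simp only [map_mul, map_pow]
      exact (hABρ.mul_right ((Commute.refl (ρ a)).pow_right n)).mul_right (hZρ z hz a).symm
  have hBall : ∀ g : G, Commute (ρ b) (ρ g) := by
    intro g
    obtain ⟨n, z, hz, rfl | rfl⟩ := hdec g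
    · simp only [map_mul, map_pow]
      exact ((hABρ.symm.pow_right n)).mul_right (hZρ z hz b).symm
    · simp only [map_mul, map_pow]
      exact ((Commute.refl (ρ b)).mul_right (hABρ.symm.pow_right n)).mul_right (hZρ z hz b).symm
  have hall : ∀ g g' : G, Commute (ρ g) (ρ g') := by
    intro g g'
    obtain ⟨n, z, hz, rfl | rfl⟩ := hdec g
    · simp only [map_mul, map_pow]
      exact Commute.mul_left ((hAall g').pow_left n) (hZρ z hz g')
    · simp only [map_mul, map_pow]
      exact Commute.mul_left (Commute.mul_left (hBall g') ((hAall g').pow_left n)) (hZρ z hz g')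
  have hle : commutator G ≤ Subgroup.zpowers c := by
    rw [_root_.commutator_def, Subgroup.commutator_le]
    intro g _ g' _
    rw [← hρker, map_commutatorElement]
    exact commutatorElement_eq_one_iff_commute.mpr (hall g g')
  have hcN : c ∈ commutator G := by
    rw [_root_.commutator_def]
    exact Subgroup.commutator_mem_commutator (Subgroup.mem_top a) (Subgroup.mem_top b)
  have hEq : commutator G = Subgroup.zpowers c :=
    le_antisymm hle (Subgroup.zpowers_le.mpr hcN)
  -- order of c
  have hc2l : c ^ (2 ^ ℓ) = 1 := by
    have hcent : a ^ (2 ^ ℓ) ∈ Subgroup.center G := by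
      rw [← hker, hπa, ZMod.natCast_self, ← one_def, map_one]
    rw [← hcn]
    exact commutatorElement_eq_one_iff_commute.mpr
      ((Subgroup.mem_center_iff.mp hcent b).symm)
  have hcl1 : c ^ (2 ^ (ℓ - 1)) ≠ 1 := by
    intro hone
    have hub : Commute (a ^ (2 ^ (ℓ - 1))) b := by
      rw [← commutatorElement_eq_one_iff_commute, hcn]
      exact hone
    have hucent : a ^ (2 ^ (ℓ - 1)) ∈ Subgroup.center G := by
      rw [Subgroup.mem_center_iff]
      intro g
      obtain ⟨n, z, hz, rfl | rfl⟩ := hdec g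
      · exact (((Commute.refl a).pow_pow _ n).mul_right
          (Subgroup.mem_center_iff.mp hz _)).symm.eq
      · exact ((hub.mul_right ((Commute.refl a).pow_pow _ n)).mul_right
          (Subgroup.mem_center_iff.mp hz _)).symm.eq
    have h1 : π (a ^ (2 ^ (ℓ - 1))) = 1 := (hker _).mpr hucent
    rw [hπa] at h1
    have h2 : (r (((2 : ℕ) ^ (ℓ - 1) : ℕ) : ZMod (2 ^ ℓ)) : DihedralGroup (2 ^ ℓ)) = 1 :=
      e.symm.injective (h1.trans (map_one e.symm).symm)
    rw [one_def, r.injEq] at h2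
    rw [ZMod.natCast_eq_zero_iff] at h2
    have h3 := Nat.le_of_dvd (by positivity) h2
    have h4 : (2 : ℕ) ^ (ℓ - 1) < 2 ^ ℓ := Nat.pow_lt_pow_right one_lt_two (by omega)
    omega
  have horder : orderOf c = 2 ^ ℓ := by
    have hdvd : orderOf c ∣ 2 ^ ℓ := orderOf_dvd_of_pow_eq_one hc2l
    obtain ⟨k, hk, hck⟩ := (Nat.dvd_prime_pow Nat.prime_two).mp hdvd
    rcases eq_or_lt_of_le hk with rfl | hlt
    · exact hck
    · exfalso
      apply hcl1
      apply orderOf_dvd_iff_pow_eq_one.mp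
      rw [hck]
      exact pow_dvd_pow 2 (by omega)
  constructor
  · rw [hEq]
    constructor
    refine ⟨⟨c, Subgroup.mem_zpowers c⟩, ?_⟩
    rintro ⟨y, hy⟩
    obtain ⟨k, hk⟩ := Subgroup.mem_zpowers_iff.mp hy
    refine Subgroup.mem_zpowers_iff.mpr ⟨k, ?_⟩
    ext
    simp [← hk]
  · rw [hEq, Nat.card_zpowers, horder]
end

section
/- Let p be an odd prime and let G = ⟨x, y⟩ be a finite non-abelian p-group such that x^p and y^p are central and the derived subgroup [G,G] is cyclic. Then G/Z(G) is elementary abelian of rank two (equivalently, Frattini subgroup Frat(G) equals Z(G) and G/Z(G) ≅ C_p × C_p). -/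
open Subgroup QuotientGroup Pointwise commutatorElement


lemma aux_binom (d : ℤ) (i : ℕ) : d^2 ∣ (1+d)^i - (1 + i*d) := by
  induction i with
  | zero => simp
  | succ n ih =>
    have : (1+d)^(n+1) - (1 + ((n:ℤ)+1)*d) = (1+d)*((1+d)^n - (1+n*d)) + n*d^2 := by ring
    push_cast
    rw [this]
    exact dvd_add (Dvd.dvd.mul_left ih _) ⟨n, by ring⟩

lemma aux_NT (p : ℕ) (hp : p.Prime) (hodd : Odd p) {b : ℤ} {m : ℕ}
    (h1 : (p:ℤ)^m ∣ b^p - 1) (h2 : (p:ℤ)^m ∣ ∑ i ∈ Finset.range p, b^i) : m ≤ 1 := by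
  by_contra hm
  push_neg at hm
  have hm2 : 2 ≤ m := hm
  have hp1 : (1:ℕ) < p := hp.one_lt
  have hdvd2 : ((p:ℤ)^2 ∣ (p:ℤ)^m) := pow_dvd_pow _ hm2
  have hpdvd : ((p:ℤ) ∣ (p:ℤ)^m) := dvd_pow_self _ (by omega)
  haveI : Fact p.Prime := ⟨hp⟩
  have fermat : (p:ℤ) ∣ b^p - b := by
    have h0 : ((b : ZMod p))^p = (b : ZMod p) := ZMod.pow_card _
    exact (ZMod.intCast_zmod_eq_zero_iff_dvd (b^p - b) p).mp (by push_cast [h0]; ring)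
  have hb1 : (p:ℤ) ∣ b - 1 := by
    have h3 := dvd_sub (hpdvd.trans h1) fermat
    have h4 : b^p - 1 - (b^p - b) = b - 1 := by ring
    rwa [h4] at h3
  obtain ⟨d, hd⟩ := hb1
  have hb : b = 1 + (p:ℤ)*d := by linarith
  have key : ((p:ℤ))^2 ∣ (∑ i ∈ Finset.range p, b^i) - ((p:ℤ) + ((p:ℤ)*d) * (∑ i ∈ Finset.range p, (i:ℤ))) := by
    have hsum : (∑ i ∈ Finset.range p, b^i) - ((p:ℤ) + ((p:ℤ)*d) * (∑ i ∈ Finset.range p, (i:ℤ)))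
        = ∑ i ∈ Finset.range p, ((1+(p:ℤ)*d)^i - (1 + (i:ℤ)*((p:ℤ)*d))) := by
      rw [Finset.sum_sub_distrib, Finset.sum_add_distrib, hb]
      simp [Finset.mul_sum]
      ring_nf
    rw [hsum]
    refine Finset.dvd_sum fun i _ => ?_
    have := aux_binom ((p:ℤ)*d) i
    exact dvd_trans (by rw [mul_pow]; exact ⟨d^2, by ring⟩) this
  -- second summand: p² ∣ pd * (p(p-1)/2)
  have gauss : (∑ i ∈ Finset.range p, (i:ℤ)) * 2 = (p:ℤ) * ((p:ℤ)-1) := by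
    have := Finset.sum_range_id_mul_two p
    have h8 : ((∑ i ∈ Finset.range p, i : ℕ) : ℤ) * 2 = ((p * (p-1) : ℕ) : ℤ) := by
      exact_mod_cast congrArg (Nat.cast : ℕ → ℤ) this
    push_cast [Nat.cast_sub (by omega : 1 ≤ p)] at h8
    simpa using h8
  have hdvd_tri : ((p:ℤ))^2 ∣ ((p:ℤ)*d) * (∑ i ∈ Finset.range p, (i:ℤ)) := by
    obtain ⟨t, ht⟩ := hodd
    have h9 : (∑ i ∈ Finset.range p, (i:ℤ)) = p * t := by
      have hpt : ((p:ℤ) - 1) = 2 * t := by push_cast [ht]; ring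
      have := gauss
      rw [hpt] at this
      linarith
    rw [h9]; exact ⟨d*t, by ring⟩
  have hfinal : ((p:ℤ))^2 ∣ (p:ℤ) := by
    have h5 : ((p:ℤ))^2 ∣ (∑ i ∈ Finset.range p, b^i) := hdvd2.trans h2
    have h6 := dvd_sub (dvd_sub h5 key) hdvd_tri
    have h7 : (∑ i ∈ Finset.range p, b^i) - ((∑ i ∈ Finset.range p, b^i) - ((p:ℤ) + ((p:ℤ)*d) * (∑ i ∈ Finset.range p, (i:ℤ)))) - ((p:ℤ)*d) * (∑ i ∈ Finset.range p, (i:ℤ)) = (p:ℤ) := by ring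
    rwa [h7] at h6
  have : (p:ℤ)^2 ≤ (p:ℤ) := Int.le_of_dvd (by positivity) hfinal
  nlinarith [sq_nonneg ((p:ℤ) - 1), (show (1:ℤ) < (p:ℤ) by exact_mod_cast hp1)]


lemma aux_comm {G : Type*} [Group G] {x y : G} (h : x*y = y*x)
    (hgen : Subgroup.closure {x, y} = ⊤) (a b : G) : a * b = b * a := by
  have hx' : ∀ b : G, Commute x b := by
    intro b
    have hb : b ∈ Subgroup.closure {x, y} := by rw [hgen]; trivial
    induction hb using Subgroup.closure_induction with
    | mem z hz => rcases hz with rfl | rfl; exact Commute.refl _; exact h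
    | one => exact Commute.one_right _
    | mul u v _ _ hu hv => exact hu.mul_right hv
    | inv u _ hu => exact hu.inv_right
  have hy' : ∀ b : G, Commute y b := by
    intro b
    have hb : b ∈ Subgroup.closure {x, y} := by rw [hgen]; trivial
    induction hb using Subgroup.closure_induction with
    | mem z hz => rcases hz with rfl | rfl; exact h.symm; exact Commute.refl _
    | one => exact Commute.one_right _
    | mul u v _ _ hu hv => exact hu.mul_right hv
    | inv u _ hu => exact hu.inv_right
  have ha : a ∈ Subgroup.closure {x, y} := by rw [hgen]; trivial
  induction ha using Subgroup.closure_induction with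
  | mem z hz => rcases hz with rfl | rfl; exact hx' b; exact hy' b
  | one => exact (Commute.one_left _)
  | mul u v _ _ hu hv => exact (Commute.mul_left hu hv)
  | inv u _ hu => exact (Commute.inv_left hu)

/-- hom `Multiplicative (ZMod p) →* H` sending 1 to u, for u of order dividing p -/
def zmodHom {H : Type*} [Group H] (p : ℕ) [NeZero p] (u : H) (hu : u ^ p = 1) :
    Multiplicative (ZMod p) →* H where
  toFun a := u ^ (Multiplicative.toAdd a).val
  map_one' := by simp [ZMod.val_zero]
  map_mul' a b := by
    simp only [toAdd_mul, ← pow_add]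
    have hord : orderOf u ∣ p := orderOf_dvd_of_pow_eq_one hu
    refine pow_eq_pow_iff_modEq.mpr ?_
    have : ((Multiplicative.toAdd a) + (Multiplicative.toAdd b)).val
        ≡ (Multiplicative.toAdd a).val + (Multiplicative.toAdd b).val [MOD p] := by
      rw [ZMod.val_add]; exact Nat.mod_modEq _ _
    exact this.of_dvd hord

lemma aux_surj {H : Type*} [Group H] (p : ℕ) (hp : p.Prime) (u v : H)
    (hcomm : Commute u v) (hu : u ^ p = 1) (hv : v ^ p = 1)
    (hgen : Subgroup.closure {u, v} = ⊤) :
    ∃ φ : (Multiplicative (ZMod p) × Multiplicative (ZMod p)) →* H, Function.Surjective φ := by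
  haveI : NeZero p := ⟨hp.pos.ne'⟩
  haveI : Fact (1 < p) := ⟨hp.one_lt⟩
  refine ⟨(zmodHom p u hu).noncommCoprod (zmodHom p v hv) (fun a b => ?_), ?_⟩
  · exact (hcomm.pow_pow _ _)
  · rw [← MonoidHom.range_eq_top]
    rw [← top_le_iff, ← hgen]
    rw [Subgroup.closure_le]
    rintro z (rfl | rfl)
    · refine ⟨(Multiplicative.ofAdd (1 : ZMod p), 1), ?_⟩
      simp [MonoidHom.noncommCoprod, zmodHom, ZMod.val_one, ZMod.val_zero]
    · refine ⟨(1, Multiplicative.ofAdd (1 : ZMod p)), ?_⟩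
      simp [MonoidHom.noncommCoprod, zmodHom, ZMod.val_one, ZMod.val_zero]

lemma aux_fermat (p : ℕ) (hp : p.Prime) (b : ℤ) : (p:ℤ) ∣ b^p - b := by
  haveI : Fact p.Prime := ⟨hp⟩
  have h0 : ((b : ZMod p))^p = (b : ZMod p) := ZMod.pow_card _
  exact (ZMod.intCast_zmod_eq_zero_iff_dvd (b^p - b) p).mp (by push_cast [h0]; ring)


lemma aux_quot {G : Type*} [Group G] {x y : G} (hgen : Subgroup.closure {x,y} = ⊤)
    (H : Subgroup G) [H.Normal] (hc : ⁅x,y⁆ ∈ H) :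
    (∀ a b : G ⧸ H, a * b = b * a) ∧
      Subgroup.closure {(QuotientGroup.mk' H) x, (QuotientGroup.mk' H) y} = ⊤ := by
  have hgenQ : Subgroup.closure {(mk' H) x, (mk' H) y} = ⊤ := by
    have h1 : Subgroup.map (mk' H) (Subgroup.closure {x,y})
        = Subgroup.closure {(mk' H) x, (mk' H) y} := by
      rw [MonoidHom.map_closure]; congr 1; simp [Set.image_insert_eq]
    rw [← h1, hgen, Subgroup.map_top_of_surjective _ (QuotientGroup.mk'_surjective H)]
  have hc1 : (mk' H) x * (mk' H) y = (mk' H) y * (mk' H) x := by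
    rw [← commutatorElement_eq_one_iff_mul_comm, ← map_commutatorElement,
      ← MonoidHom.mem_ker, QuotientGroup.ker_mk']
    exact hc
  exact ⟨fun a b => aux_comm hc1 hgenQ a b, hgenQ⟩

lemma aux_coatom {G : Type*} [Group G] {M : Subgroup G} {p : ℕ} (hp : p.Prime)
    (h : M.index = p) : IsCoatom M := by
  constructor
  · intro h1
    rw [h1, Subgroup.index_top] at h
    exact hp.one_lt.ne' h.symm
  · intro K hK
    have h2 := Subgroup.relIndex_mul_index hK.le
    rw [h] at h2
    have hKdvd : K.index ∣ p := Dvd.intro_left _ h2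
    rcases hp.eq_one_or_self_of_dvd _ hKdvd with h3 | h3
    · exact Subgroup.index_eq_one.mp h3
    · exfalso
      rw [h3, mul_comm] at h2
      have h4 : M.relIndex K = 1 := Nat.eq_of_mul_eq_mul_left hp.pos (by rw [h2, mul_one])
      exact hK.not_ge (Subgroup.relIndex_eq_one.mp h4)

set_option maxHeartbeats 1000000 in
/-- Let p be an odd prime and G = ⟨x,y⟩ a finite non-abelian p-group with
x^p, y^p central and cyclic derived subgroup. Then Frat(G) = Z(G) and
G/Z(G) ≅ C_p × C_p (elementary abelian of rank two). -/
theorem stmt2 (p : ℕ) (hp : p.Prime) (hodd : Odd p) {G : Type*} [Group G] [Finite G]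
    (hpG : IsPGroup p G) (x y : G) (hgen : Subgroup.closure {x, y} = ⊤)
    (hna : ∃ a b : G, a * b ≠ b * a)
    (hx : x ^ p ∈ Subgroup.center G) (hy : y ^ p ∈ Subgroup.center G)
    (hcyc : IsCyclic (commutator G)) :
    frattini G = Subgroup.center G ∧
    Nonempty ((G ⧸ Subgroup.center G) ≃*
      (Multiplicative (ZMod p) × Multiplicative (ZMod p))) := by
  haveI : Fact p.Prime := ⟨hp⟩
  have conj_zpow' : ∀ (a b : G) (k : ℤ), a * b^k * a⁻¹ = (a*b*a⁻¹)^k := by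
    intro a b k
    simpa [MulAut.conj_apply] using (map_zpow (MulAut.conj a) b k).symm
  have hcne : ⁅x,y⁆ ≠ 1 := by
    intro h
    obtain ⟨a, b, hab⟩ := hna
    exact hab (aux_comm (commutatorElement_eq_one_iff_mul_comm.mp h) hgen a b)
  obtain ⟨g, hg⟩ := hcyc.exists_generator
  have hcK : ⁅x,y⁆ ∈ commutator G := by
    rw [_root_.commutator_def]
    exact Subgroup.commutator_mem_commutator (Subgroup.mem_top x) (Subgroup.mem_top y)
  obtain ⟨s, hs⟩ := Subgroup.mem_zpowers_iff.mp (hg ⟨⁅x,y⁆, hcK⟩)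
  have hs' : (g:G) ^ s = ⁅x,y⁆ := by
    have := congrArg Subtype.val hs
    simpa using this
  have conj_fact : ∀ z : G, z ^ p ∈ Subgroup.center G →
      ∃ b : ℤ, z * (g:G) * z⁻¹ = (g:G) ^ b ∧ ((orderOf (g:G) : ℤ)) ∣ b ^ p - 1 := by
    intro z hz
    have h1 : z * (g:G) * z⁻¹ ∈ commutator G :=
      (Subgroup.commutator_normal ⊤ ⊤).conj_mem _ g.2 z
    obtain ⟨b, hb⟩ := Subgroup.mem_zpowers_iff.mp (hg ⟨_, h1⟩)
    have hb' : (g:G) ^ b = z * (g:G) * z⁻¹ := by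
      have := congrArg Subtype.val hb
      simpa using this
    refine ⟨b, hb'.symm, ?_⟩
    have hiter : ∀ k : ℕ, z ^ k * (g:G) * (z ^ k)⁻¹ = (g:G) ^ (b ^ k) := by
      intro k
      induction k with
      | zero => simp
      | succ n ih =>
        have e1 : z ^ (n+1) * (g:G) * (z ^ (n+1))⁻¹ = z * (z ^ n * (g:G) * (z^n)⁻¹) * z⁻¹ := by
          rw [pow_succ']; group
        rw [e1, ih]
        calc z * (g:G)^(b^n) * z⁻¹ = (z * (g:G) * z⁻¹)^(b^n) := conj_zpow' _ _ _
          _ = ((g:G)^b)^(b^n) := by rw [← hb']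
          _ = (g:G)^(b*b^n) := (zpow_mul _ _ _).symm
          _ = (g:G)^(b^(n+1)) := by rw [← pow_succ']
    have hp0 : z ^ p * (g:G) * (z ^ p)⁻¹ = (g:G) := by
      have e2 := Subgroup.mem_center_iff.mp hz (g:G)
      rw [← e2]; group
    rw [hiter p] at hp0
    rw [orderOf_dvd_iff_zpow_eq_one]
    rw [zpow_sub, zpow_one, hp0]
    group
  obtain ⟨bx, hbx, hbxd⟩ := conj_fact x hx
  obtain ⟨bb, hby, hbyd⟩ := conj_fact y hy
  have hcg : orderOf ⁅x,y⁆ ∣ orderOf (g:G) :=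
    orderOf_dvd_of_mem_zpowers (hs' ▸ Subgroup.mem_zpowers_iff.mpr ⟨s, rfl⟩)
  have conj_c : ∀ (z : G) (b : ℤ), z * (g:G) * z⁻¹ = (g:G)^b → z * ⁅x,y⁆ * z⁻¹ = ⁅x,y⁆ ^ b := by
    intro z b hb
    rw [← hs']
    calc z * (g:G)^s * z⁻¹ = (z * (g:G) * z⁻¹)^s := conj_zpow' _ _ _
      _ = ((g:G)^b)^s := by rw [hb]
      _ = (g:G)^(b*s) := (zpow_mul _ _ _).symm
      _ = (g:G)^(s*b) := by rw [mul_comm]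
      _ = ((g:G)^s)^b := zpow_mul _ _ _
  have comm_pow : ∀ n : ℕ, ⁅x, y^n⁆ = ⁅x,y⁆ ^ (∑ i ∈ Finset.range n, bb ^ i) := by
    intro n; induction n with
    | zero => simp
    | succ n ih =>
      have hyc : y * ⁅x,y⁆ * y⁻¹ = ⁅x,y⁆ ^ bb := conj_c y bb hby
      have step : ⁅x, y^(n+1)⁆ = ⁅x,y⁆ * (y * ⁅x, y^n⁆ * y⁻¹) := by
        rw [pow_succ']
        simp only [commutatorElement_def]
        group
      rw [step, ih]
      calc ⁅x,y⁆ * (y * ⁅x,y⁆ ^ (∑ i ∈ Finset.range n, bb ^ i) * y⁻¹)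
          = ⁅x,y⁆ * ((y * ⁅x,y⁆ * y⁻¹) ^ (∑ i ∈ Finset.range n, bb ^ i)) := by
            rw [conj_zpow']
        _ = ⁅x,y⁆ * ((⁅x,y⁆ ^ bb) ^ (∑ i ∈ Finset.range n, bb ^ i)) := by rw [hyc]
        _ = ⁅x,y⁆ ^ (1 + bb * (∑ i ∈ Finset.range n, bb ^ i)) := by
            rw [zpow_add, zpow_one, zpow_mul]
        _ = ⁅x,y⁆ ^ (∑ i ∈ Finset.range (n+1), bb ^ i) := by
            rw [geom_sum_succ, add_comm]
  have hxyp : ⁅x, y^p⁆ = 1 :=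
    commutatorElement_eq_one_iff_mul_comm.mpr (Subgroup.mem_center_iff.mp hy x)
  have hSp : ((orderOf ⁅x,y⁆ : ℕ) : ℤ) ∣ (∑ i ∈ Finset.range p, bb ^ i) := by
    rw [orderOf_dvd_iff_zpow_eq_one, ← comm_pow p]
    exact hxyp
  obtain ⟨n0, hn0⟩ := hpG ⁅x,y⁆
  obtain ⟨m, hm_le, hq⟩ := (Nat.dvd_prime_pow hp).mp (orderOf_dvd_of_pow_eq_one hn0)
  have hm1 : m ≤ 1 := by
    apply aux_NT p hp hodd (b := bb)
    · have h5 : ((orderOf ⁅x,y⁆ : ℕ) : ℤ) ∣ bb^p - 1 :=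
        dvd_trans (Int.natCast_dvd_natCast.mpr hcg) hbyd
      rw [hq] at h5
      exact_mod_cast h5
    · rw [hq] at hSp
      exact_mod_cast hSp
  have hcp : orderOf ⁅x,y⁆ = p := by
    have hdvd : orderOf ⁅x,y⁆ ∣ p := by
      rw [hq]
      calc p ^ m ∣ p ^ 1 := pow_dvd_pow p hm1
        _ = p := pow_one p
    rcases hp.eq_one_or_self_of_dvd _ hdvd with h | h
    · exact absurd (orderOf_eq_one_iff.mp h) hcne
    · exact h
  have central_c : ∀ (z : G) (b : ℤ), z * (g:G) * z⁻¹ = (g:G)^b →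
      ((orderOf (g:G):ℤ) ∣ b^p - 1) → z * ⁅x,y⁆ * z⁻¹ = ⁅x,y⁆ := by
    intro z b hb hbd
    have h1 : z * ⁅x,y⁆ * z⁻¹ = ⁅x,y⁆ ^ b := conj_c z b hb
    have h2 : ((p:ℤ)) ∣ b^p - 1 := by
      have h3 := dvd_trans (Int.natCast_dvd_natCast.mpr hcg) hbd
      rwa [hcp] at h3
    have hb1 : (p:ℤ) ∣ b - 1 := by
      have h3 := dvd_sub h2 (aux_fermat p hp b)
      have h4 : b^p - 1 - (b^p - b) = b - 1 := by ring
      rwa [h4] at h3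
    have h5 : ⁅x,y⁆ ^ (b - 1) = 1 := by
      rw [← orderOf_dvd_iff_zpow_eq_one] at *
      rw [hcp]
      exact hb1
    rw [h1]
    calc ⁅x,y⁆ ^ b = ⁅x,y⁆ ^ (b-1) * ⁅x,y⁆ ^ (1:ℤ) := by rw [← zpow_add]; ring_nf
      _ = ⁅x,y⁆ := by rw [h5, zpow_one, one_mul]
  have hxc : x * ⁅x,y⁆ = ⁅x,y⁆ * x := by
    have := central_c x bx hbx hbxd
    calc x * ⁅x,y⁆ = (x * ⁅x,y⁆ * x⁻¹) * x := by group
      _ = ⁅x,y⁆ * x := by rw [this]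
  have hyc2 : y * ⁅x,y⁆ = ⁅x,y⁆ * y := by
    have := central_c y bb hby hbyd
    calc y * ⁅x,y⁆ = (y * ⁅x,y⁆ * y⁻¹) * y := by group
      _ = ⁅x,y⁆ * y := by rw [this]
  have hc_center : ⁅x,y⁆ ∈ Subgroup.center G := by
    rw [Subgroup.mem_center_iff]
    intro w
    have hw : w ∈ Subgroup.closure {x, y} := by rw [hgen]; trivial
    induction hw using Subgroup.closure_induction with
    | mem z hz => rcases hz with rfl | rfl
                  · exact hxc
                  · exact hyc2
    | one => simp
    | mul u v _ _ hu hv => rw [mul_assoc, hv, ← mul_assoc, hu, mul_assoc]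
    | inv u _ hu => 
        calc u⁻¹ * ⁅x,y⁆ = u⁻¹ * ⁅x,y⁆ * u * u⁻¹ := by group
          _ = u⁻¹ * (u * ⁅x,y⁆) * u⁻¹ := by rw [mul_assoc u⁻¹ ⁅x,y⁆ u, ← hu]
          _ = ⁅x,y⁆ * u⁻¹ := by group
  -- Chunk 9: zpowers c ≤ center, normal
  have hH_le_Z : Subgroup.zpowers ⁅x,y⁆ ≤ Subgroup.center G := by
    rw [Subgroup.zpowers_le]; exact hc_center
  haveI hHnormal : (Subgroup.zpowers ⁅x,y⁆).Normal := by
    constructor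
    intro n hn w
    have h1 : w * n = n * w := (Subgroup.mem_center_iff.mp (hH_le_Z hn) w)
    have h2 : w * n * w⁻¹ = n := by rw [h1]; group
    rwa [h2]
  -- Chunk 10: commutator G ≤ zpowers c ≤ center
  have hKH : commutator G ≤ Subgroup.zpowers ⁅x,y⁆ := by
    obtain ⟨hcm, -⟩ := aux_quot hgen (Subgroup.zpowers ⁅x,y⁆) (Subgroup.mem_zpowers _)
    rw [_root_.commutator_def, Subgroup.commutator_le]
    intro a _ b _
    have h1 : (QuotientGroup.mk' (Subgroup.zpowers ⁅x,y⁆)) ⁅a,b⁆ = 1 := by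
      rw [map_commutatorElement]
      exact commutatorElement_eq_one_iff_mul_comm.mpr (hcm _ _)
    rwa [← QuotientGroup.ker_mk' (Subgroup.zpowers ⁅x,y⁆), MonoidHom.mem_ker]
  have hKZ : commutator G ≤ Subgroup.center G := hKH.trans hH_le_Z
  -- Chunk 11: quotient by center facts
  obtain ⟨hQcomm, hQgen⟩ := aux_quot hgen (Subgroup.center G) hc_center
  have hxp1 : ((QuotientGroup.mk' (Subgroup.center G)) x) ^ p = 1 := by
    rw [← map_pow, ← MonoidHom.mem_ker, QuotientGroup.ker_mk']; exact hx
  have hyp1 : ((QuotientGroup.mk' (Subgroup.center G)) y) ^ p = 1 := by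
    rw [← map_pow, ← MonoidHom.mem_ker, QuotientGroup.ker_mk']; exact hy
  have hQexp : ∀ u : G ⧸ Subgroup.center G, u ^ p = 1 := by
    intro u
    have hu : u ∈ Subgroup.closure {(QuotientGroup.mk' (Subgroup.center G)) x,
        (QuotientGroup.mk' (Subgroup.center G)) y} := by rw [hQgen]; trivial
    induction hu using Subgroup.closure_induction with
    | mem z hz => rcases hz with rfl | rfl
                  · exact hxp1
                  · exact hyp1
    | one => exact one_pow p
    | mul u v _ _ hu hv =>
        have hcuv : Commute u v := hQcomm u v
        rw [hcuv.mul_pow, hu, hv, one_mul]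
    | inv u _ hu => rw [inv_pow, hu, inv_one]
  have hgp : ∀ w : G, w ^ p ∈ Subgroup.center G := by
    intro w
    have h1 := hQexp ((QuotientGroup.mk' (Subgroup.center G)) w)
    rw [← map_pow, ← MonoidHom.mem_ker, QuotientGroup.ker_mk'] at h1
    exact h1
  have hQnc : ¬ IsCyclic (G ⧸ Subgroup.center G) := by
    intro hQc
    obtain ⟨a, b, hab⟩ := hna
    have hker : (QuotientGroup.mk' (Subgroup.center G)).ker ≤ Subgroup.center G := by
      rw [QuotientGroup.ker_mk']
    exact hab (commutative_of_cyclic_center_quotient (QuotientGroup.mk' _) hker a b)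
  -- Chunk 12: cardinality and iso
  obtain ⟨φ, hφ⟩ := aux_surj p hp _ _ (hQcomm _ _) hxp1 hyp1 hQgen
  have hsrc : Nat.card (Multiplicative (ZMod p) × Multiplicative (ZMod p)) = p ^ 2 := by
    simp [Nat.card_prod, Nat.card_zmod, sq]
  have hcardQdvd : Nat.card (G ⧸ Subgroup.center G) ∣ p ^ 2 := by
    rw [← hsrc]
    exact Subgroup.card_dvd_of_surjective φ hφ
  have hcardQ : Nat.card (G ⧸ Subgroup.center G) = p ^ 2 := by
    obtain ⟨k, hk_le, hkcard⟩ := (Nat.dvd_prime_pow hp).mp hcardQdvd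
    interval_cases k
    · exfalso
      apply hQnc
      have : Subsingleton (G ⧸ Subgroup.center G) := by
        rw [pow_zero] at hkcard
        exact (Nat.card_eq_one_iff_unique.mp hkcard).1
      infer_instance
    · exfalso
      apply hQnc
      rw [pow_one] at hkcard
      exact isCyclic_of_prime_card hkcard
    · exact hkcard
  have hbij : Function.Bijective φ := by
    rw [Nat.bijective_iff_surjective_and_card]
    exact ⟨hφ, by rw [hsrc, hcardQ]⟩
  refine ⟨?_, ⟨(MulEquiv.ofBijective φ hbij).symm⟩⟩
  -- Chunk 13: N := G' ⊔ ⟨p-th powers⟩ equals the center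
  have hZindex : (Subgroup.center G).index = p ^ 2 := by
    rw [Subgroup.index_eq_card, hcardQ]
  set Pw : Subgroup G := Subgroup.closure {h : G | ∃ w : G, w ^ p = h} with hPw
  set N : Subgroup G := commutator G ⊔ Pw with hN
  have hN_le_Z : N ≤ Subgroup.center G := by
    refine sup_le hKZ ?_
    rw [Subgroup.closure_le]
    rintro h ⟨w, rfl⟩
    exact hgp w
  have hKN : commutator G ≤ N := le_sup_left
  haveI hNnormal : N.Normal := by
    constructor
    intro n hn w
    have h1 : w * n * w⁻¹ = n * ⁅n⁻¹, w⁆ := by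
      simp only [commutatorElement_def]
      group
    rw [h1]
    refine N.mul_mem hn (hKN ?_)
    rw [_root_.commutator_def]
    exact Subgroup.commutator_mem_commutator (Subgroup.mem_top _) (Subgroup.mem_top _)
  have hxpN : x ^ p ∈ N := le_sup_right (a := commutator G) (Subgroup.subset_closure ⟨x, rfl⟩)
  have hypN : y ^ p ∈ N := le_sup_right (a := commutator G) (Subgroup.subset_closure ⟨y, rfl⟩)
  obtain ⟨hNcomm, hNgen⟩ := aux_quot hgen N (hKN hcK)
  have hxpN1 : ((QuotientGroup.mk' N) x) ^ p = 1 := by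
    rw [← map_pow, ← MonoidHom.mem_ker, QuotientGroup.ker_mk']; exact hxpN
  have hypN1 : ((QuotientGroup.mk' N) y) ^ p = 1 := by
    rw [← map_pow, ← MonoidHom.mem_ker, QuotientGroup.ker_mk']; exact hypN
  obtain ⟨ψ, hψ⟩ := aux_surj p hp _ _ (hNcomm _ _) hxpN1 hypN1 hNgen
  have hNindex : N.index ∣ p ^ 2 := by
    rw [Subgroup.index_eq_card, ← hsrc]
    exact Subgroup.card_dvd_of_surjective ψ hψ
  have hZN : Subgroup.center G = N := by
    have h1 := Subgroup.relIndex_mul_index hN_le_Z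
    rw [hZindex] at h1
    have hp2 : p ^ 2 ≠ 0 := pow_ne_zero 2 hp.pos.ne'
    have hrel : N.relIndex (Subgroup.center G) = 1 := by
      have h2 : N.relIndex (Subgroup.center G) * p ^ 2 ∣ p ^ 2 := by rw [h1]; exact hNindex
      have h3 := Nat.le_of_dvd (Nat.pos_of_ne_zero hp2) h2
      have h4 : N.relIndex (Subgroup.center G) ≠ 0 := by
        intro h0
        rw [h0, zero_mul] at h1
        rw [← h1] at hNindex
        exact hp2 (Nat.eq_zero_of_zero_dvd hNindex)
      have h5 := Nat.pos_of_ne_zero h4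
      nlinarith [Nat.pos_of_ne_zero hp2]
    exact le_antisymm (Subgroup.relIndex_eq_one.mp hrel) hN_le_Z
  -- Chunk 14a: center ≤ frattini
  have hZ_le_frat : Subgroup.center G ≤ frattini G := by
    rw [frattini, Order.radical]
    refine le_iInf fun M => le_iInf fun hM => ?_
    by_contra hZM
    have hsup : M ⊔ Subgroup.center G = ⊤ := hM.2 _ (left_lt_sup.mpr hZM)
    have hdecomp : ∀ w : G, ∃ m ∈ M, ∃ z ∈ Subgroup.center G, w = m * z := by
      intro w
      have hw : w ∈ M ⊔ Subgroup.center G := by rw [hsup]; trivial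
      have hw2 : w ∈ (M : Set G) * (Subgroup.center G : Set G) := by
        rw [← Subgroup.mul_normal M (Subgroup.center G)]; exact hw
      obtain ⟨m, hm, z, hz, hmz⟩ := hw2
      exact ⟨m, hm, z, hz, hmz.symm⟩
    haveI hMnormal : M.Normal := by
      constructor
      intro n hn w
      obtain ⟨m, hm, z, hz, rfl⟩ := hdecomp w
      have hzn : z * n * z⁻¹ = n := by
        rw [← Subgroup.mem_center_iff.mp hz n]; group
      have h5 : m * z * n * (m * z)⁻¹ = m * (z * n * z⁻¹) * m⁻¹ := by group
      rw [h5, hzn]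
      exact M.mul_mem (M.mul_mem hm hn) (M.inv_mem hm)
    have hMT : ∀ u : G ⧸ M, u ≠ 1 → Subgroup.zpowers u = ⊤ := by
      intro u hu
      have h1 : M ≤ Subgroup.comap (QuotientGroup.mk' M) (Subgroup.zpowers u) := by
        intro m hm
        rw [Subgroup.mem_comap]
        have : (QuotientGroup.mk' M) m = 1 := by
          rw [← MonoidHom.mem_ker, QuotientGroup.ker_mk']; exact hm
        rw [this]; exact one_mem _
      rcases eq_or_lt_of_le h1 with h2 | h2
      · exfalso
        obtain ⟨w, hw⟩ := QuotientGroup.mk'_surjective M u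
        have hwM : w ∈ M := by
          rw [h2, Subgroup.mem_comap, hw]
          exact Subgroup.mem_zpowers u
        apply hu
        rw [← hw]
        exact (QuotientGroup.eq_one_iff w).mpr hwM
      · have h3 := hM.2 _ h2
        have h4 := Subgroup.map_comap_eq_self_of_surjective
          (QuotientGroup.mk'_surjective M) (Subgroup.zpowers u)
        rw [h3] at h4
        rw [← h4, Subgroup.map_top_of_surjective _ (QuotientGroup.mk'_surjective M)]
    have hexpM : ∀ u : G ⧸ M, u ^ p = 1 := by
      intro u
      rcases eq_or_ne u 1 with rfl | hu
      · exact one_pow p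
      rcases eq_or_ne (u ^ p) 1 with h | hup
      · exact h
      exfalso
      have h2 := hMT (u ^ p) hup
      obtain ⟨k0, hk0⟩ := (hpG.to_quotient M) u
      obtain ⟨k, hk_le, hk⟩ := (Nat.dvd_prime_pow hp).mp (orderOf_dvd_of_pow_eq_one hk0)
      have hk1 : 1 ≤ k := by
        rcases Nat.eq_zero_or_pos k with h0 | h0
        · exfalso; rw [h0, pow_zero] at hk; exact hu (orderOf_eq_one_iff.mp hk)
        · exact h0
      have hord : orderOf u ∣ orderOf (u ^ p) :=
        orderOf_dvd_of_mem_zpowers (by rw [h2]; trivial)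
      have hord2 : orderOf (u ^ p) = p ^ (k - 1) := by
        rw [orderOf_pow' u hp.pos.ne', hk]
        have hgcd : Nat.gcd (p ^ k) p = p := Nat.gcd_eq_right (dvd_pow_self p (by omega))
        have h6 := Nat.pow_div hk1 hp.pos
        rw [pow_one] at h6
        rw [hgcd, h6]
      rw [hk, hord2] at hord
      have h7 := Nat.le_of_dvd (pow_pos hp.pos _) hord
      have h8 : p ^ (k-1) < p ^ k := Nat.pow_lt_pow_right hp.one_lt (by omega)
      omega
    have hcommM : ∀ u v : G ⧸ M, u * v = v * u := by
      intro u v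
      obtain ⟨a', rfl⟩ := QuotientGroup.mk'_surjective M u
      obtain ⟨b', rfl⟩ := QuotientGroup.mk'_surjective M v
      obtain ⟨m, hm, z, hz, rfl⟩ := hdecomp a'
      obtain ⟨m2, hm2, z2, hz2, rfl⟩ := hdecomp b'
      have hm1 : (QuotientGroup.mk' M) m = 1 := by
        rw [← MonoidHom.mem_ker, QuotientGroup.ker_mk']; exact hm
      have hm21 : (QuotientGroup.mk' M) m2 = 1 := by
        rw [← MonoidHom.mem_ker, QuotientGroup.ker_mk']; exact hm2
      rw [map_mul, map_mul, hm1, hm21, one_mul, one_mul, ← map_mul, ← map_mul,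
        Subgroup.mem_center_iff.mp hz2 z]
    have hNM : N ≤ M := by
      refine sup_le ?_ ?_
      · rw [_root_.commutator_def, Subgroup.commutator_le]
        intro a _ b _
        have h1 : (QuotientGroup.mk' M) ⁅a,b⁆ = 1 := by
          rw [map_commutatorElement]
          exact commutatorElement_eq_one_iff_mul_comm.mpr (hcommM _ _)
        exact (QuotientGroup.eq_one_iff _).mp h1
      · rw [Subgroup.closure_le]
        rintro h ⟨w, rfl⟩
        have h1 : (QuotientGroup.mk' M) (w ^ p) = 1 := by
          rw [map_pow]; exact hexpM _
        exact (QuotientGroup.eq_one_iff _).mp h1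
    exact hZM (hZN ▸ hNM)
  -- Chunk 14b: frattini ≤ center
  have hcyc_of_mem : ∀ u : G ⧸ Subgroup.center G,
      ((QuotientGroup.mk' (Subgroup.center G)) x ∈ Subgroup.zpowers u) →
      ((QuotientGroup.mk' (Subgroup.center G)) y ∈ Subgroup.zpowers u) → False := by
    intro u hxu hyu
    apply hQnc
    refine ⟨⟨u, fun w => ?_⟩⟩
    have h1 : Subgroup.closure {(QuotientGroup.mk' (Subgroup.center G)) x,
        (QuotientGroup.mk' (Subgroup.center G)) y} ≤ Subgroup.zpowers u := by
      rw [Subgroup.closure_le]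
      rintro v (rfl | rfl)
      · exact hxu
      · exact hyu
    rw [hQgen] at h1
    exact h1 (Subgroup.mem_top w)
  have hord_xy : ∀ w : G, w ^ p ∈ Subgroup.center G →
      ((QuotientGroup.mk' (Subgroup.center G)) w) ≠ 1 →
      orderOf ((QuotientGroup.mk' (Subgroup.center G)) w) = p := by
    intro w hwp hw1
    have hd : orderOf ((QuotientGroup.mk' (Subgroup.center G)) w) ∣ p := by
      apply orderOf_dvd_of_pow_eq_one
      rw [← map_pow, ← MonoidHom.mem_ker, QuotientGroup.ker_mk']
      exact hwp
    rcases hp.eq_one_or_self_of_dvd _ hd with h | h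
    · exact absurd (orderOf_eq_one_iff.mp h) hw1
    · exact h
  have hx1 : ((QuotientGroup.mk' (Subgroup.center G)) x) ≠ 1 := by
    intro h
    exact hcyc_of_mem _ (by rw [h]; exact one_mem _) (Subgroup.mem_zpowers _)
  have hy1 : ((QuotientGroup.mk' (Subgroup.center G)) y) ≠ 1 := by
    intro h
    exact hcyc_of_mem _ (Subgroup.mem_zpowers _) (by rw [h]; exact one_mem _)
  have hcardA : Nat.card (Subgroup.zpowers ((QuotientGroup.mk' (Subgroup.center G)) x)) = p := by
    rw [Nat.card_zpowers, hord_xy x hx hx1]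
  have hcardB : Nat.card (Subgroup.zpowers ((QuotientGroup.mk' (Subgroup.center G)) y)) = p := by
    rw [Nat.card_zpowers, hord_xy y hy hy1]
  have hAB : Subgroup.zpowers ((QuotientGroup.mk' (Subgroup.center G)) x) ⊓
      Subgroup.zpowers ((QuotientGroup.mk' (Subgroup.center G)) y) = ⊥ := by
    by_contra hne
    have hdvd := Subgroup.card_dvd_of_le (inf_le_left (a := Subgroup.zpowers
      ((QuotientGroup.mk' (Subgroup.center G)) x)) (b := Subgroup.zpowers
      ((QuotientGroup.mk' (Subgroup.center G)) y)))
    rw [hcardA] at hdvd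
    rcases hp.eq_one_or_self_of_dvd _ hdvd with h | h
    · exact hne (Subgroup.card_eq_one.mp h)
    · have h1 := Subgroup.eq_of_le_of_card_ge (inf_le_left (a := Subgroup.zpowers
        ((QuotientGroup.mk' (Subgroup.center G)) x)) (b := Subgroup.zpowers
        ((QuotientGroup.mk' (Subgroup.center G)) y))) (by rw [hcardA, h])
      have h2 := Subgroup.eq_of_le_of_card_ge (inf_le_right (a := Subgroup.zpowers
        ((QuotientGroup.mk' (Subgroup.center G)) x)) (b := Subgroup.zpowers
        ((QuotientGroup.mk' (Subgroup.center G)) y))) (by rw [hcardB, h])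
      refine hcyc_of_mem ((QuotientGroup.mk' (Subgroup.center G)) y) ?_ (Subgroup.mem_zpowers _)
      rw [← h2, h1]
      exact Subgroup.mem_zpowers _
  have hindexA : (Subgroup.comap (QuotientGroup.mk' (Subgroup.center G))
      (Subgroup.zpowers ((QuotientGroup.mk' (Subgroup.center G)) x))).index = p := by
    rw [Subgroup.index_comap_of_surjective _ (QuotientGroup.mk'_surjective _)]
    have h1 := Subgroup.index_mul_card (Subgroup.zpowers ((QuotientGroup.mk' (Subgroup.center G)) x))
    rw [hcardA, hcardQ, pow_two] at h1
    exact Nat.eq_of_mul_eq_mul_right hp.pos h1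
  have hindexB : (Subgroup.comap (QuotientGroup.mk' (Subgroup.center G))
      (Subgroup.zpowers ((QuotientGroup.mk' (Subgroup.center G)) y))).index = p := by
    rw [Subgroup.index_comap_of_surjective _ (QuotientGroup.mk'_surjective _)]
    have h1 := Subgroup.index_mul_card (Subgroup.zpowers ((QuotientGroup.mk' (Subgroup.center G)) y))
    rw [hcardB, hcardQ, pow_two] at h1
    exact Nat.eq_of_mul_eq_mul_right hp.pos h1
  have hfrat_le : frattini G ≤ Subgroup.center G := by
    have hle := le_inf (frattini_le_coatom (aux_coatom hp hindexA))
      (frattini_le_coatom (aux_coatom hp hindexB))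
    rw [← Subgroup.comap_inf, hAB, MonoidHom.comap_bot, QuotientGroup.ker_mk'] at hle
    exact hle
  exact le_antisymm hfrat_le hZ_le_frat
end

section
/- Let G be the group with presentation ⟨x, y, z | x^{2^n} = 1, y^{2^m} = 1, z^{2^ℓ} = 1, [y,x] = z, [z,x] = z^{-2}, [z,y] = z^{-2}⟩ with n ≥ m ≥ 1 and ℓ ≥ 2. Then the center of G is the subgroup generated by x², y² and z^{2^{ℓ-1}}, and Z(G) ≅ C_{2^{n-1}} × C_{2^{m-1}} × C_2. -/
open FreeGroup in
/-- Relators of G_⚀ = ⟨x,y,z | x^{2^n}=1, y^{2^m}=1, z^{2^ℓ}=1, [y,x]=z, [z,x]=z⁻²,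
[z,y]=z⁻²⟩, with the convention [y,x] = y⁻¹x⁻¹yx. Generators 0 ↦ x, 1 ↦ y, 2 ↦ z. -/
def relsG1 (n m ℓ : ℕ) : Set (FreeGroup (Fin 3)) :=
  { (of 0) ^ (2 ^ n), (of 1) ^ (2 ^ m), (of 2) ^ (2 ^ ℓ),
    (of 1)⁻¹ * (of 0)⁻¹ * of 1 * of 0 * (of 2)⁻¹,
    (of 2)⁻¹ * (of 0)⁻¹ * of 2 * of 0 * (of 2) ^ 2,
    (of 2)⁻¹ * (of 1)⁻¹ * of 2 * of 1 * (of 2) ^ 2 }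

/-- The group G_⚀(n,m,ℓ). -/
abbrev G1 (n m ℓ : ℕ) := PresentedGroup (relsG1 n m ℓ)


namespace Stmt3Aux

/-- sign (-1)^t as element of `ZMod L` -/
def sg (L : ℕ) (t : ℕ) : ZMod L := if Even t then 1 else -1
/-- parity bit of t as element of `ZMod L` -/
def ep (L : ℕ) (t : ℕ) : ZMod L := if Even t then 0 else 1

@[ext]
structure Kt (N M L : ℕ) where
  a : ZMod N
  b : ZMod M
  c : ZMod L

variable {N M L : ℕ}

instance : Mul (Kt N M L) :=
  ⟨fun p q => ⟨p.a + q.a, p.b + q.b,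
    q.c + sg L q.b.val * (sg L q.a.val * p.c + ep L p.b.val * ep L q.a.val)⟩⟩

theorem mul_def (p q : Kt N M L) : p * q = ⟨p.a + q.a, p.b + q.b,
    q.c + sg L q.b.val * (sg L q.a.val * p.c + ep L p.b.val * ep L q.a.val)⟩ := rfl

instance : One (Kt N M L) := ⟨⟨0, 0, 0⟩⟩

theorem one_def : (1 : Kt N M L) = ⟨0, 0, 0⟩ := rfl

instance : Inv (Kt N M L) :=
  ⟨fun p => ⟨-p.a, -p.b, -(sg L p.b.val * (sg L p.a.val * p.c + ep L p.a.val * ep L p.b.val))⟩⟩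

theorem inv_def (p : Kt N M L) : p⁻¹ =
    ⟨-p.a, -p.b, -(sg L p.b.val * (sg L p.a.val * p.c + ep L p.a.val * ep L p.b.val))⟩ := rfl

theorem sg_eq_ep (t : ℕ) : sg L t = 1 - 2 * ep L t := by
  by_cases h : Even t <;> simp [sg, ep, h] <;> ring

theorem even_val_add [NeZero N] (h2 : 2 ∣ N) (x y : ZMod N) :
    Even ((x + y).val) ↔ (Even x.val ↔ Even y.val) := by
  obtain ⟨k, hk⟩ := h2
  rw [ZMod.val_add]
  have h := Nat.div_add_mod (x.val + y.val) N
  obtain ⟨j, hj⟩ : ∃ j, N * ((x.val + y.val) / N) = 2 * j :=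
    ⟨k * ((x.val + y.val) / N), by rw [← mul_assoc, ← hk]⟩
  simp only [Nat.even_iff] at *
  omega

theorem even_val_neg [NeZero N] (h2 : 2 ∣ N) (x : ZMod N) :
    Even ((-x).val) ↔ Even x.val := by
  have h := even_val_add h2 x (-x)
  simp only [add_neg_cancel] at h
  have h0 : ((0 : ZMod N)).val = 0 := ZMod.val_zero
  rw [h0] at h
  simp only [Even.zero, true_iff] at h
  exact ⟨fun hx => (h.mpr hx : _) , fun hx => h.mp hx⟩

theorem ep_add [NeZero N] (h2 : 2 ∣ N) (x y : ZMod N) :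
    ep L ((x + y).val) = ep L x.val + ep L y.val - 2 * (ep L x.val * ep L y.val) := by
  by_cases hx : Even x.val <;> by_cases hy : Even y.val <;>
    simp [ep, even_val_add h2 x y, hx, hy] <;> ring

theorem sg_add [NeZero N] (h2 : 2 ∣ N) (x y : ZMod N) :
    sg L ((x + y).val) = sg L x.val * sg L y.val := by
  by_cases hx : Even x.val <;> by_cases hy : Even y.val <;>
    simp [sg, even_val_add h2 x y, hx, hy]

theorem ep_neg [NeZero N] (h2 : 2 ∣ N) (x : ZMod N) : ep L ((-x).val) = ep L x.val := by
  by_cases hx : Even x.val <;> simp [ep, even_val_neg h2 x, hx]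

theorem sg_neg [NeZero N] (h2 : 2 ∣ N) (x : ZMod N) : sg L ((-x).val) = sg L x.val := by
  by_cases hx : Even x.val <;> simp [sg, even_val_neg h2 x, hx]

theorem ep_zero : ep L 0 = 0 := by simp [ep]
theorem sg_zero : sg L 0 = 1 := by simp [sg]

variable [NeZero N] [NeZero M] [NeZero L] [Fact (2 ∣ N)] [Fact (2 ∣ M)]

instance : Group (Kt N M L) where
  mul_assoc p q r := by
    have hN : 2 ∣ N := Fact.out
    have hM : 2 ∣ M := Fact.out
    ext
    · exact add_assoc _ _ _
    · exact add_assoc _ _ _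
    · show (r.c + sg L r.b.val * (sg L r.a.val * (q.c + sg L q.b.val * (sg L q.a.val * p.c
          + ep L p.b.val * ep L q.a.val)) + ep L ((p.b + q.b)).val * ep L r.a.val))
        = ((r.c + sg L r.b.val * (sg L r.a.val * q.c + ep L q.b.val * ep L r.a.val))
          + sg L ((q.b + r.b)).val * (sg L ((q.a + r.a)).val * p.c
          + ep L p.b.val * ep L ((q.a + r.a)).val))
      rw [sg_add hM, sg_add hN, ep_add hM, ep_add hN, sg_eq_ep (t := q.a.val),
        sg_eq_ep (t := q.b.val), sg_eq_ep (t := r.a.val), sg_eq_ep (t := r.b.val)]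
      ring
  one_mul p := by
    ext <;> simp [mul_def, one_def, ep_zero, sg_zero]
  mul_one p := by
    ext <;> simp [mul_def, one_def, ep_zero, sg_zero]
  inv_mul_cancel p := by
    have hN : 2 ∣ N := Fact.out
    have hM : 2 ∣ M := Fact.out
    ext
    · simp [mul_def, inv_def, one_def]
    · simp [mul_def, inv_def, one_def]
    · show p.c + sg L p.b.val * (sg L p.a.val *
          (-(sg L p.b.val * (sg L p.a.val * p.c + ep L p.a.val * ep L p.b.val)))
          + ep L ((-p.b)).val * ep L p.a.val) = (0 : ZMod L)
      rw [ep_neg hM]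
      by_cases ha : Even p.a.val <;> by_cases hb : Even p.b.val <;>
        simp [sg, ep, ha, hb] <;> ring



namespace Kt

theorem even_mod {N : ℕ} (h2 : 2 ∣ N) (x : ℕ) : Even (x % N) ↔ Even x := by
  obtain ⟨k, hk⟩ := h2
  have h := Nat.div_add_mod x N
  obtain ⟨j, hj⟩ : ∃ j, N * (x / N) = 2 * j := ⟨k * (x / N), by rw [← mul_assoc, ← hk]⟩
  simp only [Nat.even_iff] at *
  omega

variable {N M L : ℕ} [NeZero N] [NeZero M] [NeZero L] [Fact (2 ∣ N)] [Fact (2 ∣ M)]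

/-- images of the generators -/
def xh : Kt N M L := ⟨1, 0, 0⟩
def yh : Kt N M L := ⟨0, 1, 0⟩
def zh : Kt N M L := ⟨0, 0, 1⟩

theorem xh_pow (k : ℕ) : (xh : Kt N M L) ^ k = ⟨(k : ZMod N), 0, 0⟩ := by
  induction k with
  | zero => simp [one_def]
  | succ k ih =>
      rw [pow_succ, ih]
      ext <;> simp [mul_def, xh, ep_zero, sg_zero] <;> push_cast <;> ring

theorem yh_pow (k : ℕ) : (yh : Kt N M L) ^ k = ⟨0, (k : ZMod M), 0⟩ := by
  induction k with
  | zero => simp [one_def]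
  | succ k ih =>
      rw [pow_succ, ih]
      ext <;> simp [mul_def, yh, ep_zero, sg_zero] <;> push_cast <;> ring

theorem zh_pow (k : ℕ) : (zh : Kt N M L) ^ k = ⟨0, 0, (k : ZMod L)⟩ := by
  induction k with
  | zero => simp [one_def]
  | succ k ih =>
      rw [pow_succ, ih]
      ext <;> simp [mul_def, zh, ep_zero, sg_zero] <;> push_cast <;> ring

theorem decomp (g : Kt N M L) : g = ⟨g.a, 0, 0⟩ * ⟨0, g.b, 0⟩ * ⟨0, 0, g.c⟩ := by
  ext <;> simp [mul_def, ep_zero, sg_zero]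

theorem x2_pow (k : ℕ) : (⟨2, 0, 0⟩ : Kt N M L) ^ k = ⟨((2 * k : ℕ) : ZMod N), 0, 0⟩ := by
  induction k with
  | zero => simp [one_def]
  | succ k ih =>
      rw [pow_succ, ih]
      ext <;> simp [mul_def, ep_zero, sg_zero] <;> push_cast <;> ring

theorem y2_pow (k : ℕ) : (⟨0, 2, 0⟩ : Kt N M L) ^ k = ⟨0, ((2 * k : ℕ) : ZMod M), 0⟩ := by
  induction k with
  | zero => simp [one_def]
  | succ k ih =>
      rw [pow_succ, ih]
      ext <;> simp [mul_def, ep_zero, sg_zero] <;> push_cast <;> ring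

end Kt



namespace Kt
variable {N M L : ℕ} [NeZero N] [NeZero M] [NeZero L] [Fact (2 ∣ N)] [Fact (2 ∣ M)]

theorem val_one_lt {N : ℕ} [NeZero N] (h2 : 2 ∣ N) : (1 : ZMod N).val = 1 := by
  have hN : 1 < N := by have := NeZero.ne N; omega
  rw [ZMod.val_one_eq_one_mod, Nat.mod_eq_of_lt hN]

theorem mem_center_iff' (hL4 : 4 ∣ L) (g : Kt N M L) :
    g ∈ Subgroup.center (Kt N M L) ↔ Even g.a.val ∧ Even g.b.val ∧ 2 * g.c = 0 := by
  have hN : 2 ∣ N := Fact.out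
  have hM : 2 ∣ M := Fact.out
  have hL : 2 ∣ L := dvd_trans (by norm_num) hL4
  haveI : NeZero L := ‹_›
  have hvN : (1 : ZMod N).val = 1 := val_one_lt hN
  have hvM : (1 : ZMod M).val = 1 := val_one_lt hM
  have hvL : (1 : ZMod L).val = 1 := val_one_lt hL
  constructor
  · intro hg
    rw [Subgroup.mem_center_iff] at hg
    have hx := congrArg Kt.c (hg xh)
    have hy := congrArg Kt.c (hg yh)
    have hz := congrArg Kt.c (hg zh)
    simp [mul_def, xh, yh, zh, ep_zero, sg_zero, hvN, hvM, hvL, ep, sg] at hx hy hz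
    have h2ne : (2 : ZMod L) ≠ 0 := by
      intro h2
      have : ((2 : ℕ) : ZMod L) = 0 := by push_cast; exact h2
      rw [ZMod.natCast_eq_zero_iff] at this
      have h1 := Nat.le_of_dvd (by norm_num) this
      have hLne := NeZero.ne L
      have h2' := Nat.le_of_dvd (by omega) hL4
      omega
    by_cases hA : Even g.a.val <;> by_cases hB : Even g.b.val <;>
      simp [hA, hB] at hx hy hz
    · exact ⟨hA, hB, by linear_combination hx⟩
    · exact absurd (by linear_combination -hz : (2 : ZMod L) = 0) h2ne
    · exact absurd (by linear_combination -hz : (2 : ZMod L) = 0) h2ne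
    · exfalso
      have hcc : 2 * g.c = 1 := by linear_combination hx
      have hev : Even ((2 * g.c).val) := by
        rw [two_mul]
        exact (even_val_add hL g.c g.c).2 Iff.rfl
      rw [hcc, hvL] at hev
      simp at hev
  · rintro ⟨ha, hb, hc⟩
    rw [Subgroup.mem_center_iff]
    intro h
    ext
    · simp [mul_def]; ring
    · simp [mul_def]; ring
    · simp only [mul_def]
      rw [sg_eq_ep (t := g.a.val), sg_eq_ep (t := g.b.val)]
      simp [ep, ha, hb]
      rw [← mul_assoc]
      have key : sg L h.b.val * sg L h.a.val = 1 ∨ sg L h.b.val * sg L h.a.val = -1 := by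
        unfold sg
        by_cases hA : Even h.a.val <;> by_cases hB : Even h.b.val <;> simp [hA, hB]
      rcases key with hk | hk <;> rw [hk]
      · ring
      · linear_combination hc

end Kt

namespace Kt
variable {N M L : ℕ} [NeZero N] [NeZero M] [NeZero L] [Fact (2 ∣ N)] [Fact (2 ∣ M)]

theorem cast_val_self {N : ℕ} [NeZero N] (a : ZMod N) : ((a.val : ℕ) : ZMod N) = a :=
  ZMod.natCast_rightInverse a

theorem even_cast_val {N : ℕ} [NeZero N] (hN : 2 ∣ N) (t : ℕ) (ht : Even t) :
    Even (((t : ℕ) : ZMod N)).val := by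
  rw [ZMod.val_natCast]
  exact (even_mod hN t).2 ht

theorem c_eq_zero_or (hh : ∃ h' : ℕ, L = 2 * h') (c : ZMod L) (hc : 2 * c = 0) :
    c = 0 ∨ (∃ h' : ℕ, L = 2 * h' ∧ c = ((h' : ℕ) : ZMod L)) := by
  obtain ⟨h', hh⟩ := hh
  have hval : c.val < L := ZMod.val_lt c
  have hLne := NeZero.ne L
  have h'pos : 0 < h' := by omega
  have hcast : ((2 * c.val : ℕ) : ZMod L) = 0 := by
    push_cast [cast_val_self]
    exact hc
  rw [ZMod.natCast_eq_zero_iff] at hcast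
  obtain ⟨t, ht⟩ := hcast
  have ht' : 2 * c.val = 2 * (h' * t) := by rw [← mul_assoc, ← hh]; exact ht
  have ht2 : c.val = h' * t := Nat.eq_of_mul_eq_mul_left (by norm_num) ht' 
  rcases t with _ | t
  · left
    rw [Nat.mul_zero] at ht2
    exact (ZMod.val_eq_zero c).1 ht2
  · rcases Nat.eq_zero_or_pos t with h0 | hpos
    · right
      refine ⟨h', hh, ?_⟩
      subst h0
      rw [Nat.mul_one] at ht2
      rw [← cast_val_self c, ht2]
    · exfalso
      have hle : h' * 2 ≤ h' * (t + 1) := Nat.mul_le_mul_left _ (by omega)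
      omega

theorem center_eq_closure (hL4 : 4 ∣ L) (h' : ℕ) (hh : L = 2 * h') :
    Subgroup.center (Kt N M L) =
      Subgroup.closure {(⟨2, 0, 0⟩ : Kt N M L), ⟨0, 2, 0⟩, ⟨0, 0, ((h' : ℕ) : ZMod L)⟩} := by
  have hN : 2 ∣ N := Fact.out
  have hM : 2 ∣ M := Fact.out
  apply le_antisymm
  · intro g hg
    rw [mem_center_iff' hL4] at hg
    obtain ⟨ha, hb, hc⟩ := hg
    rw [decomp g]
    have m1 : (⟨g.a, 0, 0⟩ : Kt N M L) ∈
        Subgroup.closure {(⟨2, 0, 0⟩ : Kt N M L), ⟨0, 2, 0⟩, ⟨0, 0, ((h' : ℕ) : ZMod L)⟩} := by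
      have : (⟨g.a, 0, 0⟩ : Kt N M L) = (⟨2, 0, 0⟩ : Kt N M L) ^ (g.a.val / 2) := by
        rw [x2_pow]
        have : 2 * (g.a.val / 2) = g.a.val := by
          obtain ⟨r, hr⟩ := ha; omega
        rw [this, cast_val_self]
      rw [this]
      exact pow_mem (Subgroup.subset_closure (by simp)) _
    have m2 : (⟨0, g.b, 0⟩ : Kt N M L) ∈
        Subgroup.closure {(⟨2, 0, 0⟩ : Kt N M L), ⟨0, 2, 0⟩, ⟨0, 0, ((h' : ℕ) : ZMod L)⟩} := by
      have : (⟨0, g.b, 0⟩ : Kt N M L) = (⟨0, 2, 0⟩ : Kt N M L) ^ (g.b.val / 2) := by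
        rw [y2_pow]
        have : 2 * (g.b.val / 2) = g.b.val := by
          obtain ⟨r, hr⟩ := hb; omega
        rw [this, cast_val_self]
      rw [this]
      exact pow_mem (Subgroup.subset_closure (by simp)) _
    have m3 : (⟨0, 0, g.c⟩ : Kt N M L) ∈
        Subgroup.closure {(⟨2, 0, 0⟩ : Kt N M L), ⟨0, 2, 0⟩, ⟨0, 0, ((h' : ℕ) : ZMod L)⟩} := by
      rcases c_eq_zero_or ⟨h', hh⟩ g.c hc with h0 | ⟨h'', hh'', hch⟩
      · rw [h0]
        exact one_mem _
      · have : h'' = h' := by omega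
        subst this
        rw [hch]
        exact Subgroup.subset_closure (by simp)
    exact mul_mem (mul_mem m1 m2) m3
  · rw [Subgroup.closure_le]
    rintro p hp
    simp only [Set.mem_insert_iff, Set.mem_singleton_iff] at hp
    have hLne := NeZero.ne L
    rcases hp with rfl | rfl | rfl <;>
      rw [SetLike.mem_coe, mem_center_iff' hL4]
    · refine ⟨?_, ?_, ?_⟩
      · show Even ((2 : ZMod N)).val
        have : ((2 : ℕ) : ZMod N) = (2 : ZMod N) := by push_cast; ring
        rw [← this]
        exact even_cast_val hN 2 (by norm_num)
      · simp [ZMod.val_zero]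
      · show (2 : ZMod L) * 0 = 0
        ring
    · refine ⟨?_, ?_, ?_⟩
      · simp [ZMod.val_zero]
      · show Even ((2 : ZMod M)).val
        have : ((2 : ℕ) : ZMod M) = (2 : ZMod M) := by push_cast; ring
        rw [← this]
        exact even_cast_val hM 2 (by norm_num)
      · show (2 : ZMod L) * 0 = 0
        ring
    · refine ⟨by simp [ZMod.val_zero], by simp [ZMod.val_zero], ?_⟩
      show 2 * ((h' : ℕ) : ZMod L) = 0
      have h2h : ((2 * h' : ℕ) : ZMod L) = 0 := by
        rw [← hh]; exact ZMod.natCast_self L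
      push_cast at h2h
      exact h2h

end Kt

namespace Kt
variable {N M L : ℕ} [NeZero N] [NeZero M] [NeZero L] [Fact (2 ∣ N)] [Fact (2 ∣ M)]

theorem sg_of_even {t : ℕ} (h : Even t) : sg L t = 1 := by simp [sg, h]
theorem ep_of_even {t : ℕ} (h : Even t) : ep L t = 0 := by simp [ep, h]

theorem small_of_lt {K v : ℕ} (hK : 0 < K) (hd : 2 * K ∣ 2 * v) (hv : v < K) : v = 0 := by
  obtain ⟨t, ht⟩ := hd
  have ht' : v = K * t :=
    Nat.eq_of_mul_eq_mul_left (show 0 < 2 by norm_num) (show 2 * v = 2 * (K * t) by rw [ht]; ring)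
  rcases t with _ | t
  · omega
  · have h1 : K ≤ K * (t + 1) := by
      calc K = K * 1 := (Nat.mul_one K).symm
        _ ≤ K * (t + 1) := Nat.mul_le_mul_left K (by omega)
    rw [← ht'] at h1
    omega

theorem cast_mod_helper {N' : ℕ} (hN' : 0 < N') (s : ℕ) :
    ((2 * (s % N') : ℕ) : ZMod (2 * N')) = ((2 * s : ℕ) : ZMod (2 * N')) := by
  rw [ZMod.natCast_eq_natCast_iff]
  show 2 * (s % N') % (2 * N') = 2 * s % (2 * N')
  rw [Nat.mul_mod_mul_left, Nat.mul_mod_mul_left, Nat.mod_mod_of_dvd _ dvd_rfl]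

theorem center_iso (hL4 : 4 ∣ L) (N' M' L' : ℕ) (hN : N = 2 * N') (hM : M = 2 * M')
    (hL : L = 2 * L') :
    Nonempty ((Subgroup.center (Kt N M L)) ≃*
      (Multiplicative (ZMod N') × Multiplicative (ZMod M') × Multiplicative (ZMod 2))) := by
  have hNne := NeZero.ne N
  have hMne := NeZero.ne M
  have hLne := NeZero.ne L
  have h2N : 2 ∣ N := Fact.out
  have h2M : 2 ∣ M := Fact.out
  haveI : NeZero N' := ⟨by omega⟩
  haveI : NeZero M' := ⟨by omega⟩
  have hL'pos : 0 < L' := by omega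
  set P := Multiplicative (ZMod N') × Multiplicative (ZMod M') × Multiplicative (ZMod 2) with hP
  set toFun : P → Kt N M L := fun p =>
    ⟨((2 * (Multiplicative.toAdd p.1).val : ℕ) : ZMod N),
     ((2 * (Multiplicative.toAdd p.2.1).val : ℕ) : ZMod M),
     ((L' * (Multiplicative.toAdd p.2.2).val : ℕ) : ZMod L)⟩ with htoFun
  have hmul : ∀ p q : P, toFun (p * q) = toFun p * toFun q := by
    intro p q
    ext
    · show ((2 * ((Multiplicative.toAdd p.1) + (Multiplicative.toAdd q.1)).val : ℕ) : ZMod N) = _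
      rw [mul_def]
      show _ = ((2 * (Multiplicative.toAdd p.1).val : ℕ) : ZMod N) +
        ((2 * (Multiplicative.toAdd q.1).val : ℕ) : ZMod N)
      rw [← Nat.cast_add, ← Nat.mul_add, ZMod.val_add]
      subst hN
      exact cast_mod_helper (by omega) _
    · show ((2 * ((Multiplicative.toAdd p.2.1) + (Multiplicative.toAdd q.2.1)).val : ℕ) : ZMod M)
        = _
      rw [mul_def]
      show _ = ((2 * (Multiplicative.toAdd p.2.1).val : ℕ) : ZMod M) +
        ((2 * (Multiplicative.toAdd q.2.1).val : ℕ) : ZMod M)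
      rw [← Nat.cast_add, ← Nat.mul_add, ZMod.val_add]
      subst hM
      exact cast_mod_helper (by omega) _
    · show ((L' * ((Multiplicative.toAdd p.2.2) + (Multiplicative.toAdd q.2.2)).val : ℕ) : ZMod L)
        = _
      rw [mul_def]
      show _ = ((L' * (Multiplicative.toAdd q.2.2).val : ℕ) : ZMod L) +
        sg L (((2 * (Multiplicative.toAdd q.2.1).val : ℕ) : ZMod M)).val *
          (sg L (((2 * (Multiplicative.toAdd q.1).val : ℕ) : ZMod N)).val *
            ((L' * (Multiplicative.toAdd p.2.2).val : ℕ) : ZMod L) +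
           ep L (((2 * (Multiplicative.toAdd p.2.1).val : ℕ) : ZMod M)).val *
            ep L (((2 * (Multiplicative.toAdd q.1).val : ℕ) : ZMod N)).val)
      rw [sg_of_even (even_cast_val h2M _ (by norm_num)),
        sg_of_even (even_cast_val h2N _ (by norm_num)),
        ep_of_even (even_cast_val h2M _ (by norm_num)), one_mul, one_mul, zero_mul, add_zero]
      rw [← Nat.cast_add, ← Nat.mul_add, ZMod.val_add, add_comm ((Multiplicative.toAdd q.2.2).val)]
      subst hL
      have := cast_mod_helper (N' := L') (by omega)
        ((Multiplicative.toAdd p.2.2).val + (Multiplicative.toAdd q.2.2).val)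
      calc ((L' * (((Multiplicative.toAdd p.2.2).val + (Multiplicative.toAdd q.2.2).val) % 2) : ℕ)
            : ZMod (2 * L'))
          = ((L' * ((Multiplicative.toAdd p.2.2).val + (Multiplicative.toAdd q.2.2).val) : ℕ)
            : ZMod (2 * L')) := by
            rw [ZMod.natCast_eq_natCast_iff]
            show L' * (_ % 2) % (2 * L') = L' * _ % (2 * L')
            rw [mul_comm 2 L', Nat.mul_mod_mul_left, Nat.mul_mod_mul_left,
              Nat.mod_mod_of_dvd _ dvd_rfl]
        _ = _ := by rw [Nat.mul_add, Nat.cast_add]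
  let φ : P →* Kt N M L := MonoidHom.mk' toFun hmul
  have hmem : ∀ p : P, φ p ∈ Subgroup.center (Kt N M L) := by
    intro p
    rw [mem_center_iff' hL4]
    refine ⟨even_cast_val h2N _ (by norm_num), even_cast_val h2M _ (by norm_num), ?_⟩
    show 2 * ((L' * (Multiplicative.toAdd p.2.2).val : ℕ) : ZMod L) = 0
    rw [show (2 : ZMod L) * ((L' * (Multiplicative.toAdd p.2.2).val : ℕ) : ZMod L)
      = ((2 * (L' * (Multiplicative.toAdd p.2.2).val) : ℕ) : ZMod L) from by push_cast; ring]
    rw [ZMod.natCast_eq_zero_iff]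
    exact ⟨(Multiplicative.toAdd p.2.2).val, by rw [hL]; ring⟩
  let φc : P →* Subgroup.center (Kt N M L) := φ.codRestrict _ hmem
  have hinj : Function.Injective φc := by
    refine (injective_iff_map_eq_one φc).2 ?_
    intro p hp
    have h1 : φ p = 1 := congrArg Subtype.val hp
    have ha := congrArg Kt.a h1
    have hb := congrArg Kt.b h1
    have hc := congrArg Kt.c h1
    simp only [φ, MonoidHom.mk'_apply, htoFun, one_def] at ha hb hc
    have hva : (Multiplicative.toAdd p.1).val = 0 := by
      rw [ZMod.natCast_eq_zero_iff, hN] at ha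
      exact small_of_lt (by omega) (by exact_mod_cast ha) (ZMod.val_lt _)
    have hvb : (Multiplicative.toAdd p.2.1).val = 0 := by
      rw [ZMod.natCast_eq_zero_iff, hM] at hb
      exact small_of_lt (by omega) (by exact_mod_cast hb) (ZMod.val_lt _)
    have hvc : (Multiplicative.toAdd p.2.2).val = 0 := by
      rw [ZMod.natCast_eq_zero_iff, hL] at hc
      obtain ⟨t, ht⟩ := hc
      have hw : (Multiplicative.toAdd p.2.2).val = 2 * t :=
        Nat.eq_of_mul_eq_mul_left hL'pos (by rw [ht]; ring)
      have hlt : (Multiplicative.toAdd p.2.2).val < 2 := ZMod.val_lt _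
      omega
    have e1 : p.1 = 1 := by
      have := (ZMod.val_eq_zero _).1 hva
      rw [show p.1 = Multiplicative.ofAdd (Multiplicative.toAdd p.1) from rfl, this]
      rfl
    have e2 : p.2.1 = 1 := by
      have := (ZMod.val_eq_zero _).1 hvb
      rw [show p.2.1 = Multiplicative.ofAdd (Multiplicative.toAdd p.2.1) from rfl, this]
      rfl
    have e3 : p.2.2 = 1 := by
      have := (ZMod.val_eq_zero _).1 hvc
      rw [show p.2.2 = Multiplicative.ofAdd (Multiplicative.toAdd p.2.2) from rfl, this]
      rfl
    exact Prod.ext e1 (Prod.ext e2 e3)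
  have hsurj : Function.Surjective φc := by
    rintro ⟨g, hg⟩
    rw [mem_center_iff' hL4] at hg
    obtain ⟨hga, hgb, hgc⟩ := hg
    have hlta : g.a.val < N := ZMod.val_lt g.a
    have hltb : g.b.val < M := ZMod.val_lt g.b
    have hua : (((g.a.val / 2 : ℕ) : ZMod N')).val = g.a.val / 2 := by
      rw [ZMod.val_natCast]
      exact Nat.mod_eq_of_lt (by omega)
    have hub : (((g.b.val / 2 : ℕ) : ZMod M')).val = g.b.val / 2 := by
      rw [ZMod.val_natCast]
      exact Nat.mod_eq_of_lt (by omega)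
    rcases c_eq_zero_or ⟨L', hL⟩ g.c hgc with h0 | ⟨h'', hh'', hch⟩
    · refine ⟨(Multiplicative.ofAdd ((g.a.val / 2 : ℕ) : ZMod N'),
        Multiplicative.ofAdd ((g.b.val / 2 : ℕ) : ZMod M'),
        Multiplicative.ofAdd (0 : ZMod 2)), ?_⟩
      apply Subtype.ext
      show toFun _ = g
      rw [htoFun]
      ext
      · show ((2 * (((g.a.val / 2 : ℕ) : ZMod N')).val : ℕ) : ZMod N) = g.a
        rw [hua, show 2 * (g.a.val / 2) = g.a.val from by obtain ⟨r, hr⟩ := hga; omega,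
          cast_val_self]
      · show ((2 * (((g.b.val / 2 : ℕ) : ZMod M')).val : ℕ) : ZMod M) = g.b
        rw [hub, show 2 * (g.b.val / 2) = g.b.val from by obtain ⟨r, hr⟩ := hgb; omega,
          cast_val_self]
      · show ((L' * ((Multiplicative.toAdd (Multiplicative.ofAdd (0 : ZMod 2))).val) : ℕ)
          : ZMod L) = g.c
        rw [h0]
        simp
    · rw [show h'' = L' from by omega] at hch
      refine ⟨(Multiplicative.ofAdd ((g.a.val / 2 : ℕ) : ZMod N'),
        Multiplicative.ofAdd ((g.b.val / 2 : ℕ) : ZMod M'),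
        Multiplicative.ofAdd (1 : ZMod 2)), ?_⟩
      apply Subtype.ext
      show toFun _ = g
      rw [htoFun]
      ext
      · show ((2 * (((g.a.val / 2 : ℕ) : ZMod N')).val : ℕ) : ZMod N) = g.a
        rw [hua, show 2 * (g.a.val / 2) = g.a.val from by obtain ⟨r, hr⟩ := hga; omega,
          cast_val_self]
      · show ((2 * (((g.b.val / 2 : ℕ) : ZMod M')).val : ℕ) : ZMod M) = g.b
        rw [hub, show 2 * (g.b.val / 2) = g.b.val from by obtain ⟨r, hr⟩ := hgb; omega,
          cast_val_self]
      · show ((L' * ((Multiplicative.toAdd (Multiplicative.ofAdd (1 : ZMod 2))).val) : ℕ)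
          : ZMod L) = g.c
        have : ((1 : ZMod 2)).val = 1 := rfl
        rw [show Multiplicative.toAdd (Multiplicative.ofAdd (1 : ZMod 2)) = (1 : ZMod 2) from rfl,
          this, Nat.mul_one, hch]
  exact ⟨(MulEquiv.ofBijective φc ⟨hinj, hsurj⟩).symm⟩

end Kt

/-! ### integer-valued sign and parity -/

def sgZ (t : ℕ) : ℤ := if Even t then 1 else -1
def epZ (t : ℕ) : ℤ := if Even t then 0 else 1

theorem sgZ_succ (t : ℕ) : sgZ (t + 1) = -sgZ t := by
  by_cases h : Even t <;> simp [sgZ, Nat.even_add_one, h]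

theorem epZ_succ (t : ℕ) : epZ (t + 1) = sgZ t + epZ t := by
  by_cases h : Even t <;> simp [epZ, sgZ, Nat.even_add_one, h] <;> ring

theorem epZ_mul_succ (j i : ℕ) : epZ j * epZ (i + 1) = epZ j - epZ j * epZ i := by
  by_cases h : Even i <;> simp [epZ, Nat.even_add_one, h] <;> ring

theorem sgZ_cast {L : ℕ} (t : ℕ) : ((sgZ t : ℤ) : ZMod L) = sg L t := by
  by_cases h : Even t <;> simp [sgZ, sg, h]

theorem epZ_cast {L : ℕ} (t : ℕ) : ((epZ t : ℤ) : ZMod L) = ep L t := by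
  by_cases h : Even t <;> simp [epZ, ep, h]

/-! ### relations in the presented group -/

section G1side

variable (n m ℓ : ℕ)

local notation "X" => (PresentedGroup.of (rels := relsG1 n m ℓ) 0)
local notation "Y" => (PresentedGroup.of (rels := relsG1 n m ℓ) 1)
local notation "Z" => (PresentedGroup.of (rels := relsG1 n m ℓ) 2)

theorem rel_one {r : FreeGroup (Fin 3)} (hr : r ∈ relsG1 n m ℓ) :
    PresentedGroup.mk (relsG1 n m ℓ) r = 1 :=
  (QuotientGroup.eq_one_iff _).2 (Subgroup.subset_normalClosure hr)

theorem hX : X ^ (2 ^ n) = 1 := by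
  have := rel_one n m ℓ (show (FreeGroup.of 0) ^ (2 ^ n) ∈ relsG1 n m ℓ by
    simp [relsG1])
  simpa [map_pow, PresentedGroup.of] using this

theorem hYrel : Y ^ (2 ^ m) = 1 := by
  have := rel_one n m ℓ (show (FreeGroup.of 1) ^ (2 ^ m) ∈ relsG1 n m ℓ by
    simp [relsG1])
  simpa [map_pow, PresentedGroup.of] using this

theorem hZrel : Z ^ (2 ^ ℓ) = 1 := by
  have := rel_one n m ℓ (show (FreeGroup.of 2) ^ (2 ^ ℓ) ∈ relsG1 n m ℓ by
    simp [relsG1])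
  simpa [map_pow, PresentedGroup.of] using this

theorem h4 : Y⁻¹ * X⁻¹ * Y * X * Z⁻¹ = 1 := by
  have := rel_one n m ℓ (show (FreeGroup.of 1)⁻¹ * (FreeGroup.of 0)⁻¹ * FreeGroup.of 1 *
      FreeGroup.of 0 * (FreeGroup.of 2)⁻¹ ∈ relsG1 n m ℓ by simp [relsG1])
  simpa [map_mul, map_inv, PresentedGroup.of] using this

theorem h5 : Z⁻¹ * X⁻¹ * Z * X * Z ^ 2 = 1 := by
  have := rel_one n m ℓ (show (FreeGroup.of 2)⁻¹ * (FreeGroup.of 0)⁻¹ * FreeGroup.of 2 *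
      FreeGroup.of 0 * (FreeGroup.of 2) ^ 2 ∈ relsG1 n m ℓ by simp [relsG1])
  simpa [map_mul, map_inv, map_pow, PresentedGroup.of] using this

theorem h6 : Z⁻¹ * Y⁻¹ * Z * Y * Z ^ 2 = 1 := by
  have := rel_one n m ℓ (show (FreeGroup.of 2)⁻¹ * (FreeGroup.of 1)⁻¹ * FreeGroup.of 2 *
      FreeGroup.of 1 * (FreeGroup.of 2) ^ 2 ∈ relsG1 n m ℓ by simp [relsG1])
  simpa [map_mul, map_inv, map_pow, PresentedGroup.of] using this

theorem hyx : Y * X = X * Y * Z := by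
  calc Y * X = X * Y * (Y⁻¹ * X⁻¹ * Y * X * Z⁻¹ * Z) := by group
    _ = X * Y * Z := by rw [h4]; group

theorem hzxconj : X⁻¹ * Z * X = Z⁻¹ := by
  calc X⁻¹ * Z * X = Z * (Z⁻¹ * X⁻¹ * Z * X * Z ^ 2) * Z⁻¹ * Z⁻¹ := by group
    _ = Z⁻¹ := by rw [h5]; group

theorem hzyconj : Y⁻¹ * Z * Y = Z⁻¹ := by
  calc Y⁻¹ * Z * Y = Z * (Z⁻¹ * Y⁻¹ * Z * Y * Z ^ 2) * Z⁻¹ * Z⁻¹ := by group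
    _ = Z⁻¹ := by rw [h6]; group

theorem zxk (k : ℤ) : Z ^ k * X = X * Z ^ (-k) := by
  have h := conj_zpow (i := k) (a := X⁻¹) (b := Z)
  rw [inv_inv] at h
  have h2 : X⁻¹ * Z ^ k * X = Z ^ (-k) := by
    rw [← h, hzxconj, inv_zpow']
  calc Z ^ k * X = X * (X⁻¹ * Z ^ k * X) := by group
    _ = X * Z ^ (-k) := by rw [h2]

theorem zyk (k : ℤ) : Z ^ k * Y = Y * Z ^ (-k) := by
  have h := conj_zpow (i := k) (a := Y⁻¹) (b := Z)
  rw [inv_inv] at h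
  have h2 : Y⁻¹ * Z ^ k * Y = Z ^ (-k) := by
    rw [← h, hzyconj, inv_zpow']
  calc Z ^ k * Y = Y * (Y⁻¹ * Z ^ k * Y) := by group
    _ = Y * Z ^ (-k) := by rw [h2]

theorem zxp (i : ℕ) (k : ℤ) : Z ^ k * X ^ i = X ^ i * Z ^ (sgZ i * k) := by
  induction i with
  | zero => simp [sgZ]
  | succ i ih =>
      calc Z ^ k * X ^ (i + 1) = Z ^ k * X ^ i * X := by rw [pow_succ]; group
        _ = X ^ i * Z ^ (sgZ i * k) * X := by rw [ih]
        _ = X ^ i * (Z ^ (sgZ i * k) * X) := by group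
        _ = X ^ i * (X * Z ^ (-(sgZ i * k))) := by rw [zxk]
        _ = X ^ (i + 1) * Z ^ (sgZ (i + 1) * k) := by
            rw [sgZ_succ, pow_succ]
            group

theorem zyp (j : ℕ) (k : ℤ) : Z ^ k * Y ^ j = Y ^ j * Z ^ (sgZ j * k) := by
  induction j with
  | zero => simp [sgZ]
  | succ j ih =>
      calc Z ^ k * Y ^ (j + 1) = Z ^ k * Y ^ j * Y := by rw [pow_succ]; group
        _ = Y ^ j * Z ^ (sgZ j * k) * Y := by rw [ih]
        _ = Y ^ j * (Z ^ (sgZ j * k) * Y) := by group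
        _ = Y ^ j * (Y * Z ^ (-(sgZ j * k))) := by rw [zyk]
        _ = Y ^ (j + 1) * Z ^ (sgZ (j + 1) * k) := by
            rw [sgZ_succ, pow_succ]
            group

theorem yxp (j : ℕ) : Y ^ j * X = X * Y ^ j * Z ^ (epZ j) := by
  induction j with
  | zero => simp [epZ]
  | succ j ih =>
      have hz1 : Z * Y ^ j = Y ^ j * Z ^ (sgZ j) := by
        have := zyp n m ℓ j 1
        rw [zpow_one, mul_one] at this
        exact this
      calc Y ^ (j + 1) * X = Y * (Y ^ j * X) := by rw [pow_succ']; group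
        _ = Y * (X * Y ^ j * Z ^ (epZ j)) := by rw [ih]
        _ = (Y * X) * Y ^ j * Z ^ (epZ j) := by group
        _ = (X * Y * Z) * Y ^ j * Z ^ (epZ j) := by rw [hyx]
        _ = X * Y * (Z * Y ^ j) * Z ^ (epZ j) := by group
        _ = X * Y * (Y ^ j * Z ^ (sgZ j)) * Z ^ (epZ j) := by rw [hz1]
        _ = X * Y ^ (j + 1) * Z ^ (epZ (j + 1)) := by
            rw [epZ_succ, pow_succ']
            group

theorem yxpp (j i : ℕ) : Y ^ j * X ^ i = X ^ i * Y ^ j * Z ^ (epZ j * epZ i) := by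
  induction i with
  | zero => simp [epZ]
  | succ i ih =>
      calc Y ^ j * X ^ (i + 1) = Y ^ j * X ^ i * X := by rw [pow_succ]; group
        _ = X ^ i * Y ^ j * Z ^ (epZ j * epZ i) * X := by rw [ih]
        _ = X ^ i * Y ^ j * (Z ^ (epZ j * epZ i) * X) := by group
        _ = X ^ i * Y ^ j * (X * Z ^ (-(epZ j * epZ i))) := by rw [zxk]
        _ = X ^ i * (Y ^ j * X) * Z ^ (-(epZ j * epZ i)) := by group
        _ = X ^ i * (X * Y ^ j * Z ^ (epZ j)) * Z ^ (-(epZ j * epZ i)) := by rw [yxp]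
        _ = X ^ (i + 1) * Y ^ j * (Z ^ (epZ j) * Z ^ (-(epZ j * epZ i))) := by
            rw [pow_succ]; group
        _ = X ^ (i + 1) * Y ^ j * Z ^ (epZ j * epZ (i + 1)) := by
            rw [← zpow_add, epZ_mul_succ]
            ring_nf

theorem prodForm (a b : ℕ) (c : ℤ) (a' b' : ℕ) (c' : ℤ) :
    (X ^ a * Y ^ b * Z ^ c) * (X ^ a' * Y ^ b' * Z ^ c') =
      X ^ (a + a') * Y ^ (b + b') * Z ^ (c' + sgZ b' * (sgZ a' * c + epZ b * epZ a')) := by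
  calc (X ^ a * Y ^ b * Z ^ c) * (X ^ a' * Y ^ b' * Z ^ c')
      = X ^ a * (Y ^ b * (Z ^ c * X ^ a')) * (Y ^ b' * Z ^ c') := by group
    _ = X ^ a * (Y ^ b * (X ^ a' * Z ^ (sgZ a' * c))) * (Y ^ b' * Z ^ c') := by rw [zxp]
    _ = X ^ a * (Y ^ b * X ^ a') * Z ^ (sgZ a' * c) * Y ^ b' * Z ^ c' := by group
    _ = X ^ a * (X ^ a' * Y ^ b * Z ^ (epZ b * epZ a')) * Z ^ (sgZ a' * c) * Y ^ b' * Z ^ c' := by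
        rw [yxpp]
    _ = X ^ (a + a') * Y ^ b * (Z ^ (epZ b * epZ a' + sgZ a' * c) * Y ^ b') * Z ^ c' := by
        rw [pow_add]
        rw [zpow_add]
        group
    _ = X ^ (a + a') * Y ^ b * (Y ^ b' * Z ^ (sgZ b' * (epZ b * epZ a' + sgZ a' * c))) * Z ^ c' := by
        rw [zyp]
    _ = X ^ (a + a') * Y ^ (b + b') * (Z ^ (sgZ b' * (epZ b * epZ a' + sgZ a' * c)) * Z ^ c') := by
        rw [pow_add]
        group
    _ = X ^ (a + a') * Y ^ (b + b') * Z ^ (c' + sgZ b' * (sgZ a' * c + epZ b * epZ a')) := by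
        rw [← zpow_add]
        ring_nf

end G1side

namespace Kt

instance instNZ (k : ℕ) : NeZero (2 * 2 ^ k) := ⟨by positivity⟩
instance instF2 (k : ℕ) : Fact (2 ∣ 2 * 2 ^ k) := ⟨⟨2 ^ k, rfl⟩⟩

variable {N M L : ℕ} [NeZero N] [NeZero M] [NeZero L] [Fact (2 ∣ N)] [Fact (2 ∣ M)]

theorem sg_one_val : sg L ((1 : ZMod N)).val = -1 := by
  rw [val_one_lt (N := N) Fact.out]; simp [sg]

theorem ep_one_val : ep L ((1 : ZMod N)).val = 1 := by
  rw [val_one_lt (N := N) Fact.out]; simp [ep]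

theorem sg_negone_val : sg L ((-1 : ZMod N)).val = -1 := by
  rw [sg_neg Fact.out]; exact sg_one_val

theorem ep_negone_val : ep L ((-1 : ZMod N)).val = 1 := by
  rw [ep_neg Fact.out]; exact ep_one_val

theorem xh_inv : (xh : Kt N M L)⁻¹ = ⟨-1, 0, 0⟩ := by
  ext <;> simp [inv_def, xh, ZMod.val_zero, ep, sg]

theorem yh_inv : (yh : Kt N M L)⁻¹ = ⟨0, -1, 0⟩ := by
  ext <;> simp [inv_def, yh, ZMod.val_zero, ep, sg]

theorem zh_inv : (zh : Kt N M L)⁻¹ = ⟨0, 0, -1⟩ := by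
  ext <;> simp [inv_def, zh, ZMod.val_zero, ep, sg]

theorem rel4' : (yh⁻¹ * xh⁻¹ * yh * xh * zh⁻¹ : Kt N M L) = 1 := by
  rw [xh_inv, yh_inv, zh_inv]
  ext <;>
    simp [mul_def, one_def, xh, yh, zh, ZMod.val_zero, ep_zero, sg_zero,
      sg_one_val, ep_one_val, sg_negone_val, ep_negone_val] <;> ring

theorem rel5' : (zh⁻¹ * xh⁻¹ * zh * xh * zh ^ 2 : Kt N M L) = 1 := by
  rw [xh_inv, zh_inv, show (zh ^ 2 : Kt N M L) = ⟨0, 0, ((2 : ℕ) : ZMod L)⟩ from zh_pow 2]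
  ext <;>
    simp [mul_def, one_def, xh, yh, zh, ZMod.val_zero, ep_zero, sg_zero,
      sg_one_val, ep_one_val, sg_negone_val, ep_negone_val] <;> push_cast <;> ring

theorem rel6' : (zh⁻¹ * yh⁻¹ * zh * yh * zh ^ 2 : Kt N M L) = 1 := by
  rw [yh_inv, zh_inv, show (zh ^ 2 : Kt N M L) = ⟨0, 0, ((2 : ℕ) : ZMod L)⟩ from zh_pow 2]
  ext <;>
    simp [mul_def, one_def, xh, yh, zh, ZMod.val_zero, ep_zero, sg_zero,
      sg_one_val, ep_one_val, sg_negone_val, ep_negone_val] <;> push_cast <;> ring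

theorem gen_decomp (k : Kt N M L) : xh ^ k.a.val * yh ^ k.b.val * zh ^ k.c.val = k := by
  rw [xh_pow, yh_pow, zh_pow, cast_val_self, cast_val_self, cast_val_self]
  exact (decomp k).symm

end Kt

section IsoSection

variable (n m ℓ : ℕ)

local notation "X" => (PresentedGroup.of (rels := relsG1 n m ℓ) 0)
local notation "Y" => (PresentedGroup.of (rels := relsG1 n m ℓ) 1)
local notation "Z" => (PresentedGroup.of (rels := relsG1 n m ℓ) 2)

theorem powX_congr {u v : ℕ} (h : u % 2 ^ n = v % 2 ^ n) : X ^ u = X ^ v := by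
  have key : ∀ w : ℕ, X ^ w = X ^ (w % 2 ^ n) := by
    intro w
    conv_lhs => rw [← Nat.div_add_mod w (2 ^ n)]
    rw [pow_add, pow_mul, hX, one_pow, one_mul]
  rw [key u, key v, h]

theorem powY_congr {u v : ℕ} (h : u % 2 ^ m = v % 2 ^ m) : Y ^ u = Y ^ v := by
  have key : ∀ w : ℕ, Y ^ w = Y ^ (w % 2 ^ m) := by
    intro w
    conv_lhs => rw [← Nat.div_add_mod w (2 ^ m)]
    rw [pow_add, pow_mul, hYrel, one_pow, one_mul]
  rw [key u, key v, h]

theorem zpowZ_congr {u v : ℤ} (h : (u : ZMod (2 ^ ℓ)) = v) : Z ^ u = Z ^ v := by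
  rw [ZMod.intCast_eq_intCast_iff] at h
  obtain ⟨t, ht⟩ := h.dvd
  have hone : Z ^ ((2 ^ ℓ : ℕ) : ℤ) = 1 := by rw [zpow_natCast, hZrel]
  have hv : v = u + ((2 ^ ℓ : ℕ) : ℤ) * t := by push_cast at ht ⊢; linarith
  rw [hv, zpow_add, zpow_mul, hone, one_zpow, mul_one]

theorem exists_iso (hm : 1 ≤ m) (hnm : m ≤ n) (hℓ : 2 ≤ ℓ) :
    ∃ e : G1 n m ℓ ≃* Kt (2 * 2 ^ (n - 1)) (2 * 2 ^ (m - 1)) (2 * 2 ^ (ℓ - 1)),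
      e (PresentedGroup.of 0) = Kt.xh ∧ e (PresentedGroup.of 1) = Kt.yh ∧
        e (PresentedGroup.of 2) = Kt.zh := by
  have hn2 : 2 ^ n = 2 * 2 ^ (n - 1) := by
    rw [← pow_succ']
    congr 1
    omega
  have hm2 : 2 ^ m = 2 * 2 ^ (m - 1) := by
    rw [← pow_succ']
    congr 1
    omega
  have hl2 : 2 ^ ℓ = 2 * 2 ^ (ℓ - 1) := by
    rw [← pow_succ']
    congr 1
    omega
  set N := 2 * 2 ^ (n - 1) with hN
  set M := 2 * 2 ^ (m - 1) with hM
  set L := 2 * 2 ^ (ℓ - 1) with hL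
  set φf : Fin 3 → Kt N M L := ![Kt.xh, Kt.yh, Kt.zh] with hφf
  have hφ0 : φf 0 = Kt.xh := rfl
  have hφ1 : φf 1 = Kt.yh := rfl
  have hφ2 : φf 2 = Kt.zh := rfl
  have hrels : ∀ r ∈ relsG1 n m ℓ, FreeGroup.lift φf r = 1 := by
    intro r hr
    simp only [relsG1, Set.mem_insert_iff, Set.mem_singleton_iff] at hr
    rcases hr with rfl | rfl | rfl | rfl | rfl | rfl
    · rw [map_pow, FreeGroup.lift_apply_of, hφ0, Kt.xh_pow]
      have : ((2 ^ n : ℕ) : ZMod N) = 0 := by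
        rw [ZMod.natCast_eq_zero_iff]
        exact ⟨1, by omega⟩
      rw [this, one_def]
    · rw [map_pow, FreeGroup.lift_apply_of, hφ1, Kt.yh_pow]
      have : ((2 ^ m : ℕ) : ZMod M) = 0 := by
        rw [ZMod.natCast_eq_zero_iff]
        exact ⟨1, by omega⟩
      rw [this, one_def]
    · rw [map_pow, FreeGroup.lift_apply_of, hφ2, Kt.zh_pow]
      have : ((2 ^ ℓ : ℕ) : ZMod L) = 0 := by
        rw [ZMod.natCast_eq_zero_iff]
        exact ⟨1, by omega⟩
      rw [this, one_def]
    · simp only [map_mul, map_inv, FreeGroup.lift_apply_of, hφ0, hφ1, hφ2]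
      exact Kt.rel4'
    · simp only [map_mul, map_inv, map_pow, FreeGroup.lift_apply_of, hφ0, hφ2]
      exact Kt.rel5'
    · simp only [map_mul, map_inv, map_pow, FreeGroup.lift_apply_of, hφ1, hφ2]
      exact Kt.rel6'
  set f : G1 n m ℓ →* Kt N M L := PresentedGroup.toGroup hrels with hf
  have hf0 : f (PresentedGroup.of 0) = Kt.xh := PresentedGroup.toGroup.of hrels
  have hf1 : f (PresentedGroup.of 1) = Kt.yh := PresentedGroup.toGroup.of hrels
  have hf2 : f (PresentedGroup.of 2) = Kt.zh := PresentedGroup.toGroup.of hrels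
  -- surjectivity
  have hsurj : Function.Surjective f := by
    intro k
    refine ⟨X ^ k.a.val * Y ^ k.b.val * Z ^ k.c.val, ?_⟩
    rw [map_mul, map_mul, map_pow, map_pow, map_pow, hf0, hf1, hf2]
    exact Kt.gen_decomp k
  -- the normal form section
  set gg : Kt N M L → G1 n m ℓ := fun k => X ^ k.a.val * Y ^ k.b.val * Z ^ (k.c.val : ℤ)
    with hgg
  have gg_mul : ∀ p q : Kt N M L, gg (p * q) = gg p * gg q := by
    intro p q
    rw [hgg]
    show X ^ ((p * q).a.val) * Y ^ ((p * q).b.val) * Z ^ (((p * q).c.val : ℤ)) = _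
    rw [show (p * q).a = p.a + q.a from rfl, show (p * q).b = p.b + q.b from rfl]
    have ea : X ^ ((p.a + q.a).val) = X ^ (p.a.val + q.a.val) := by
      apply powX_congr
      rw [hn2, ZMod.val_add, Nat.mod_mod_of_dvd _ dvd_rfl]
    have eb : Y ^ ((p.b + q.b).val) = Y ^ (p.b.val + q.b.val) := by
      apply powY_congr
      rw [hm2, ZMod.val_add, Nat.mod_mod_of_dvd _ dvd_rfl]
    have ec : Z ^ (((p * q).c.val : ℤ)) =
        Z ^ ((q.c.val : ℤ) + sgZ q.b.val * (sgZ q.a.val * (p.c.val : ℤ)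
          + epZ p.b.val * epZ q.a.val)) := by
      apply zpowZ_congr
      rw [hl2]
      push_cast [Kt.cast_val_self, sgZ_cast, epZ_cast]
      rw [show (p * q).c = q.c + sg L q.b.val * (sg L q.a.val * p.c + ep L p.b.val * ep L q.a.val)
        from rfl]
    rw [ea, eb, ec, prodForm]
  have gg_one : gg 1 = 1 := by
    rw [hgg]
    show X ^ ((0 : ZMod N).val) * Y ^ ((0 : ZMod M).val) * Z ^ (((0 : ZMod L).val : ℤ)) = 1
    simp [ZMod.val_zero]
  have gg_inv : ∀ p : Kt N M L, gg p⁻¹ = (gg p)⁻¹ := by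
    intro p
    have := gg_mul p⁻¹ p
    rw [inv_mul_cancel, gg_one] at this
    exact eq_inv_of_mul_eq_one_left this.symm
  set H : Subgroup (G1 n m ℓ) :=
    { carrier := {g | gg (f g) = g}
      mul_mem' := by
        intro g g' hgmem hg'
        show gg (f (g * g')) = g * g'
        rw [map_mul, gg_mul, hgmem, hg']
      one_mem' := by
        show gg (f 1) = 1
        rw [map_one, gg_one]
      inv_mem' := by
        intro g hgmem
        show gg (f g⁻¹) = g⁻¹
        rw [map_inv, gg_inv, hgmem] } with hH
  have hval1N : ((1 : ZMod N)).val = 1 := Kt.val_one_lt (by exact Fact.out)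
  have hval1M : ((1 : ZMod M)).val = 1 := Kt.val_one_lt (by exact Fact.out)
  have hval1L : ((1 : ZMod L)).val = 1 := Kt.val_one_lt (by exact Fact.out)
  have hHall : ∀ g : G1 n m ℓ, gg (f g) = g := by
    intro g
    have hmem : g ∈ H := by
      apply PresentedGroup.generated_by
      intro j
      fin_cases j
      · show gg (f (PresentedGroup.of 0)) = PresentedGroup.of 0
        rw [hf0, hgg]
        show X ^ ((1 : ZMod N).val) * Y ^ ((0 : ZMod M).val) * Z ^ (((0 : ZMod L).val : ℤ)) = _
        simp [ZMod.val_zero, hval1N]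
      · show gg (f (PresentedGroup.of 1)) = PresentedGroup.of 1
        rw [hf1, hgg]
        show X ^ ((0 : ZMod N).val) * Y ^ ((1 : ZMod M).val) * Z ^ (((0 : ZMod L).val : ℤ)) = _
        simp [ZMod.val_zero, hval1M]
      · show gg (f (PresentedGroup.of 2)) = PresentedGroup.of 2
        rw [hf2, hgg]
        show X ^ ((0 : ZMod N).val) * Y ^ ((0 : ZMod M).val) * Z ^ (((1 : ZMod L).val : ℤ)) = _
        simp [ZMod.val_zero, hval1L]
    exact hmem
  have hinj : Function.Injective f := by
    intro g g' hgg'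
    rw [← hHall g, ← hHall g', hgg']
  exact ⟨MulEquiv.ofBijective f ⟨hinj, hsurj⟩, hf0, hf1, hf2⟩

end IsoSection

theorem xh_sq {N M L : ℕ} [NeZero N] [NeZero M] [NeZero L] [Fact (2 ∣ N)] [Fact (2 ∣ M)] :
    (Kt.xh : Kt N M L) ^ 2 = ⟨2, 0, 0⟩ := by
  rw [Kt.xh_pow]
  norm_num

theorem yh_sq {N M L : ℕ} [NeZero N] [NeZero M] [NeZero L] [Fact (2 ∣ N)] [Fact (2 ∣ M)] :
    (Kt.yh : Kt N M L) ^ 2 = ⟨0, 2, 0⟩ := by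
  rw [Kt.yh_pow]
  norm_num

end Stmt3Aux

open Stmt3Aux

/-- For n ≥ m ≥ 1 and ℓ ≥ 2, the center of G_⚀ is generated by x², y² and
z^{2^{ℓ-1}}, and is isomorphic to C_{2^{n-1}} × C_{2^{m-1}} × C_2. -/
theorem stmt3 (n m ℓ : ℕ) (hm : 1 ≤ m) (hnm : m ≤ n) (hℓ : 2 ≤ ℓ) :
    Subgroup.center (G1 n m ℓ) =
      Subgroup.closure {(PresentedGroup.of 0 : G1 n m ℓ) ^ 2,
        (PresentedGroup.of 1 : G1 n m ℓ) ^ 2,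
        (PresentedGroup.of 2 : G1 n m ℓ) ^ (2 ^ (ℓ - 1))} ∧
    Nonempty (Subgroup.center (G1 n m ℓ) ≃*
      (Multiplicative (ZMod (2 ^ (n - 1))) × Multiplicative (ZMod (2 ^ (m - 1))) ×
        Multiplicative (ZMod 2))) := by
  obtain ⟨e, he0, he1, he2⟩ := exists_iso n m ℓ hm hnm hℓ
  have hL4 : 4 ∣ 2 * 2 ^ (ℓ - 1) := by
    have h1 : (2 : ℕ) ^ (ℓ - 1) = 2 * 2 ^ (ℓ - 2) := by
      rw [← pow_succ']
      congr 1
      omega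
    exact ⟨2 ^ (ℓ - 2), by rw [h1]; ring⟩
  have hcc : Subgroup.center (G1 n m ℓ) =
      (Subgroup.center (Kt (2 * 2 ^ (n - 1)) (2 * 2 ^ (m - 1)) (2 * 2 ^ (ℓ - 1)))).comap
        e.toMonoidHom := by
    ext g
    rw [Subgroup.mem_comap, Subgroup.mem_center_iff, Subgroup.mem_center_iff]
    constructor
    · intro h k
      obtain ⟨h', rfl⟩ := e.surjective k
      show e h' * e g = e g * e h'
      rw [← map_mul, ← map_mul, h h']
    · intro h k
      apply e.injective
      rw [map_mul, map_mul]
      exact h (e k)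
  constructor
  · have hKt := Kt.center_eq_closure (N := 2 * 2 ^ (n - 1)) (M := 2 * 2 ^ (m - 1))
      (L := 2 * 2 ^ (ℓ - 1)) hL4 (2 ^ (ℓ - 1)) rfl
    have himg : (Subgroup.closure {(PresentedGroup.of 0 : G1 n m ℓ) ^ 2,
        (PresentedGroup.of 1 : G1 n m ℓ) ^ 2,
        (PresentedGroup.of 2 : G1 n m ℓ) ^ (2 ^ (ℓ - 1))}).map e.toMonoidHom =
        Subgroup.closure {(⟨2, 0, 0⟩ : Kt (2 * 2 ^ (n - 1)) (2 * 2 ^ (m - 1)) (2 * 2 ^ (ℓ - 1))),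
          ⟨0, 2, 0⟩, ⟨0, 0, ((2 ^ (ℓ - 1) : ℕ) : ZMod (2 * 2 ^ (ℓ - 1)))⟩} := by
      rw [MonoidHom.map_closure]
      congr 1
      rw [Set.image_insert_eq, Set.image_insert_eq, Set.image_singleton]
      have e1 : e.toMonoidHom ((PresentedGroup.of 0 : G1 n m ℓ) ^ 2) = ⟨2, 0, 0⟩ := by
        rw [map_pow]
        show (e (PresentedGroup.of 0)) ^ 2 = _
        rw [he0, xh_sq]
      have e2 : e.toMonoidHom ((PresentedGroup.of 1 : G1 n m ℓ) ^ 2) = ⟨0, 2, 0⟩ := by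
        rw [map_pow]
        show (e (PresentedGroup.of 1)) ^ 2 = _
        rw [he1, yh_sq]
      have e3 : e.toMonoidHom ((PresentedGroup.of 2 : G1 n m ℓ) ^ (2 ^ (ℓ - 1))) =
          ⟨0, 0, ((2 ^ (ℓ - 1) : ℕ) : ZMod (2 * 2 ^ (ℓ - 1)))⟩ := by
        rw [map_pow]
        show (e (PresentedGroup.of 2)) ^ (2 ^ (ℓ - 1)) = _
        rw [he2, Kt.zh_pow]
      rw [e1, e2, e3]
    rw [hcc, hKt, ← himg, Subgroup.comap_map_eq_self_of_injective e.injective]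
  · have hmap : (Subgroup.center (G1 n m ℓ)).map e.toMonoidHom =
        Subgroup.center (Kt (2 * 2 ^ (n - 1)) (2 * 2 ^ (m - 1)) (2 * 2 ^ (ℓ - 1))) := by
      rw [hcc, Subgroup.map_comap_eq_self_of_surjective e.surjective]
    obtain ⟨e2⟩ := Kt.center_iso (N := 2 * 2 ^ (n - 1)) (M := 2 * 2 ^ (m - 1))
      (L := 2 * 2 ^ (ℓ - 1)) hL4 (2 ^ (n - 1)) (2 ^ (m - 1)) (2 ^ (ℓ - 1)) rfl rfl rfl
    exact ⟨((e.subgroupMap _).trans (MulEquiv.subgroupCongr hmap)).trans e2⟩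
end

section
/- Let G be the group with presentation ⟨x, y, z | x^{2^n} = 1, y^{2^m} = 1, z^{2^ℓ} = 1, [y,x] = z, [z,x] = z^{-2}, [z,y] = z^{-2}⟩ with n > m > ℓ ≥ 2. Then the centralizer C_G([G,G]) is abelian, generated by x², xy, y², z, and has exponent 2^n. -/
namespace S5

variable {n m ℓ : ℕ}

local notation "X" => (PresentedGroup.of (rels := relsG1 n m ℓ) 0)
local notation "Y" => (PresentedGroup.of (rels := relsG1 n m ℓ) 1)
local notation "Z" => (PresentedGroup.of (rels := relsG1 n m ℓ) 2)

lemma relone {r : FreeGroup (Fin 3)} (hr : r ∈ relsG1 n m ℓ) :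
    PresentedGroup.mk (relsG1 n m ℓ) r = 1 :=
  (QuotientGroup.eq_one_iff r).mpr (Subgroup.subset_normalClosure hr)

lemma rel1 : X ^ (2 ^ n) = 1 := by
  have h := relone (n := n) (m := m) (ℓ := ℓ) (Set.mem_insert _ _)
  rw [map_pow] at h
  exact h

lemma rel2 : Y ^ (2 ^ m) = 1 := by
  have h := relone (n := n) (m := m) (ℓ := ℓ)
    (Set.mem_insert_of_mem _ (Set.mem_insert _ _))
  rw [map_pow] at h
  exact h

lemma rel3 : Z ^ (2 ^ ℓ) = 1 := by
  have h := relone (n := n) (m := m) (ℓ := ℓ)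
    (Set.mem_insert_of_mem _ (Set.mem_insert_of_mem _ (Set.mem_insert _ _)))
  rw [map_pow] at h
  exact h

lemma rel4 : Y⁻¹ * X⁻¹ * Y * X = Z := by
  have h := relone (n := n) (m := m) (ℓ := ℓ)
    (Set.mem_insert_of_mem _ (Set.mem_insert_of_mem _ (Set.mem_insert_of_mem _
      (Set.mem_insert _ _))))
  simp only [map_mul, map_inv] at h
  rw [mul_inv_eq_one] at h
  exact h

lemma rel5 : X⁻¹ * Z * X = Z⁻¹ := by
  have h := relone (n := n) (m := m) (ℓ := ℓ)
    (Set.mem_insert_of_mem _ (Set.mem_insert_of_mem _ (Set.mem_insert_of_mem _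
      (Set.mem_insert_of_mem _ (Set.mem_insert _ _)))))
  simp only [map_mul, map_inv, map_pow] at h
  have hof : ∀ i, (PresentedGroup.mk (relsG1 n m ℓ)) (FreeGroup.of i) = PresentedGroup.of i :=
    fun _ => rfl
  simp only [hof] at h
  calc X⁻¹ * Z * X = Z * (Z⁻¹ * X⁻¹ * Z * X * Z ^ 2) * (Z ^ 2)⁻¹ := by group
    _ = Z * 1 * (Z ^ 2)⁻¹ := by rw [h]
    _ = Z⁻¹ := by group

lemma rel6 : Y⁻¹ * Z * Y = Z⁻¹ := by
  have h := relone (n := n) (m := m) (ℓ := ℓ)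
    (Set.mem_insert_of_mem _ (Set.mem_insert_of_mem _ (Set.mem_insert_of_mem _
      (Set.mem_insert_of_mem _ (Set.mem_insert_of_mem _ rfl)))))
  simp only [map_mul, map_inv, map_pow] at h
  have hof : ∀ i, (PresentedGroup.mk (relsG1 n m ℓ)) (FreeGroup.of i) = PresentedGroup.of i :=
    fun _ => rfl
  simp only [hof] at h
  calc Y⁻¹ * Z * Y = Z * (Z⁻¹ * Y⁻¹ * Z * Y * Z ^ 2) * (Z ^ 2)⁻¹ := by group
    _ = Z * 1 * (Z ^ 2)⁻¹ := by rw [h]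
    _ = Z⁻¹ := by group

lemma hYX : Y * X = X * Y * Z := by
  rw [← rel4]; group

lemma hZkX (k : ℤ) : Z ^ k * X = X * Z ^ (-k) := by
  have h : X⁻¹ * Z ^ k * X = Z ^ (-k) := by
    have hc := conj_zpow (i := k) (a := X⁻¹) (b := Z)
    rw [inv_inv, rel5] at hc
    rw [← hc, inv_zpow, ← zpow_neg]
  calc Z ^ k * X = X * (X⁻¹ * Z ^ k * X) := by group
    _ = X * Z ^ (-k) := by rw [h]

lemma hZkY (k : ℤ) : Z ^ k * Y = Y * Z ^ (-k) := by
  have h : Y⁻¹ * Z ^ k * Y = Z ^ (-k) := by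
    have hc := conj_zpow (i := k) (a := Y⁻¹) (b := Z)
    rw [inv_inv, rel6] at hc
    rw [← hc, inv_zpow, ← zpow_neg]
  calc Z ^ k * Y = Y * (Y⁻¹ * Z ^ k * Y) := by group
    _ = Y * Z ^ (-k) := by rw [h]

lemma hXZXi : X * Z * X⁻¹ = Z⁻¹ := by
  have h := rel5 (n := n) (m := m) (ℓ := ℓ)
  have h2 : X * (X⁻¹ * Z * X) * X⁻¹ = X * Z⁻¹ * X⁻¹ := by rw [h]
  have h3 : Z = X * Z⁻¹ * X⁻¹ := by rw [← h2]; group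
  calc X * Z * X⁻¹ = (X * Z⁻¹ * X⁻¹)⁻¹ := by group
    _ = Z⁻¹ := by rw [← h3]

lemma hYZYi : Y * Z * Y⁻¹ = Z⁻¹ := by
  have h := rel6 (n := n) (m := m) (ℓ := ℓ)
  have h2 : Y * (Y⁻¹ * Z * Y) * Y⁻¹ = Y * Z⁻¹ * Y⁻¹ := by rw [h]
  have h3 : Z = Y * Z⁻¹ * Y⁻¹ := by rw [← h2]; group
  calc Y * Z * Y⁻¹ = (Y * Z⁻¹ * Y⁻¹)⁻¹ := by group
    _ = Z⁻¹ := by rw [← h3]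

lemma cZX2 : Z * X ^ 2 = X ^ 2 * Z := by
  have h1 := hZkX (n := n) (m := m) (ℓ := ℓ) 1
  have h2 := hZkX (n := n) (m := m) (ℓ := ℓ) (-1)
  calc Z * X ^ 2 = (Z ^ (1:ℤ) * X) * X := by rw [pow_two]; group
    _ = X * (Z ^ (-1:ℤ) * X) := by rw [h1]; group
    _ = X * (X * Z ^ (-(-1):ℤ)) := by rw [h2]
    _ = X ^ 2 * Z := by rw [pow_two]; group

lemma cZY2 : Z * Y ^ 2 = Y ^ 2 * Z := by
  have h1 := hZkY (n := n) (m := m) (ℓ := ℓ) 1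
  have h2 := hZkY (n := n) (m := m) (ℓ := ℓ) (-1)
  calc Z * Y ^ 2 = (Z ^ (1:ℤ) * Y) * Y := by rw [pow_two]; group
    _ = Y * (Z ^ (-1:ℤ) * Y) := by rw [h1]; group
    _ = Y * (Y * Z ^ (-(-1):ℤ)) := by rw [h2]
    _ = Y ^ 2 * Z := by rw [pow_two]; group

lemma mZXeven (k : ℤ) {i : ℤ} (h : Even i) : Z ^ k * X ^ i = X ^ i * Z ^ k := by
  obtain ⟨t, rfl⟩ := h
  have hc : Commute (Z ^ k) ((X ^ 2) ^ t) :=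
    (Commute.zpow_zpow (by exact cZX2) k t)
  have hx : X ^ (t + t) = (X ^ 2) ^ t := by group
  rw [hx, hc.eq]

lemma mZXodd (k : ℤ) {i : ℤ} (h : Odd i) : Z ^ k * X ^ i = X ^ i * Z ^ (-k) := by
  obtain ⟨t, rfl⟩ := h
  calc Z ^ k * X ^ (2 * t + 1) = (Z ^ k * X ^ (t + t)) * X := by
        rw [show (2 * t + 1) = (t + t) + 1 by ring, zpow_add, zpow_one, mul_assoc]
    _ = X ^ (t + t) * (Z ^ k * X) := by rw [mZXeven k ⟨t, rfl⟩]; group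
    _ = X ^ (t + t) * (X * Z ^ (-k)) := by rw [hZkX]
    _ = X ^ (2 * t + 1) * Z ^ (-k) := by group

lemma mZYeven (k : ℤ) {i : ℤ} (h : Even i) : Z ^ k * Y ^ i = Y ^ i * Z ^ k := by
  obtain ⟨t, rfl⟩ := h
  have hc : Commute (Z ^ k) ((Y ^ 2) ^ t) :=
    (Commute.zpow_zpow (by exact cZY2) k t)
  have hx : Y ^ (t + t) = (Y ^ 2) ^ t := by group
  rw [hx, hc.eq]

lemma mZYodd (k : ℤ) {i : ℤ} (h : Odd i) : Z ^ k * Y ^ i = Y ^ i * Z ^ (-k) := by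
  obtain ⟨t, rfl⟩ := h
  calc Z ^ k * Y ^ (2 * t + 1) = (Z ^ k * Y ^ (t + t)) * Y := by
        rw [show (2 * t + 1) = (t + t) + 1 by ring, zpow_add, zpow_one, mul_assoc]
    _ = Y ^ (t + t) * (Z ^ k * Y) := by rw [mZYeven k ⟨t, rfl⟩]; group
    _ = Y ^ (t + t) * (Y * Z ^ (-k)) := by rw [hZkY]
    _ = Y ^ (2 * t + 1) * Z ^ (-k) := by group

lemma cYX2 : Y * X ^ 2 = X ^ 2 * Y := by
  calc Y * X ^ 2 = (Y * X) * X := by rw [pow_two]; group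
    _ = X * Y * (Z ^ (1:ℤ) * X) := by rw [hYX]; group
    _ = X * Y * (X * Z ^ (-1:ℤ)) := by rw [hZkX]
    _ = X * (Y * X) * Z ^ (-1:ℤ) := by group
    _ = X * (X * Y * Z) * Z ^ (-1:ℤ) := by rw [hYX]
    _ = X ^ 2 * Y := by rw [pow_two]; group

lemma mYXeven {i : ℤ} (h : Even i) : Y * X ^ i = X ^ i * Y := by
  obtain ⟨t, rfl⟩ := h
  have hc : Commute Y ((X ^ 2) ^ t) := Commute.zpow_right (by exact cYX2) t
  have hx : X ^ (t + t) = (X ^ 2) ^ t := by group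
  rw [hx, hc.eq]

lemma mYXodd {i : ℤ} (h : Odd i) : Y * X ^ i = X ^ i * (Y * Z) := by
  obtain ⟨t, rfl⟩ := h
  calc Y * X ^ (2 * t + 1) = (Y * X ^ (t + t)) * X := by
        rw [show (2 * t + 1) = (t + t) + 1 by ring, zpow_add, zpow_one, mul_assoc]
    _ = X ^ (t + t) * (Y * X) := by rw [mYXeven ⟨t, rfl⟩]; group
    _ = X ^ (t + t) * (X * (Y * Z)) := by rw [hYX]; group
    _ = X ^ (2 * t + 1) * (Y * Z) := by group

lemma hconj2 : X⁻¹ * Y⁻¹ * X = Z⁻¹ * Y⁻¹ := by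
  have hconj : X⁻¹ * Y * X = Y * Z := by
    rw [show X⁻¹ * Y * X = X⁻¹ * (Y * X) by group, hYX]; group
  calc X⁻¹ * Y⁻¹ * X = (X⁻¹ * Y * X)⁻¹ := by group
    _ = (Y * Z)⁻¹ := by rw [hconj]
    _ = Z⁻¹ * Y⁻¹ := by group

lemma hYiX : Y⁻¹ * X = X * (Y⁻¹ * Z) := by
  have h2 : Z ^ (-1:ℤ) * Y ^ (-1:ℤ) = Y ^ (-1:ℤ) * Z ^ (-(-1):ℤ) :=
    mZYodd (-1) ⟨-1, by ring⟩
  calc Y⁻¹ * X = X * (X⁻¹ * Y⁻¹ * X) := by group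
    _ = X * (Z⁻¹ * Y⁻¹) := by rw [hconj2]
    _ = X * (Z ^ (-1:ℤ) * Y ^ (-1:ℤ)) := by group
    _ = X * (Y ^ (-1:ℤ) * Z ^ (-(-1):ℤ)) := by rw [h2]
    _ = X * (Y⁻¹ * Z) := by group

lemma mYiXeven {i : ℤ} (h : Even i) : Y⁻¹ * X ^ i = X ^ i * Y⁻¹ := by
  obtain ⟨t, rfl⟩ := h
  have hc : Commute Y⁻¹ ((X ^ 2) ^ t) :=
    Commute.zpow_right (Commute.inv_left (by exact cYX2)) t
  have hx : X ^ (t + t) = (X ^ 2) ^ t := by group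
  rw [hx, hc.eq]

lemma mYiXodd {i : ℤ} (h : Odd i) : Y⁻¹ * X ^ i = X ^ i * (Y⁻¹ * Z) := by
  obtain ⟨t, rfl⟩ := h
  calc Y⁻¹ * X ^ (2 * t + 1) = (Y⁻¹ * X ^ (t + t)) * X := by
        rw [show (2 * t + 1) = (t + t) + 1 by ring, zpow_add, zpow_one, mul_assoc]
    _ = X ^ (t + t) * (Y⁻¹ * X) := by rw [mYiXeven ⟨t, rfl⟩]; group
    _ = X ^ (t + t) * (X * (Y⁻¹ * Z)) := by rw [hYiX]
    _ = X ^ (2 * t + 1) * (Y⁻¹ * Z) := by group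

def NF (g : G1 n m ℓ) : Prop := ∃ i j k : ℤ, g = X ^ i * Y ^ j * Z ^ k

lemma nf_one : NF (1 : G1 n m ℓ) := ⟨0, 0, 0, by group⟩

lemma moveZk (e i j : ℤ) :
    ∃ e' : ℤ, Z ^ e * (X ^ i * Y ^ j) = X ^ i * Y ^ j * Z ^ e' := by
  rcases Int.even_or_odd i with hi | hi <;> rcases Int.even_or_odd j with hj | hj
  · exact ⟨e, by rw [← mul_assoc, mZXeven e hi, mul_assoc, mZYeven e hj, ← mul_assoc]⟩
  · exact ⟨-e, by rw [← mul_assoc, mZXeven e hi, mul_assoc, mZYodd e hj, ← mul_assoc]⟩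
  · exact ⟨-e, by rw [← mul_assoc, mZXodd e hi, mul_assoc, mZYeven (-e) hj, ← mul_assoc]⟩
  · exact ⟨-(-e), by rw [← mul_assoc, mZXodd e hi, mul_assoc, mZYodd (-e) hj, ← mul_assoc]⟩

lemma nf_X {g : G1 n m ℓ} (h : NF g) : NF (PresentedGroup.of 0 * g) := by
  obtain ⟨i, j, k, rfl⟩ := h
  exact ⟨i + 1, j, k, by group⟩

lemma nf_Xi {g : G1 n m ℓ} (h : NF g) : NF ((PresentedGroup.of (rels := relsG1 n m ℓ) 0)⁻¹ * g) := by
  obtain ⟨i, j, k, rfl⟩ := h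
  exact ⟨i - 1, j, k, by group⟩

lemma nf_Z {g : G1 n m ℓ} (h : NF g) : NF (PresentedGroup.of 2 * g) := by
  obtain ⟨i, j, k, rfl⟩ := h
  obtain ⟨e', he⟩ := moveZk (n := n) (m := m) (ℓ := ℓ) 1 i j
  refine ⟨i, j, e' + k, ?_⟩
  calc Z * (X ^ i * Y ^ j * Z ^ k) = (Z ^ (1:ℤ) * (X ^ i * Y ^ j)) * Z ^ k := by group
    _ = (X ^ i * Y ^ j * Z ^ e') * Z ^ k := by rw [he]
    _ = X ^ i * Y ^ j * Z ^ (e' + k) := by group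

lemma nf_Zi {g : G1 n m ℓ} (h : NF g) : NF ((PresentedGroup.of (rels := relsG1 n m ℓ) 2)⁻¹ * g) := by
  obtain ⟨i, j, k, rfl⟩ := h
  obtain ⟨e', he⟩ := moveZk (n := n) (m := m) (ℓ := ℓ) (-1) i j
  refine ⟨i, j, e' + k, ?_⟩
  calc Z⁻¹ * (X ^ i * Y ^ j * Z ^ k) = (Z ^ (-1:ℤ) * (X ^ i * Y ^ j)) * Z ^ k := by group
    _ = (X ^ i * Y ^ j * Z ^ e') * Z ^ k := by rw [he]
    _ = X ^ i * Y ^ j * Z ^ (e' + k) := by group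

lemma nf_Y {g : G1 n m ℓ} (h : NF g) : NF (PresentedGroup.of 1 * g) := by
  obtain ⟨i, j, k, rfl⟩ := h
  rcases Int.even_or_odd i with hi | hi
  · refine ⟨i, 1 + j, k, ?_⟩
    calc Y * (X ^ i * Y ^ j * Z ^ k) = (Y * X ^ i) * (Y ^ j * Z ^ k) := by group
      _ = (X ^ i * Y) * (Y ^ j * Z ^ k) := by rw [mYXeven hi]
      _ = X ^ i * Y ^ (1 + j) * Z ^ k := by group
  · obtain ⟨e', he⟩ := moveZk (n := n) (m := m) (ℓ := ℓ) 1 0 j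
    simp only [zpow_zero, one_mul] at he
    refine ⟨i, 1 + j, e' + k, ?_⟩
    calc Y * (X ^ i * Y ^ j * Z ^ k) = (Y * X ^ i) * (Y ^ j * Z ^ k) := by group
      _ = (X ^ i * (Y * Z)) * (Y ^ j * Z ^ k) := by rw [mYXodd hi]
      _ = X ^ i * Y * ((Z ^ (1:ℤ) * Y ^ j) * Z ^ k) := by group
      _ = X ^ i * Y * ((Y ^ j * Z ^ e') * Z ^ k) := by rw [he]
      _ = X ^ i * Y ^ (1 + j) * Z ^ (e' + k) := by group

lemma nf_Yi {g : G1 n m ℓ} (h : NF g) : NF ((PresentedGroup.of (rels := relsG1 n m ℓ) 1)⁻¹ * g) := by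
  obtain ⟨i, j, k, rfl⟩ := h
  rcases Int.even_or_odd i with hi | hi
  · refine ⟨i, -1 + j, k, ?_⟩
    calc Y⁻¹ * (X ^ i * Y ^ j * Z ^ k) = (Y⁻¹ * X ^ i) * (Y ^ j * Z ^ k) := by group
      _ = (X ^ i * Y⁻¹) * (Y ^ j * Z ^ k) := by rw [mYiXeven hi]
      _ = X ^ i * Y ^ (-1 + j) * Z ^ k := by group
  · obtain ⟨e', he⟩ := moveZk (n := n) (m := m) (ℓ := ℓ) 1 0 j
    simp only [zpow_zero, one_mul] at he
    refine ⟨i, -1 + j, e' + k, ?_⟩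
    calc Y⁻¹ * (X ^ i * Y ^ j * Z ^ k) = (Y⁻¹ * X ^ i) * (Y ^ j * Z ^ k) := by group
      _ = (X ^ i * (Y⁻¹ * Z)) * (Y ^ j * Z ^ k) := by rw [mYiXodd hi]
      _ = X ^ i * Y⁻¹ * ((Z ^ (1:ℤ) * Y ^ j) * Z ^ k) := by group
      _ = X ^ i * Y⁻¹ * ((Y ^ j * Z ^ e') * Z ^ k) := by rw [he]
      _ = X ^ i * Y ^ (-1 + j) * Z ^ (e' + k) := by group

lemma nf_all (g : G1 n m ℓ) : NF g := by
  have key : ∀ w : FreeGroup (Fin 3), ∀ g : G1 n m ℓ, NF g →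
      NF (PresentedGroup.mk (relsG1 n m ℓ) w * g) := by
    intro w
    refine FreeGroup.induction_on w ?_ ?_ ?_ ?_
    · intro g hg; simpa using hg
    · intro x g hg
      have : PresentedGroup.mk (relsG1 n m ℓ) (FreeGroup.of x) = PresentedGroup.of x := rfl
      fin_cases x
      · exact nf_X hg
      · exact nf_Y hg
      · exact nf_Z hg
    · intro x _ g hg
      fin_cases x
      · exact nf_Xi hg
      · exact nf_Yi hg
      · exact nf_Zi hg
    · intro a b ha hb g hg
      rw [map_mul, mul_assoc]
      exact ha _ (hb _ hg)
  refine PresentedGroup.induction_on g fun w => ?_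
  have := key w 1 nf_one
  simpa using this

def fD : Fin 3 → DihedralGroup 8
  | 0 => .sr 0
  | 1 => .sr 1
  | 2 => (DihedralGroup.sr 1)⁻¹ * (DihedralGroup.sr 0)⁻¹ * DihedralGroup.sr 1 * DihedralGroup.sr 0

lemma relD (hn : 1 ≤ n) (hm : 1 ≤ m) (hl : 2 ≤ ℓ) :
    ∀ r ∈ relsG1 n m ℓ, FreeGroup.lift fD r = 1 := by
  intro r hr
  simp only [relsG1, Set.mem_insert_iff, Set.mem_singleton_iff] at hr
  rcases hr with rfl | rfl | rfl | rfl | rfl | rfl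
  · obtain ⟨n', rfl⟩ : ∃ n', n = n' + 1 := ⟨n - 1, by omega⟩
    rw [map_pow, FreeGroup.lift_apply_of, show 2 ^ (n' + 1) = 2 * 2 ^ n' by ring, pow_mul,
      show (fD 0) ^ 2 = 1 by decide, one_pow]
  · obtain ⟨m', rfl⟩ : ∃ m', m = m' + 1 := ⟨m - 1, by omega⟩
    rw [map_pow, FreeGroup.lift_apply_of, show 2 ^ (m' + 1) = 2 * 2 ^ m' by ring, pow_mul,
      show (fD 1) ^ 2 = 1 by decide, one_pow]
  · obtain ⟨l', rfl⟩ : ∃ l', ℓ = l' + 2 := ⟨ℓ - 2, by omega⟩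
    rw [map_pow, FreeGroup.lift_apply_of, show 2 ^ (l' + 2) = 4 * 2 ^ l' by ring, pow_mul,
      show (fD 2) ^ 4 = 1 by decide, one_pow]
  · simp only [map_mul, map_inv, FreeGroup.lift_apply_of]
    decide
  · simp only [map_mul, map_inv, map_pow, FreeGroup.lift_apply_of]
    decide
  · simp only [map_mul, map_inv, map_pow, FreeGroup.lift_apply_of]
    decide

lemma zsq_ne_one (hn : 1 ≤ n) (hm : 1 ≤ m) (hl : 2 ≤ ℓ) :
    (Z) ^ (2:ℤ) ≠ 1 := by
  intro h
  have hφ := congrArg (PresentedGroup.toGroup (relD hn hm hl)) h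
  rw [map_zpow, map_one, PresentedGroup.toGroup.of] at hφ
  revert hφ
  rw [show ((2:ℤ)) = ((2:ℕ):ℤ) by norm_num, zpow_natCast]
  decide

def fA (n : ℕ) : Fin 3 → Multiplicative (ZMod (2 ^ n))
  | 0 => Multiplicative.ofAdd 1
  | 1 => 1
  | 2 => 1

lemma relA : ∀ r ∈ relsG1 n m ℓ, FreeGroup.lift (fA n) r = 1 := by
  intro r hr
  simp only [relsG1, Set.mem_insert_iff, Set.mem_singleton_iff] at hr
  rcases hr with rfl | rfl | rfl | rfl | rfl | rfl
  · rw [map_pow, FreeGroup.lift_apply_of]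
    show (Multiplicative.ofAdd (1 : ZMod (2 ^ n))) ^ (2 ^ n) = 1
    rw [← ofAdd_nsmul, nsmul_eq_mul, mul_one, ZMod.natCast_self, ofAdd_zero]
  · rw [map_pow, FreeGroup.lift_apply_of]; show (1 : Multiplicative (ZMod (2 ^ n))) ^ _ = 1
    exact one_pow _
  · rw [map_pow, FreeGroup.lift_apply_of]; show (1 : Multiplicative (ZMod (2 ^ n))) ^ _ = 1
    exact one_pow _
  · simp only [map_mul, map_inv, FreeGroup.lift_apply_of]
    show (1:Multiplicative (ZMod (2^n)))⁻¹ * (Multiplicative.ofAdd 1)⁻¹ * 1 *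
      Multiplicative.ofAdd 1 * (1:Multiplicative (ZMod (2^n)))⁻¹ = 1
    group
  · simp only [map_mul, map_inv, map_pow, FreeGroup.lift_apply_of]
    show (1:Multiplicative (ZMod (2^n)))⁻¹ * (Multiplicative.ofAdd 1)⁻¹ * 1 *
      Multiplicative.ofAdd 1 * (1:Multiplicative (ZMod (2^n))) ^ 2 = 1
    group
  · simp only [map_mul, map_inv, map_pow, FreeGroup.lift_apply_of]
    show (1:Multiplicative (ZMod (2^n)))⁻¹ * (1:Multiplicative (ZMod (2^n)))⁻¹ * 1 *
      1 * (1:Multiplicative (ZMod (2^n))) ^ 2 = 1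
    group

lemma xpow_ne_one (N : ℕ) (hN : ¬ (2 ^ n ∣ N)) : (X) ^ N ≠ 1 := by
  intro h
  have hφ := congrArg (PresentedGroup.toGroup (relA (n := n) (m := m) (ℓ := ℓ))) h
  rw [map_pow, map_one, PresentedGroup.toGroup.of] at hφ
  have : (Multiplicative.ofAdd (1 : ZMod (2 ^ n))) ^ N = 1 := hφ
  rw [← ofAdd_nsmul, nsmul_eq_mul, mul_one, ← ofAdd_zero] at this
  exact hN ((ZMod.natCast_eq_zero_iff N (2 ^ n)).mp (Multiplicative.ofAdd.injective this))

lemma moveZX (e i : ℤ) : ∃ e' : ℤ, Z ^ e * X ^ i = X ^ i * Z ^ e' := by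
  rcases Int.even_or_odd i with hi | hi
  · exact ⟨e, mZXeven e hi⟩
  · exact ⟨-e, mZXodd e hi⟩

lemma moveZY (e j : ℤ) : ∃ e' : ℤ, Z ^ e * Y ^ j = Y ^ j * Z ^ e' := by
  rcases Int.even_or_odd j with hj | hj
  · exact ⟨e, mZYeven e hj⟩
  · exact ⟨-e, mZYodd e hj⟩

lemma cY2X : Y ^ 2 * X = X * Y ^ 2 := by
  calc Y ^ 2 * X = Y * (Y * X) := by rw [pow_two]; group
    _ = Y * (X * Y * Z) := by rw [hYX]
    _ = (Y * X) * (Y * Z) := by group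
    _ = (X * Y * Z) * (Y * Z) := by rw [hYX]
    _ = X * Y * (Z ^ (1:ℤ) * Y) * Z := by group
    _ = X * Y * (Y * Z ^ (-1:ℤ)) * Z := by rw [hZkY]
    _ = X * Y ^ 2 := by rw [pow_two]; group

lemma cA : Commute ((X) ^ 2) (X * Y) := by
  show X ^ 2 * (X * Y) = (X * Y) * X ^ 2
  calc X ^ 2 * (X * Y) = X * (X ^ 2 * Y) := by rw [pow_two]; group
    _ = X * (Y * X ^ 2) := by rw [← cYX2]
    _ = (X * Y) * X ^ 2 := by group

lemma cB : Commute ((X) ^ 2) ((Y) ^ 2) := by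
  show X ^ 2 * Y ^ 2 = Y ^ 2 * X ^ 2
  calc X ^ 2 * Y ^ 2 = (X ^ 2 * Y) * Y := by rw [pow_two Y]; group
    _ = (Y * X ^ 2) * Y := by rw [← cYX2]
    _ = Y * (X ^ 2 * Y) := by group
    _ = Y * (Y * X ^ 2) := by rw [← cYX2]
    _ = Y ^ 2 * X ^ 2 := by rw [pow_two Y]; group

lemma cC : Commute ((X) ^ 2) (Z) := by
  show X ^ 2 * Z = Z * X ^ 2
  rw [cZX2]

lemma cF : Commute ((Y) ^ 2) (Z) := by
  show Y ^ 2 * Z = Z * Y ^ 2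
  rw [cZY2]

lemma cE : Commute (X * Y) (Z) := by
  show (X * Y) * Z = Z * (X * Y)
  calc (X * Y) * Z = X * (Y * Z ^ (-(-1):ℤ)) := by group
    _ = X * (Z ^ (-1:ℤ) * Y) := by rw [hZkY]
    _ = (X * Z ^ (-(1:ℤ))) * Y := by group
    _ = (Z ^ (1:ℤ) * X) * Y := by rw [hZkX]
    _ = Z * (X * Y) := by group

lemma cD : Commute (X * Y) ((Y) ^ 2) := by
  show (X * Y) * Y ^ 2 = Y ^ 2 * (X * Y)
  calc (X * Y) * Y ^ 2 = X * (Y * Y ^ 2) := by group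
    _ = (X * Y ^ 2) * Y := by group
    _ = (Y ^ 2 * X) * Y := by rw [cY2X]
    _ = Y ^ 2 * (X * Y) := by group

def SetS : Set (G1 n m ℓ) :=
  {(X) ^ 2, X * Y, (Y) ^ 2, Z}

lemma scomm : ∀ a ∈ SetS (n := n) (m := m) (ℓ := ℓ), ∀ b ∈ SetS (n := n) (m := m) (ℓ := ℓ), Commute a b := by
  intro a ha b hb
  simp only [SetS, Set.mem_insert_iff, Set.mem_singleton_iff] at ha hb
  rcases ha with rfl | rfl | rfl | rfl <;> rcases hb with rfl | rfl | rfl | rfl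
  · exact Commute.refl _
  · exact cA
  · exact cB
  · exact cC
  · exact cA.symm
  · exact Commute.refl _
  · exact cD
  · exact cE
  · exact cB.symm
  · exact cD.symm
  · exact Commute.refl _
  · exact cF
  · exact cC.symm
  · exact cE.symm
  · exact cF.symm
  · exact Commute.refl _

set_option maxHeartbeats 1000000 in
lemma conj_Z_mem (g : G1 n m ℓ) :
    g * PresentedGroup.of 2 * g⁻¹ ∈ Subgroup.closure {(Z)} := by
  obtain ⟨i, j, k, rfl⟩ := nf_all g
  obtain ⟨e1, he1⟩ := moveZY (n := n) (m := m) (ℓ := ℓ) 1 (-j)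
  obtain ⟨e2, he2⟩ := moveZX (n := n) (m := m) (ℓ := ℓ) e1 (-i)
  have hinv : (X ^ i * Y ^ j * Z ^ k)⁻¹ = Z ^ (-k) * Y ^ (-j) * X ^ (-i) := by
    rw [mul_inv_rev, mul_inv_rev, ← zpow_neg, ← zpow_neg, ← zpow_neg, mul_assoc]
  have hcalc : (X ^ i * Y ^ j * Z ^ k) * Z * (X ^ i * Y ^ j * Z ^ k)⁻¹ = Z ^ e2 := by
    calc (X ^ i * Y ^ j * Z ^ k) * Z * (X ^ i * Y ^ j * Z ^ k)⁻¹
        = (X ^ i * Y ^ j * Z ^ k) * Z * (Z ^ (-k) * Y ^ (-j) * X ^ (-i)) := by rw [hinv]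
      _ = X ^ i * (Y ^ j * ((Z ^ (1:ℤ) * Y ^ (-j)) * X ^ (-i))) := by group
      _ = X ^ i * (Y ^ j * ((Y ^ (-j) * Z ^ e1) * X ^ (-i))) := by rw [he1]
      _ = X ^ i * (Z ^ e1 * X ^ (-i)) := by group
      _ = X ^ i * (X ^ (-i) * Z ^ e2) := by rw [he2]
      _ = Z ^ e2 := by group
  rw [hcalc]
  exact Subgroup.zpow_mem _ (Subgroup.subset_closure (Set.mem_singleton _)) e2

lemma Nnormal : (Subgroup.closure {(Z)} : Subgroup (G1 n m ℓ)).Normal := by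
  constructor
  intro a ha g
  induction ha using Subgroup.closure_induction with
  | mem x hx =>
      rw [Set.mem_singleton_iff] at hx
      subst hx
      exact conj_Z_mem g
  | one => simpa using Subgroup.one_mem _
  | mul x y hx hy ihx ihy =>
      have : g * (x * y) * g⁻¹ = (g * x * g⁻¹) * (g * y * g⁻¹) := by group
      rw [this]; exact Subgroup.mul_mem _ ihx ihy
  | inv x hx ihx =>
      have : g * x⁻¹ * g⁻¹ = (g * x * g⁻¹)⁻¹ := by group
      rw [this]; exact Subgroup.inv_mem _ ihx

open scoped commutatorElement in
lemma Z_mem_commutator : (Z) ∈ commutator (G1 n m ℓ) := by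
  have h : ⁅(Y)⁻¹, (X)⁻¹⁆ = Z := by
    rw [commutatorElement_def, inv_inv, inv_inv]
    exact rel4
  rw [← h, commutator_def]
  exact Subgroup.commutator_mem_commutator (Subgroup.mem_top _) (Subgroup.mem_top _)

open scoped commutatorElement in
lemma commutator_le_N :
    commutator (G1 n m ℓ) ≤ Subgroup.closure {(Z)} := by
  haveI : (Subgroup.closure {(Z)} : Subgroup (G1 n m ℓ)).Normal := Nnormal
  rw [commutator_def, Subgroup.commutator_le]
  intro g _ h _
  rw [← QuotientGroup.eq_one_iff]
  show (QuotientGroup.mk' (Subgroup.closure {(Z)})) ⁅g, h⁆ = 1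
  set π := QuotientGroup.mk' (Subgroup.closure {(Z)} : Subgroup (G1 n m ℓ)) with hπ
  rw [map_commutatorElement]
  apply commutatorElement_eq_one_iff_commute.mpr
  have hZ1 : π (Z) = 1 :=
    (QuotientGroup.eq_one_iff _).mpr (Subgroup.subset_closure (Set.mem_singleton _))
  have hXY : Commute (π (X)) (π (Y)) := by
    have hc := congrArg π (hYX (n := n) (m := m) (ℓ := ℓ))
    simp only [map_mul, hZ1, mul_one] at hc
    exact hc.symm
  have hform : ∀ w : G1 n m ℓ, ∃ i j : ℤ, π w = (π (X)) ^ i * (π (Y)) ^ j := by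
    intro w
    obtain ⟨i, j, k, rfl⟩ := nf_all w
    refine ⟨i, j, ?_⟩
    simp only [map_mul, map_zpow, hZ1, one_zpow, mul_one]
  obtain ⟨i, j, hg⟩ := hform g
  obtain ⟨p, q, hh⟩ := hform h
  rw [hg, hh]
  have h1 : Commute ((π (X)) ^ i) ((π (X)) ^ p * (π (Y)) ^ q) :=
    Commute.mul_right ((Commute.refl _).zpow_zpow i p) (hXY.zpow_zpow i q)
  have h2 : Commute ((π (Y)) ^ j) ((π (X)) ^ p * (π (Y)) ^ q) :=
    Commute.mul_right (hXY.symm.zpow_zpow j p) ((Commute.refl _).zpow_zpow j q)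
  exact Commute.mul_left h1 h2

lemma memS1 : (X) ^ 2 ∈ SetS (n := n) (m := m) (ℓ := ℓ) := Set.mem_insert _ _
lemma memS2 : (X) * (Y) ∈ SetS (n := n) (m := m) (ℓ := ℓ) :=
  Set.mem_insert_of_mem _ (Set.mem_insert _ _)
lemma memS3 : (Y) ^ 2 ∈ SetS (n := n) (m := m) (ℓ := ℓ) :=
  Set.mem_insert_of_mem _ (Set.mem_insert_of_mem _ (Set.mem_insert _ _))
lemma memS4 : (Z) ∈ SetS (n := n) (m := m) (ℓ := ℓ) :=
  Set.mem_insert_of_mem _ (Set.mem_insert_of_mem _ (Set.mem_insert_of_mem _ (Set.mem_singleton _)))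

lemma cent_eq (hl : 2 ≤ ℓ) (hml : ℓ < m) (hnm : m < n) :
    Subgroup.centralizer ((commutator (G1 n m ℓ) : Subgroup (G1 n m ℓ)) : Set (G1 n m ℓ)) =
      Subgroup.closure (SetS (n := n) (m := m) (ℓ := ℓ)) := by
  apply le_antisymm
  · intro u hu
    have hZu : (Z) * u = u * (Z) :=
      Subgroup.mem_centralizer_iff.mp hu _ (Z_mem_commutator (n := n) (m := m) (ℓ := ℓ))
    obtain ⟨i, j, k, rfl⟩ := nf_all u
    have hrhs : (X ^ i * Y ^ j * Z ^ k) * Z = X ^ i * Y ^ j * Z ^ (k + 1) := by group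
    rcases Int.even_or_odd i with hi | hi <;> rcases Int.even_or_odd j with hj | hj
    · obtain ⟨a, rfl⟩ := hi
      obtain ⟨b, rfl⟩ := hj
      have h1 : (X : G1 n m ℓ) ^ (a + a) = (X ^ 2) ^ a := by group
      have h2 : (Y : G1 n m ℓ) ^ (b + b) = (Y ^ 2) ^ b := by group
      rw [h1, h2]
      exact Subgroup.mul_mem _
        (Subgroup.mul_mem _ (Subgroup.zpow_mem _ (Subgroup.subset_closure memS1) a)
          (Subgroup.zpow_mem _ (Subgroup.subset_closure memS3) b))
        (Subgroup.zpow_mem _ (Subgroup.subset_closure memS4) k)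
    · exfalso
      have hlhs : (Z) * (X ^ i * Y ^ j * Z ^ k) = X ^ i * Y ^ j * Z ^ (-1 + k) := by
        calc (Z) * (X ^ i * Y ^ j * Z ^ k) = (Z ^ (1:ℤ) * X ^ i) * (Y ^ j * Z ^ k) := by group
          _ = (X ^ i * Z ^ (1:ℤ)) * (Y ^ j * Z ^ k) := by rw [mZXeven 1 hi]
          _ = X ^ i * ((Z ^ (1:ℤ) * Y ^ j) * Z ^ k) := by group
          _ = X ^ i * ((Y ^ j * Z ^ (-1:ℤ)) * Z ^ k) := by rw [mZYodd 1 hj]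
          _ = X ^ i * Y ^ j * Z ^ (-1 + k) := by group
      rw [hlhs, hrhs] at hZu
      have h' : (Z : G1 n m ℓ) ^ (-1 + k) = Z ^ (k + 1) := mul_left_cancel hZu
      have hz2 : (Z : G1 n m ℓ) ^ (2:ℤ) = 1 := by
        have h2 : (Z : G1 n m ℓ) ^ (k + 1) * (Z ^ (-1 + k))⁻¹ = 1 := by rw [← h']; group
        calc (Z : G1 n m ℓ) ^ (2:ℤ) = Z ^ (k + 1) * (Z ^ (-1 + k))⁻¹ := by group
          _ = 1 := h2
      exact zsq_ne_one (by omega) (by omega) (by omega) hz2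
    · exfalso
      have hlhs : (Z) * (X ^ i * Y ^ j * Z ^ k) = X ^ i * Y ^ j * Z ^ (-1 + k) := by
        calc (Z) * (X ^ i * Y ^ j * Z ^ k) = (Z ^ (1:ℤ) * X ^ i) * (Y ^ j * Z ^ k) := by group
          _ = (X ^ i * Z ^ (-1:ℤ)) * (Y ^ j * Z ^ k) := by rw [mZXodd 1 hi]
          _ = X ^ i * ((Z ^ (-1:ℤ) * Y ^ j) * Z ^ k) := by group
          _ = X ^ i * ((Y ^ j * Z ^ (-1:ℤ)) * Z ^ k) := by rw [mZYeven (-1) hj]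
          _ = X ^ i * Y ^ j * Z ^ (-1 + k) := by group
      rw [hlhs, hrhs] at hZu
      have h' : (Z : G1 n m ℓ) ^ (-1 + k) = Z ^ (k + 1) := mul_left_cancel hZu
      have hz2 : (Z : G1 n m ℓ) ^ (2:ℤ) = 1 := by
        have h2 : (Z : G1 n m ℓ) ^ (k + 1) * (Z ^ (-1 + k))⁻¹ = 1 := by rw [← h']; group
        calc (Z : G1 n m ℓ) ^ (2:ℤ) = Z ^ (k + 1) * (Z ^ (-1 + k))⁻¹ := by group
          _ = 1 := h2
      exact zsq_ne_one (by omega) (by omega) (by omega) hz2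
    · obtain ⟨a, rfl⟩ := hi
      obtain ⟨b, rfl⟩ := hj
      have hXa : ((X : G1 n m ℓ) ^ 2) ^ a = X ^ (a + a) := by group
      have hYb : ((Y : G1 n m ℓ) ^ 2) ^ b = Y ^ (b + b) := by group
      have hrepr : (X : G1 n m ℓ) ^ (2 * a + 1) * Y ^ (2 * b + 1) * Z ^ k =
          (X ^ 2) ^ a * ((X * Y) * ((Y ^ 2) ^ b * Z ^ k)) := by
        rw [hXa, hYb]; group
      rw [hrepr]
      exact Subgroup.mul_mem _ (Subgroup.zpow_mem _ (Subgroup.subset_closure memS1) a)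
        (Subgroup.mul_mem _ (Subgroup.subset_closure memS2)
          (Subgroup.mul_mem _ (Subgroup.zpow_mem _ (Subgroup.subset_closure memS3) b)
            (Subgroup.zpow_mem _ (Subgroup.subset_closure memS4) k)))
  · rw [Subgroup.closure_le]
    intro s hs
    rw [SetLike.mem_coe, Subgroup.mem_centralizer_iff]
    intro h hmem
    rw [SetLike.mem_coe] at hmem
    have hN : h ∈ Subgroup.closure {(Z)} := commutator_le_N hmem
    have hsZ : Commute s (Z) := scomm s hs _ memS4
    have hle : (Subgroup.closure {(Z)} : Subgroup (G1 n m ℓ)) ≤ Subgroup.centralizer {s} := by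
      rw [Subgroup.closure_le]
      intro z hz
      rw [Set.mem_singleton_iff] at hz
      subst hz
      rw [SetLike.mem_coe, Subgroup.mem_centralizer_singleton_iff]
      exact hsZ.symm.eq
    have := hle hN
    rw [Subgroup.mem_centralizer_singleton_iff] at this
    exact this

lemma pXpow (k : ℕ) (hk : n ≤ k) : (X) ^ (2 ^ k) = 1 := by
  have h : 2 ^ k = 2 ^ n * 2 ^ (k - n) := by rw [← pow_add]; congr 1; omega
  rw [h, pow_mul, rel1, one_pow]

lemma pYpow (k : ℕ) (hk : m ≤ k) : (Y) ^ (2 ^ k) = 1 := by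
  have h : 2 ^ k = 2 ^ m * 2 ^ (k - m) := by rw [← pow_add]; congr 1; omega
  rw [h, pow_mul, rel2, one_pow]

lemma pZpow (k : ℕ) (hk : ℓ ≤ k) : (Z) ^ (2 ^ k) = 1 := by
  have h : 2 ^ k = 2 ^ ℓ * 2 ^ (k - ℓ) := by rw [← pow_add]; congr 1; omega
  rw [h, pow_mul, rel3, one_pow]

lemma pX2 (k : ℕ) (hk : n ≤ k + 1) : ((X) ^ 2) ^ (2 ^ k) = 1 := by
  rw [← pow_mul, show 2 * 2 ^ k = 2 ^ (k + 1) by rw [pow_succ]; ring]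
  exact pXpow (k + 1) hk

lemma pY2 (k : ℕ) (hk : m ≤ k + 1) : ((Y) ^ 2) ^ (2 ^ k) = 1 := by
  rw [← pow_mul, show 2 * 2 ^ k = 2 ^ (k + 1) by rw [pow_succ]; ring]
  exact pYpow (k + 1) hk

lemma sqXY : ((X) * (Y)) ^ 2 = (X) ^ 2 * (Y) ^ 2 * (Z)⁻¹ := by
  calc (X * Y) ^ 2 = X * (Y * X) * Y := by rw [pow_two]; group
    _ = X * (X * Y * Z) * Y := by rw [hYX]
    _ = X * X * Y * (Z ^ (1:ℤ) * Y) := by group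
    _ = X * X * Y * (Y * Z ^ (-1:ℤ)) := by rw [hZkY]
    _ = X ^ 2 * Y ^ 2 * Z⁻¹ := by rw [pow_two X, pow_two Y]; group

lemma powXY (k : ℕ) :
    ((X) * (Y)) ^ (2 ^ (k + 1)) = ((X) ^ 2) ^ (2 ^ k) * ((Y) ^ 2) ^ (2 ^ k) * ((Z) ^ (2 ^ k))⁻¹ := by
  have h1 : ((X) * (Y)) ^ (2 ^ (k + 1)) = (((X) * (Y)) ^ 2) ^ (2 ^ k) := by
    rw [← pow_mul, show 2 * 2 ^ k = 2 ^ (k + 1) by rw [pow_succ]; ring]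
  have c2 : Commute ((X) ^ 2 * (Y) ^ 2) ((Z)⁻¹) := (Commute.mul_left cC cF).inv_right
  rw [h1, sqXY, Commute.mul_pow c2, Commute.mul_pow cB, inv_pow]

lemma genpow (hl : 2 ≤ ℓ) (hml : ℓ < m) (hnm : m < n) :
    ∀ s ∈ SetS (n := n) (m := m) (ℓ := ℓ), s ^ (2 ^ n) = 1 := by
  intro s hs
  simp only [SetS, Set.mem_insert_iff, Set.mem_singleton_iff] at hs
  rcases hs with rfl | rfl | rfl | rfl
  · exact pX2 n (by omega)
  · obtain ⟨n', rfl⟩ : ∃ n', n = n' + 1 := ⟨n - 1, by omega⟩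
    rw [powXY n', pX2 n' (by omega), pY2 n' (by omega), pZpow n' (by omega), inv_one,
      mul_one, mul_one]
  · exact pY2 n (by omega)
  · exact pZpow n (by omega)

lemma comm_closure : ∀ u ∈ Subgroup.closure (SetS (n := n) (m := m) (ℓ := ℓ)),
    ∀ v ∈ Subgroup.closure (SetS (n := n) (m := m) (ℓ := ℓ)), Commute u v := by
  intro u hu v hv
  induction hu, hv using Subgroup.closure_induction₂ with
  | mem x y hx hy => exact scomm x hx y hy
  | one_left x hx => exact Commute.one_left x
  | one_right x hx => exact Commute.one_right x
  | mul_left x y z hx hy hz h1 h2 => exact Commute.mul_left h1 h2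
  | mul_right y z x hy hz hx h1 h2 => exact Commute.mul_right h1 h2
  | inv_left x y hx hy h => exact h.inv_left
  | inv_right x y hx hy h => exact h.inv_right

lemma allpow (hl : 2 ≤ ℓ) (hml : ℓ < m) (hnm : m < n) :
    ∀ u ∈ Subgroup.closure (SetS (n := n) (m := m) (ℓ := ℓ)), u ^ (2 ^ n) = 1 := by
  intro u hu
  induction hu using Subgroup.closure_induction with
  | mem x hx => exact genpow hl hml hnm x hx
  | one => exact one_pow _
  | mul x y hx hy ihx ihy =>
      rw [Commute.mul_pow (comm_closure x hx y hy), ihx, ihy, mul_one]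
  | inv x hx ihx => rw [inv_pow, ihx, inv_one]

lemma exp_eq (hl : 2 ≤ ℓ) (hml : ℓ < m) (hnm : m < n) :
    Monoid.exponent ↥(Subgroup.closure (SetS (n := n) (m := m) (ℓ := ℓ))) = 2 ^ n := by
  apply Nat.dvd_antisymm
  · apply Monoid.exponent_dvd_of_forall_pow_eq_one
    intro g
    apply Subtype.ext
    rw [SubgroupClass.coe_pow, OneMemClass.coe_one]
    exact allpow hl hml hnm g.1 g.2
  · haveI : Fact (Nat.Prime 2) := ⟨Nat.prime_two⟩
    set w : ↥(Subgroup.closure (SetS (n := n) (m := m) (ℓ := ℓ))) :=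
      ⟨X * Y, Subgroup.subset_closure memS2⟩ with hw
    have hord : orderOf w = 2 ^ ((n - 1) + 1) := by
      apply orderOf_eq_prime_pow
      · intro hone
        have h1 : ((X) * (Y)) ^ (2 ^ (n - 1)) = 1 := by
          have h := congrArg Subtype.val hone
          rw [SubgroupClass.coe_pow, OneMemClass.coe_one] at h
          exact h
        rw [show n - 1 = (n - 2) + 1 by omega, powXY (n - 2), pY2 (n - 2) (by omega),
          pZpow (n - 2) (by omega), inv_one, mul_one, mul_one] at h1
        have h2 : (X) ^ (2 ^ (n - 2 + 1)) = 1 := by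
          rw [show (2:ℕ) ^ (n - 2 + 1) = 2 * 2 ^ (n - 2) by rw [pow_succ]; ring, pow_mul]
          exact h1
        have hdvd : ¬ ((2:ℕ) ^ n ∣ 2 ^ (n - 2 + 1)) := by
          intro hdl
          have hle := Nat.le_of_dvd (by positivity) hdl
          have hlt : (2:ℕ) ^ (n - 2 + 1) < 2 ^ n := Nat.pow_lt_pow_right (by norm_num) (by omega)
          omega
        exact xpow_ne_one _ hdvd h2
      · apply Subtype.ext
        rw [SubgroupClass.coe_pow, OneMemClass.coe_one, show n - 1 + 1 = n by omega]
        exact allpow hl hml hnm (X * Y) (Subgroup.subset_closure memS2)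
    have hn2 : (2:ℕ) ^ n = 2 ^ ((n - 1) + 1) := by congr 1; omega
    rw [hn2, ← hord]
    exact Monoid.order_dvd_exponent w

end S5

/-- For n > m > ℓ ≥ 2, the centralizer of the derived subgroup of G = G_⚀
is abelian, generated by x², xy, y², z, and has exponent 2^n. -/
theorem stmt5 (n m ℓ : ℕ) (hℓ : 2 ≤ ℓ) (hmℓ : ℓ < m) (hnm : m < n) :
    Subgroup.centralizer ((commutator (G1 n m ℓ) : Subgroup (G1 n m ℓ)) : Set (G1 n m ℓ)) =
      Subgroup.closure {(PresentedGroup.of 0 : G1 n m ℓ) ^ 2,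
        PresentedGroup.of 0 * PresentedGroup.of 1,
        (PresentedGroup.of 1 : G1 n m ℓ) ^ 2, PresentedGroup.of 2} ∧
    (∀ u ∈ Subgroup.centralizer ((commutator (G1 n m ℓ) : Subgroup (G1 n m ℓ)) : Set (G1 n m ℓ)),
      ∀ v ∈ Subgroup.centralizer ((commutator (G1 n m ℓ) : Subgroup (G1 n m ℓ)) : Set (G1 n m ℓ)),
        u * v = v * u) ∧
    Monoid.exponent
      (Subgroup.centralizer ((commutator (G1 n m ℓ) : Subgroup (G1 n m ℓ)) : Set (G1 n m ℓ))) =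
      2 ^ n := by
  have hC := S5.cent_eq (n := n) (m := m) (ℓ := ℓ) hℓ hmℓ hnm
  refine ⟨hC, ?_, ?_⟩
  · intro u hu v hv
    rw [hC] at hu hv
    exact S5.comm_closure u hu v hv
  · rw [hC]
    exact S5.exp_eq hℓ hmℓ hnm
end

section
/- Let n ≥ m > ℓ ≥ 2 and let F be a field of characteristic 2. Then the group algebras FG and FH are isomorphic as F-algebras, where G = ⟨x, y, z | x^{2^n} = 1, y^{2^m} = 1, z^{2^ℓ} = 1, [y,x] = z, [z,x] = z^{-2}, [z,y] = z^{-2}⟩ and H = ⟨a, b, c | a^{2^n} = 1, b^{2^m} = a^{2^m}, c^{2^ℓ} = 1, [b,a] = c, [c,a] = c^{-2}, [c,b] = c^{-2}⟩. An isomorphism is induced by x ↦ a, y ↦ b + a + 1. -/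
set_option linter.unusedSectionVars false
set_option linter.unusedVariables false
set_option maxHeartbeats 2000000

open FreeGroup in
/-- Relators of H = ⟨a,b,c | a^{2^n}=1, b^{2^m}=a^{2^m}, c^{2^ℓ}=1, [b,a]=c, [c,a]=c⁻²,
[c,b]=c⁻²⟩ (generators 0 ↦ a, 1 ↦ b, 2 ↦ c). -/
def relsH2 (n m ℓ : ℕ) : Set (FreeGroup (Fin 3)) :=
  { (of 0) ^ (2 ^ n), (of 1) ^ (2 ^ m) * ((of 0) ^ (2 ^ m))⁻¹, (of 2) ^ (2 ^ ℓ),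
    (of 1)⁻¹ * (of 0)⁻¹ * of 1 * of 0 * (of 2)⁻¹,
    (of 2)⁻¹ * (of 0)⁻¹ * of 2 * of 0 * (of 2) ^ 2,
    (of 2)⁻¹ * (of 1)⁻¹ * of 2 * of 1 * (of 2) ^ 2 }

abbrev H2 (n m ℓ : ℕ) := PresentedGroup (relsH2 n m ℓ)

section UnitRels
variable {Γ : Type*} [Group Γ] (A U : Γ)

lemma rel5u (h : (A*A) * U = U * (A*A)) :
    (U⁻¹*A⁻¹*U*A)⁻¹ * A⁻¹ * (U⁻¹*A⁻¹*U*A) * A * (U⁻¹*A⁻¹*U*A)^2 = 1 := by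
  set D := U⁻¹*A⁻¹*U*A with hD
  have hDA : A⁻¹*D*A = D⁻¹ := by
    have e1 : A⁻¹*D*A = A⁻¹*U⁻¹*A⁻¹*(U*(A*A)) := by rw [hD]; group
    rw [e1, ← h, hD]; group
  calc D⁻¹ * A⁻¹ * D * A * D^2 = D⁻¹ * (A⁻¹*D*A) * D^2 := by group
  _ = D⁻¹ * D⁻¹ * D^2 := by rw [hDA]
  _ = 1 := by group

lemma rel6u (h : A * (U*U) = (U*U) * A) :
    (U⁻¹*A⁻¹*U*A)⁻¹ * U⁻¹ * (U⁻¹*A⁻¹*U*A) * U * (U⁻¹*A⁻¹*U*A)^2 = 1 := by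
  set D := U⁻¹*A⁻¹*U*A with hD
  have h' : A⁻¹ * (U*U) = (U*U) * A⁻¹ := by
    have := (Commute.inv_left (h : Commute A (U*U)) : Commute A⁻¹ (U*U))
    exact this
  have key : U⁻¹*A⁻¹*U = U*A⁻¹*U⁻¹ := by
    calc U⁻¹*A⁻¹*U = U⁻¹*(A⁻¹*(U*U))*U⁻¹ := by group
    _ = U⁻¹*((U*U)*A⁻¹)*U⁻¹ := by rw [h']
    _ = U*A⁻¹*U⁻¹ := by group
  have hDU : U⁻¹*D*U = D⁻¹ := by
    calc U⁻¹*D*U = U⁻¹*(U⁻¹*A⁻¹*U)*(A*U) := by rw [hD]; group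
    _ = U⁻¹*(U*A⁻¹*U⁻¹)*(A*U) := by rw [key]
    _ = D⁻¹ := by rw [hD]; group
  calc D⁻¹ * U⁻¹ * D * U * D^2 = D⁻¹ * (U⁻¹*D*U) * D^2 := by group
  _ = D⁻¹ * D⁻¹ * D^2 := by rw [hDU]
  _ = 1 := by group

end UnitRels
section GroupLemmas
variable {K : Type*} [Group K] {a b c : K}
  (h1 : b⁻¹ * a⁻¹ * b * a = c)
  (h2 : a⁻¹ * c * a = c⁻¹)
  (h3 : b⁻¹ * c * b = c⁻¹)

include h1 in
lemma gba : b * a = a * (b * c) := by rw [← h1]; group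

include h2 in
lemma gca : c * a = a * c⁻¹ := by
  calc c * a = a * (a⁻¹ * c * a) := by group
  _ = a * c⁻¹ := by rw [h2]

include h2 in
lemma gc'a : c⁻¹ * a = a * c := by
  have h2' : a⁻¹ * c⁻¹ * a = c := by
    rw [show a⁻¹*c⁻¹*a = (a⁻¹*c*a)⁻¹ by group, h2, inv_inv]
  calc c⁻¹ * a = a * (a⁻¹ * c⁻¹ * a) := by group
  _ = a * c := by rw [h2']

include h3 in
lemma gcb : c * b = b * c⁻¹ := by
  calc c * b = b * (b⁻¹ * c * b) := by group
  _ = b * c⁻¹ := by rw [h3]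

include h3 in
lemma gc'b : c⁻¹ * b = b * c := by
  have h3' : b⁻¹ * c⁻¹ * b = c := by
    rw [show b⁻¹*c⁻¹*b = (b⁻¹*c*b)⁻¹ by group, h3, inv_inv]
  calc c⁻¹ * b = b * (b⁻¹ * c⁻¹ * b) := by group
  _ = b * c := by rw [h3']

include h1 h2 in
lemma ga2b : Commute (a*a) b := by
  show (a*a)*b = b*(a*a)
  rw [show b*(a*a) = (b*a)*a by group, gba h1,
    show (a*(b*c))*a = a*(b*(c*a)) by group, gca h2,
    show a*(b*(a*c⁻¹)) = a*((b*a)*c⁻¹) by group, gba h1]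
  group

include h1 h3 in
lemma gb2a : Commute (b*b) a := by
  show (b*b)*a = a*(b*b)
  rw [show (b*b)*a = b*(b*a) by group, gba h1,
    show b*(a*(b*c)) = (b*a)*(b*c) by group, gba h1,
    show (a*(b*c))*(b*c) = a*(b*((c*b)*c)) by group, gcb h3]
  group

include h2 in
lemma ga2c : Commute (a*a) c := by
  show (a*a)*c = c*(a*a)
  rw [show c*(a*a) = (c*a)*a by group, gca h2, show (a*c⁻¹)*a = a*(c⁻¹*a) by group,
    gc'a h2]
  group

include h3 in
lemma gb2c : Commute (b*b) c := by
  show (b*b)*c = c*(b*b)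
  rw [show c*(b*b) = (c*b)*b by group, gcb h3, show (b*c⁻¹)*b = b*(c⁻¹*b) by group,
    gc'b h3]
  group

include h2 h3 in
lemma gcab : Commute c (a*b) := by
  show c*(a*b) = (a*b)*c
  rw [show c*(a*b) = (c*a)*b by group, gca h2, show (a*c⁻¹)*b = a*(c⁻¹*b) by group,
    gc'b h3]
  group

include h1 in
lemma gconj : a⁻¹ * (b * a) = b * c := by rw [gba h1]; group

end GroupLemmas

section Master
variable (F : Type*) [Field F] [CharP F 2] {K : Type*} [Group K]

local notation "e" => MonoidAlgebra.of F K
local notation "ê" => MonoidHom.toHomUnits (MonoidAlgebra.of F K)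

instance : CharP (MonoidAlgebra F K) 2 := charP_of_injective_algebraMap' F 2

lemma addself (x : MonoidAlgebra F K) : x + x = 0 := CharTwo.add_self_eq_zero x

lemma master (m ℓ : ℕ) (hm : 2 ≤ m) (hlm : ℓ < m) (a b c γ : K)
    (h1 : b⁻¹ * a⁻¹ * b * a = c) (h2 : a⁻¹ * c * a = c⁻¹) (h3 : b⁻¹ * c * b = c⁻¹)
    (hc : c ^ (2^ℓ) = 1)
    (hγa : Commute γ a) (hγb : Commute γ b) (hγc : Commute γ c)
    (hγval : 1 + e (a^(2^m)) + e (b^(2^m)) = e γ) :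
    ∃ U : (MonoidAlgebra F K)ˣ, (U : MonoidAlgebra F K) = 1 + e a + e b ∧
      U ^ (2^m) = ê γ ∧
      (U⁻¹ * (ê a)⁻¹ * U * ê a) ^ (2^ℓ) = 1 ∧
      (ê a * ê a) * U = U * (ê a * ê a) ∧
      ê a * (U*U) = (U*U) * ê a := by
  haveI : Fact (Nat.Prime 2) := ⟨Nat.prime_two⟩
  set u : MonoidAlgebra F K := 1 + e a + e b with hu
  set t : MonoidAlgebra F K := 1 + e c with ht
  -- K-level commutes
  have ka2a : Commute (a*a) a := (Commute.refl a).mul_left (Commute.refl a)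
  have kb2b : Commute (b*b) b := (Commute.refl b).mul_left (Commute.refl b)
  have ka2b := ga2b h1 h2
  have kb2a := gb2a h1 h3
  have ka2c := ga2c h2
  have kb2c := gb2c h3
  have kcab := gcab h2 h3
  -- R-level commutes with u
  have cA2u : Commute (e (a*a)) u := by
    rw [hu]
    exact ((Commute.one_right _).add_right (ka2a.map e)).add_right (ka2b.map e)
  have cγ'u : Commute (e γ⁻¹) u := by
    rw [hu]
    exact ((Commute.one_right _).add_right (hγa.inv_left.map e)).add_right
      (hγb.inv_left.map e)
  -- swap lemmas
  have SWa : t * e a = e a * (e c⁻¹ * t) := by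
    rw [ht]
    simp only [mul_add, add_mul, one_mul, mul_one, ← map_mul, gca h2, inv_mul_cancel, map_one]
    abel
  have SWb : t * e b = e b * (e c⁻¹ * t) := by
    rw [ht]
    simp only [mul_add, add_mul, one_mul, mul_one, ← map_mul, gcb h3, inv_mul_cancel, map_one]
    abel
  have SWc : t * e c = e c * t := by
    rw [ht]; simp only [mul_add, add_mul, one_mul, mul_one]
  have SWγ' : t * e γ⁻¹ = e γ⁻¹ * t := by
    rw [ht]
    simp only [mul_add, add_mul, one_mul, mul_one, ← map_mul, (hγc.inv_left.eq).symm]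
  -- the square of u
  set z0 : MonoidAlgebra F K := 1 + e (a*a) + e (b*b) with hz0
  set P : MonoidAlgebra F K := e a * (e b * t) with hP
  have L1 : u * u = z0 + P := by
    rw [hu, hz0, hP, ht]
    simp only [mul_add, add_mul, one_mul, mul_one, ← map_mul, gba h1]
    abel_nf
    simp [CharTwo.two_eq_zero, addself F]
  have cbta : (e b * t) * e a = e a * (e b * t) := by
    calc (e b * t) * e a = e b * (t * e a) := by rw [mul_assoc]
    _ = e b * (e a * (e c⁻¹ * t)) := by rw [SWa]
    _ = e (a*(b*c)) * (e c⁻¹ * t) := by rw [← mul_assoc, ← map_mul, gba h1]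
    _ = e ((a*(b*c))*c⁻¹) * t := by rw [← mul_assoc, ← map_mul]
    _ = e (a*b) * t := by rw [show (a*(b*c))*c⁻¹ = a*b by group]
    _ = e a * (e b * t) := by rw [map_mul, mul_assoc]
  have cAuu : e a * (u*u) = (u*u) * e a := by
    rw [L1, hz0, hP]
    have hx : Commute (e a) (e a * (e b * t)) := (Commute.refl (e a)).mul_right cbta.symm
    exact ((((Commute.one_right (e a)).add_right (ka2a.symm.map e)).add_right
      (kb2a.symm.map e)).add_right hx).eq
  -- nilpotence of t
  have htl : t ^ (2^ℓ) = 0 := by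
    rw [ht, add_pow_char_pow_of_commute 2 ℓ (Commute.one_left (e c)), one_pow, ← map_pow, hc,
      map_one]
    exact addself F 1
  -- u^4
  have ca2ab : Commute (a*a) (a*b) := ka2a.mul_right ka2b
  have cb2ab : Commute (b*b) (a*b) := kb2a.mul_right kb2b
  have cz0P : Commute z0 P := by
    rw [hz0, hP, ht]
    have base : ∀ x : K, Commute x a → Commute x b → Commute x c →
        Commute (e x) (e a * (e b * (1 + e c))) := by
      intro x hxa hxb hxc
      exact (hxa.map e).mul_right ((hxb.map e).mul_right
        ((Commute.one_right _).add_right (hxc.map e)))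
    exact ((Commute.one_left _).add_left (base (a*a) ka2a ka2b ka2c)).add_left
      (base (b*b) kb2a kb2b kb2c)
  have hPP : P * P = e ((a*b)*(a*b)) * (t*t) := by
    have hPab : P = e (a*b) * t := by rw [hP, map_mul, mul_assoc]
    have ctab : t * e (a*b) = e (a*b) * t := by
      rw [ht]
      exact ((Commute.one_left _).add_left (kcab.map e)).eq
    rw [hPab]
    calc (e (a*b) * t) * (e (a*b) * t) = e (a*b) * (t * e (a*b)) * t := by noncomm_ring
    _ = e (a*b) * (e (a*b) * t) * t := by rw [ctab]
    _ = (e (a*b) * e (a*b)) * (t*t) := by noncomm_ring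
    _ = e ((a*b)*(a*b)) * (t*t) := by rw [← map_mul]
  have hu4 : (u*u)*(u*u) = z0*z0 + e ((a*b)*(a*b)) * (t*t) := by
    rw [L1]
    calc (z0+P)*(z0+P) = z0*z0 + (z0*P + (P*z0 + P*P)) := by noncomm_ring
    _ = z0*z0 + (P*z0 + (P*z0 + P*P)) := by rw [cz0P.eq]
    _ = z0*z0 + ((P*z0 + P*z0) + P*P) := by rw [add_assoc]
    _ = z0*z0 + P*P := by rw [addself F, zero_add]
    _ = z0*z0 + e ((a*b)*(a*b)) * (t*t) := by rw [hPP]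
  have h4 : u ^ (2^m) = ((u*u)*(u*u)) ^ (2^(m-2)) := by
    have h44 : (2:ℕ)^m = 4 * 2^(m-2) := by
      rw [show (4:ℕ) = 2^2 from rfl, ← pow_add]
      congr 1
      omega
    rw [h44, pow_mul]
    congr 1
    rw [show (4:ℕ) = 2*2 from rfl, pow_mul, pow_two, pow_two]
  have e21 : (2:ℕ) * 2^(m-2) = 2^(m-1) := by
    rw [← pow_succ']
    congr 1
    omega
  have e22 : (2:ℕ) * 2^(m-1) = 2^m := by
    rw [← pow_succ']
    congr 1
    omega
  have cabab_c : Commute ((a*b)*(a*b)) c := (kcab.symm).mul_left (kcab.symm)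
  have ctq : Commute (e ((a*b)*(a*b))) (t*t) := by
    rw [ht]
    have hx : Commute (e ((a*b)*(a*b))) (1 + e c) :=
      (Commute.one_right _).add_right (cabab_c.map e)
    exact hx.mul_right hx
  have cz2Q : Commute (z0*z0) (e ((a*b)*(a*b)) * (t*t)) := by
    have h2' : Commute z0 (e ((a*b)*(a*b)) * (t*t)) := by
      rw [hz0, ht]
      have base : ∀ x : K, Commute x ((a*b)*(a*b)) → Commute x c →
          Commute (e x) (e ((a*b)*(a*b)) * ((1 + e c)*(1 + e c))) := by
        intro x hxab hxc
        have hc2 : Commute (e x) (1 + e c) := (Commute.one_right _).add_right (hxc.map e)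
        exact (hxab.map e).mul_right (hc2.mul_right hc2)
      exact ((Commute.one_left _).add_left
        (base (a*a) (ca2ab.mul_right ca2ab) ka2c)).add_left
        (base (b*b) (cb2ab.mul_right cb2ab) kb2c)
    exact h2'.mul_left h2'
  have httz : (t*t) ^ (2^(m-2)) = 0 := by
    have hh : (t*t)^(2^(m-2)) = t ^ (2^(m-1)) := by
      rw [← pow_two, ← pow_mul, e21]
    rw [hh, show (2:ℕ)^(m-1) = 2^ℓ + (2^(m-1) - 2^ℓ) from
      (Nat.add_sub_cancel' (Nat.pow_le_pow_right (by norm_num) (by omega))).symm,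
      pow_add, htl, zero_mul]
  have hz0pow : (z0*z0) ^ (2^(m-2)) = 1 + e (a^(2^m)) + e (b^(2^m)) := by
    have hzz : (z0*z0)^(2^(m-2)) = z0 ^ (2^(m-1)) := by
      rw [← pow_two, ← pow_mul, e21]
    have c1 : Commute (1 + e (a*a)) (e (b*b)) :=
      (Commute.one_left _).add_left ((ka2b.mul_right ka2b).map e)
    have ea2 : (a*a)^(2^(m-1)) = a^(2^m) := by
      rw [← pow_two, ← pow_mul, e22]
    have eb2 : (b*b)^(2^(m-1)) = b^(2^m) := by
      rw [← pow_two, ← pow_mul, e22]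
    rw [hzz, hz0, add_pow_char_pow_of_commute 2 (m-1) c1,
      add_pow_char_pow_of_commute 2 (m-1) (Commute.one_left (e (a*a))), one_pow, ← map_pow,
      ← map_pow, ea2, eb2]
  have L2 : u ^ (2^m) = 1 + e (a^(2^m)) + e (b^(2^m)) := by
    rw [h4, hu4, add_pow_char_pow_of_commute 2 (m-2) cz2Q]
    have hQ : (e ((a*b)*(a*b)) * (t*t)) ^ (2^(m-2)) = 0 := by
      rw [ctq.mul_pow, httz, mul_zero]
    rw [hQ, add_zero, hz0pow]
  have Luγ : u ^ (2^m) = e γ := by rw [L2, hγval]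
  -- the unit U
  have hpow1 : u * u ^ (2^m - 1) = u ^ (2^m) := by
    rw [← pow_succ']
    congr 1
    exact Nat.sub_add_cancel Nat.one_le_two_pow
  have hpow2 : u ^ (2^m - 1) * u = u ^ (2^m) := by
    rw [← pow_succ]
    congr 1
    exact Nat.sub_add_cancel Nat.one_le_two_pow
  have hγ'γ : e γ⁻¹ * e γ = 1 := by rw [← map_mul, inv_mul_cancel, map_one]
  have hval_inv : u * (e γ⁻¹ * u ^ (2^m - 1)) = 1 := by
    rw [← mul_assoc, ← cγ'u.eq, mul_assoc, hpow1, Luγ, hγ'γ]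
  have hinv_val : (e γ⁻¹ * u ^ (2^m - 1)) * u = 1 := by
    rw [mul_assoc, hpow2, Luγ, hγ'γ]
  set Uu : (MonoidAlgebra F K)ˣ := ⟨u, e γ⁻¹ * u ^ (2^m - 1), hval_inv, hinv_val⟩ with hUu
  refine ⟨Uu, rfl, ?_, ?_, ?_, ?_⟩
  · exact Units.ext (by
      rw [Units.val_pow_eq_pow_val]
      exact Luγ.trans (MonoidHom.coe_toHomUnits _ _).symm)
  · -- D ^ 2^ℓ = 1
    have hw : ((Uu⁻¹ : (MonoidAlgebra F K)ˣ) : MonoidAlgebra F K) = e γ⁻¹ * u ^ (2^m - 1) := rfl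
    have hwu : ((Uu⁻¹ : (MonoidAlgebra F K)ˣ) : MonoidAlgebra F K) * u = 1 := by
      rw [hw]; exact hinv_val
    have conj : e a⁻¹ * (u * e a) = u + e b * t := by
      rw [hu, ht]
      simp only [mul_add, add_mul, one_mul, mul_one, ← map_mul, inv_mul_cancel,
        inv_mul_cancel_left, gconj h1, map_one]
      abel_nf
      simp [CharTwo.two_eq_zero, addself F]
    have hea : ((ê a)⁻¹ : (MonoidAlgebra F K)ˣ) = ê a⁻¹ := (map_inv ê a).symm
    have Dval : ((Uu⁻¹ * (ê a)⁻¹ * Uu * ê a : (MonoidAlgebra F K)ˣ) : MonoidAlgebra F K)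
        = 1 + (((Uu⁻¹ : (MonoidAlgebra F K)ˣ) : MonoidAlgebra F K) * e b) * t := by
      rw [hea]
      simp only [Units.val_mul, MonoidHom.coe_toHomUnits]
      calc ((Uu⁻¹ : (MonoidAlgebra F K)ˣ) : MonoidAlgebra F K) * e a⁻¹ * u * e a
          = ↑Uu⁻¹ * (e a⁻¹ * (u * e a)) := by noncomm_ring
      _ = ↑Uu⁻¹ * (u + e b * t) := by rw [conj]
      _ = ↑Uu⁻¹ * u + (↑Uu⁻¹ * e b) * t := by noncomm_ring
      _ = 1 + ((Uu⁻¹ : (MonoidAlgebra F K)ˣ) : MonoidAlgebra F K) * e b * t := by rw [hwu]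
    have hamem : e a ∈ ({e a, e b, e c, e γ⁻¹} : Set (MonoidAlgebra F K)) :=
      Set.mem_insert _ _
    have hbmem : e b ∈ ({e a, e b, e c, e γ⁻¹} : Set (MonoidAlgebra F K)) :=
      Set.mem_insert_of_mem _ (Set.mem_insert _ _)
    have hcmem : e c ∈ ({e a, e b, e c, e γ⁻¹} : Set (MonoidAlgebra F K)) :=
      Set.mem_insert_of_mem _ (Set.mem_insert_of_mem _ (Set.mem_insert _ _))
    have hgmem : e γ⁻¹ ∈ ({e a, e b, e c, e γ⁻¹} : Set (MonoidAlgebra F K)) :=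
      Set.mem_insert_of_mem _ (Set.mem_insert_of_mem _ (Set.mem_insert_of_mem _ rfl))
    have hcinv : e c⁻¹ ∈ Algebra.adjoin F {e a, e b, e c, e γ⁻¹} := by
      have h5 : c ^ (2^ℓ - 1) * c = 1 := by
        rw [← pow_succ, Nat.sub_add_cancel Nat.one_le_two_pow, hc]
      have h6 : c⁻¹ = c ^ (2^ℓ - 1) := (eq_inv_of_mul_eq_one_left h5).symm
      rw [h6, map_pow]
      exact pow_mem (Algebra.subset_adjoin hcmem) _
    have swap : ∀ f ∈ Algebra.adjoin F {e a, e b, e c, e γ⁻¹},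
        ∃ g ∈ Algebra.adjoin F {e a, e b, e c, e γ⁻¹}, t * f = g * t := by
      intro f hf
      induction hf using Algebra.adjoin_induction with
      | mem x hx =>
        simp only [Set.mem_insert_iff, Set.mem_singleton_iff] at hx
        rcases hx with rfl | rfl | rfl | rfl
        · exact ⟨e a * e c⁻¹, mul_mem (Algebra.subset_adjoin hamem) hcinv,
            by rw [SWa, mul_assoc]⟩
        · exact ⟨e b * e c⁻¹, mul_mem (Algebra.subset_adjoin hbmem) hcinv,
            by rw [SWb, mul_assoc]⟩
        · exact ⟨e c, Algebra.subset_adjoin hcmem, SWc⟩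
        · exact ⟨e γ⁻¹, Algebra.subset_adjoin hgmem, SWγ'⟩
      | algebraMap r =>
        exact ⟨algebraMap F _ r, Subalgebra.algebraMap_mem _ r, (Algebra.commutes r t).symm⟩
      | add x y hx hy ihx ihy =>
        obtain ⟨g1, hg1, he1⟩ := ihx
        obtain ⟨g2, hg2, he2⟩ := ihy
        exact ⟨g1 + g2, add_mem hg1 hg2, by rw [mul_add, he1, he2, add_mul]⟩
      | mul x y hx hy ihx ihy =>
        obtain ⟨g1, hg1, he1⟩ := ihx
        obtain ⟨g2, hg2, he2⟩ := ihy
        exact ⟨g1 * g2, mul_mem hg1 hg2, by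
          rw [← mul_assoc, he1, mul_assoc, he2, ← mul_assoc]⟩
    have powNil : ∀ (k : ℕ) (f : MonoidAlgebra F K),
        f ∈ Algebra.adjoin F {e a, e b, e c, e γ⁻¹} →
        ∃ g ∈ Algebra.adjoin F {e a, e b, e c, e γ⁻¹}, (f*t)^k = g * t^k := by
      intro k
      induction k with
      | zero => exact fun f hf => ⟨1, one_mem _, by simp⟩
      | succ k ih =>
        intro f hf
        obtain ⟨g, hg, hgeq⟩ := ih f hf
        obtain ⟨g', hg', hsw⟩ := swap g hg
        refine ⟨f * g', mul_mem hf hg', ?_⟩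
        calc (f*t)^(k+1) = (f*t)*(f*t)^k := pow_succ' _ _
        _ = (f*t)*(g*t^k) := by rw [hgeq]
        _ = f*((t*g)*t^k) := by noncomm_ring
        _ = f*((g'*t)*t^k) := by rw [hsw]
        _ = (f*g')*t^(k+1) := by rw [pow_succ' t k]; noncomm_ring
    have humem : u ∈ Algebra.adjoin F {e a, e b, e c, e γ⁻¹} := by
      rw [hu]
      exact add_mem (add_mem (one_mem _) (Algebra.subset_adjoin hamem))
        (Algebra.subset_adjoin hbmem)
    have hwmem : ((Uu⁻¹ : (MonoidAlgebra F K)ˣ) : MonoidAlgebra F K)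
        ∈ Algebra.adjoin F {e a, e b, e c, e γ⁻¹} := by
      rw [hw]
      exact mul_mem (Algebra.subset_adjoin hgmem) (pow_mem humem _)
    have hrnil : ((((Uu⁻¹ : (MonoidAlgebra F K)ˣ) : MonoidAlgebra F K) * e b) * t)^(2^ℓ) = 0 := by
      obtain ⟨g, hg, hgeq⟩ := powNil (2^ℓ) _ (mul_mem hwmem (Algebra.subset_adjoin hbmem))
      rw [hgeq, htl, mul_zero]
    refine Units.ext ?_
    rw [Units.val_pow_eq_pow_val, Dval,
      add_pow_char_pow_of_commute 2 ℓ (Commute.one_left _), one_pow, hrnil, add_zero,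
      Units.val_one]
  · exact Units.ext (by
      simp only [Units.val_mul, MonoidHom.coe_toHomUnits]
      show (e a * e a) * u = u * (e a * e a)
      rw [← map_mul]
      exact cA2u.eq)
  · exact Units.ext (by
      simp only [Units.val_mul, MonoidHom.coe_toHomUnits]
      exact cAuu)
end Master

section PresentedHelpers

lemma presented_rel {α : Type*} (rels : Set (FreeGroup α)) {r : FreeGroup α} (h : r ∈ rels) :
    (QuotientGroup.mk' (Subgroup.normalClosure rels)) r = 1 :=
  (QuotientGroup.eq_one_iff r).mpr (Subgroup.subset_normalClosure h)

lemma mk'_of {α : Type*} {rels : Set (FreeGroup α)} (x : α) :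
    QuotientGroup.mk' (Subgroup.normalClosure rels) (FreeGroup.of x) = PresentedGroup.of x := rfl

lemma monoidHom_ext_presented {α : Type*} {rels : Set (FreeGroup α)} {M : Type*} [Monoid M]
    (f g : PresentedGroup rels →* M) (h : ∀ x, f (.of x) = g (.of x)) : f = g := by
  have key : f.toHomUnits = g.toHomUnits :=
    PresentedGroup.ext (fun x => Units.ext (by simpa using h x))
  ext y
  have := congrArg Units.val (DFunLike.congr_fun key y)
  simpa using this

lemma relsH2_props (n m ℓ : ℕ) :
    (PresentedGroup.of 0 : H2 n m ℓ)^(2^n) = 1 ∧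
    (PresentedGroup.of 1 : H2 n m ℓ)^(2^m) = (PresentedGroup.of 0 : H2 n m ℓ)^(2^m) ∧
    (PresentedGroup.of 2 : H2 n m ℓ)^(2^ℓ) = 1 ∧
    (PresentedGroup.of 1 : H2 n m ℓ)⁻¹ * (PresentedGroup.of 0)⁻¹ * PresentedGroup.of 1 *
      PresentedGroup.of 0 = PresentedGroup.of 2 ∧
    (PresentedGroup.of 0 : H2 n m ℓ)⁻¹ * PresentedGroup.of 2 * PresentedGroup.of 0 =
      (PresentedGroup.of 2)⁻¹ ∧
    (PresentedGroup.of 1 : H2 n m ℓ)⁻¹ * PresentedGroup.of 2 * PresentedGroup.of 1 =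
      (PresentedGroup.of 2)⁻¹ := by
  have key : ∀ r ∈ relsH2 n m ℓ,
      (QuotientGroup.mk' (Subgroup.normalClosure (relsH2 n m ℓ))) r = 1 :=
    fun r hr => presented_rel _ hr
  have k1 := key _ (Set.mem_insert _ _)
  have k2 := key _ (Set.mem_insert_of_mem _ (Set.mem_insert _ _))
  have k3 := key _ (Set.mem_insert_of_mem _ (Set.mem_insert_of_mem _ (Set.mem_insert _ _)))
  have k4 := key _ (Set.mem_insert_of_mem _ (Set.mem_insert_of_mem _ (Set.mem_insert_of_mem _
    (Set.mem_insert _ _))))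
  have k5 := key _ (Set.mem_insert_of_mem _ (Set.mem_insert_of_mem _ (Set.mem_insert_of_mem _
    (Set.mem_insert_of_mem _ (Set.mem_insert _ _)))))
  have k6 := key _ (Set.mem_insert_of_mem _ (Set.mem_insert_of_mem _ (Set.mem_insert_of_mem _
    (Set.mem_insert_of_mem _ (Set.mem_insert_of_mem _ rfl)))))
  simp only [map_mul, map_pow, map_inv, mk'_of] at k1 k2 k3 k4 k5 k6
  set a := (PresentedGroup.of 0 : H2 n m ℓ)
  set b := (PresentedGroup.of 1 : H2 n m ℓ)
  set c := (PresentedGroup.of 2 : H2 n m ℓ)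
  refine ⟨k1, mul_inv_eq_one.mp k2, k3, ?_, ?_, ?_⟩
  · calc b⁻¹*a⁻¹*b*a = (b⁻¹*a⁻¹*b*a*c⁻¹)*c := by group
    _ = c := by rw [show b⁻¹*a⁻¹*b*a*c⁻¹ = 1 from k4]; group
  · calc a⁻¹*c*a = c*(c⁻¹*a⁻¹*c*a*c^2)*c⁻¹*c⁻¹ := by group
    _ = c⁻¹ := by rw [show c⁻¹*a⁻¹*c*a*c^2 = 1 from k5]; group
  · calc b⁻¹*c*b = c*(c⁻¹*b⁻¹*c*b*c^2)*c⁻¹*c⁻¹ := by group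
    _ = c⁻¹ := by rw [show c⁻¹*b⁻¹*c*b*c^2 = 1 from k6]; group

lemma relsG1_props (n m ℓ : ℕ) :
    (PresentedGroup.of 0 : G1 n m ℓ)^(2^n) = 1 ∧
    (PresentedGroup.of 1 : G1 n m ℓ)^(2^m) = 1 ∧
    (PresentedGroup.of 2 : G1 n m ℓ)^(2^ℓ) = 1 ∧
    (PresentedGroup.of 1 : G1 n m ℓ)⁻¹ * (PresentedGroup.of 0)⁻¹ * PresentedGroup.of 1 *
      PresentedGroup.of 0 = PresentedGroup.of 2 ∧
    (PresentedGroup.of 0 : G1 n m ℓ)⁻¹ * PresentedGroup.of 2 * PresentedGroup.of 0 =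
      (PresentedGroup.of 2)⁻¹ ∧
    (PresentedGroup.of 1 : G1 n m ℓ)⁻¹ * PresentedGroup.of 2 * PresentedGroup.of 1 =
      (PresentedGroup.of 2)⁻¹ := by
  have key : ∀ r ∈ relsG1 n m ℓ,
      (QuotientGroup.mk' (Subgroup.normalClosure (relsG1 n m ℓ))) r = 1 :=
    fun r hr => presented_rel _ hr
  have k1 := key _ (Set.mem_insert _ _)
  have k2 := key _ (Set.mem_insert_of_mem _ (Set.mem_insert _ _))
  have k3 := key _ (Set.mem_insert_of_mem _ (Set.mem_insert_of_mem _ (Set.mem_insert _ _)))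
  have k4 := key _ (Set.mem_insert_of_mem _ (Set.mem_insert_of_mem _ (Set.mem_insert_of_mem _
    (Set.mem_insert _ _))))
  have k5 := key _ (Set.mem_insert_of_mem _ (Set.mem_insert_of_mem _ (Set.mem_insert_of_mem _
    (Set.mem_insert_of_mem _ (Set.mem_insert _ _)))))
  have k6 := key _ (Set.mem_insert_of_mem _ (Set.mem_insert_of_mem _ (Set.mem_insert_of_mem _
    (Set.mem_insert_of_mem _ (Set.mem_insert_of_mem _ rfl)))))
  simp only [map_mul, map_pow, map_inv, mk'_of] at k1 k2 k3 k4 k5 k6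
  set a := (PresentedGroup.of 0 : G1 n m ℓ)
  set b := (PresentedGroup.of 1 : G1 n m ℓ)
  set c := (PresentedGroup.of 2 : G1 n m ℓ)
  refine ⟨k1, k2, k3, ?_, ?_, ?_⟩
  · calc b⁻¹*a⁻¹*b*a = (b⁻¹*a⁻¹*b*a*c⁻¹)*c := by group
    _ = c := by rw [show b⁻¹*a⁻¹*b*a*c⁻¹ = 1 from k4]; group
  · calc a⁻¹*c*a = c*(c⁻¹*a⁻¹*c*a*c^2)*c⁻¹*c⁻¹ := by group
    _ = c⁻¹ := by rw [show c⁻¹*a⁻¹*c*a*c^2 = 1 from k5]; group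
  · calc b⁻¹*c*b = c*(c⁻¹*b⁻¹*c*b*c^2)*c⁻¹*c⁻¹ := by group
    _ = c⁻¹ := by rw [show c⁻¹*b⁻¹*c*b*c^2 = 1 from k6]; group

end PresentedHelpers

section MasterCor
variable (F : Type*) [Field F] [CharP F 2] {K : Type*} [Group K]

local notation "e" => MonoidAlgebra.of F K
local notation "ê" => MonoidHom.toHomUnits (MonoidAlgebra.of F K)

lemma master' (m ℓ : ℕ) (hm : 2 ≤ m) (hlm : ℓ < m) (a b c γ : K)
    (h1 : b⁻¹ * a⁻¹ * b * a = c) (h2 : a⁻¹ * c * a = c⁻¹) (h3 : b⁻¹ * c * b = c⁻¹)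
    (hc : c ^ (2^ℓ) = 1)
    (hγa : Commute γ a) (hγb : Commute γ b) (hγc : Commute γ c)
    (hγval : 1 + e (a^(2^m)) + e (b^(2^m)) = e γ)
    (n : ℕ) (han : a ^ (2^n) = 1) :
    ∃ U : (MonoidAlgebra F K)ˣ, (U : MonoidAlgebra F K) = 1 + e a + e b ∧
      (ê a) ^ (2^n) = 1 ∧
      U ^ (2^m) = ê γ ∧
      (U⁻¹ * (ê a)⁻¹ * U * ê a) ^ (2^ℓ) = 1 ∧
      (U⁻¹*(ê a)⁻¹*U*(ê a))⁻¹ * (ê a)⁻¹ * (U⁻¹*(ê a)⁻¹*U*(ê a)) * (ê a) *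
        (U⁻¹*(ê a)⁻¹*U*(ê a))^2 = 1 ∧
      (U⁻¹*(ê a)⁻¹*U*(ê a))⁻¹ * U⁻¹ * (U⁻¹*(ê a)⁻¹*U*(ê a)) * U *
        (U⁻¹*(ê a)⁻¹*U*(ê a))^2 = 1 := by
  obtain ⟨U, hval, hpow, hD, hA2, hAu2⟩ :=
    master F m ℓ hm hlm a b c γ h1 h2 h3 hc hγa hγb hγc hγval
  exact ⟨U, hval, by rw [← map_pow, han, map_one], hpow, hD,
    rel5u (ê a) U hA2, rel6u (ê a) U hAu2⟩

end MasterCor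

/-- For n ≥ m > ℓ ≥ 2 and F a field of characteristic 2, the group algebras
FG and FH (G = G_⚀, H = G_⚁) are isomorphic as F-algebras, via an isomorphism sending
x ↦ a and y ↦ b + a + 1. -/
theorem stmt7 (n m ℓ : ℕ) (hℓ : 2 ≤ ℓ) (hmℓ : ℓ < m) (hnm : m ≤ n)
    (F : Type*) [Field F] [CharP F 2] :
    ∃ φ : MonoidAlgebra F (G1 n m ℓ) ≃ₐ[F] MonoidAlgebra F (H2 n m ℓ),
      φ (MonoidAlgebra.of F (G1 n m ℓ) (PresentedGroup.of 0)) =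
        MonoidAlgebra.of F (H2 n m ℓ) (PresentedGroup.of 0) ∧
      φ (MonoidAlgebra.of F (G1 n m ℓ) (PresentedGroup.of 1)) =
        MonoidAlgebra.of F (H2 n m ℓ) (PresentedGroup.of 1) +
          MonoidAlgebra.of F (H2 n m ℓ) (PresentedGroup.of 0) + 1 := by
  obtain ⟨hGa, hGb, hGc, hG1r, hG2r, hG3r⟩ := relsG1_props n m ℓ
  obtain ⟨hHa, hHb, hHc, hH1r, hH2r, hH3r⟩ := relsH2_props n m ℓ
  set ag := (PresentedGroup.of 0 : G1 n m ℓ) with hag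
  set bg := (PresentedGroup.of 1 : G1 n m ℓ) with hbg
  set cg := (PresentedGroup.of 2 : G1 n m ℓ) with hcg
  set ah := (PresentedGroup.of 0 : H2 n m ℓ) with hah
  set bh := (PresentedGroup.of 1 : H2 n m ℓ) with hbh
  set ch := (PresentedGroup.of 2 : H2 n m ℓ) with hch
  -- master on the H side (γ = 1)
  have hγvalH : (1 : MonoidAlgebra F (H2 n m ℓ)) + MonoidAlgebra.of F (H2 n m ℓ) (ah^(2^m)) +
      MonoidAlgebra.of F (H2 n m ℓ) (bh^(2^m)) = MonoidAlgebra.of F (H2 n m ℓ) 1 := by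
    rw [hHb, map_one, add_assoc, addself F, add_zero]
  obtain ⟨U, hUval, hApowH, hU2m, hDpow, hrel5, hrel6⟩ :=
    master' F m ℓ (by omega) hmℓ ah bh ch 1 hH1r hH2r hH3r hHc
      (Commute.one_left _) (Commute.one_left _) (Commute.one_left _) hγvalH n hHa
  -- master on the G side (γ = x^{2^m})
  have e22 : (2:ℕ) * 2^(m-1) = 2^m := by
    rw [← pow_succ']
    congr 1
    omega
  have haa : (ag*ag)^(2^(m-1)) = ag^(2^m) := by rw [← pow_two, ← pow_mul, e22]
  have kγa : Commute (ag^(2^m)) ag := (Commute.refl ag).pow_left _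
  have kγb : Commute (ag^(2^m)) bg := haa ▸ (ga2b hG1r hG2r).pow_left (2^(m-1))
  have kγc : Commute (ag^(2^m)) cg := haa ▸ (ga2c hG2r).pow_left (2^(m-1))
  have hγvalG : (1:MonoidAlgebra F (G1 n m ℓ)) + MonoidAlgebra.of F (G1 n m ℓ) (ag^(2^m)) +
      MonoidAlgebra.of F (G1 n m ℓ) (bg^(2^m)) = MonoidAlgebra.of F (G1 n m ℓ) (ag^(2^m)) := by
    rw [hGb, map_one]
    calc (1:MonoidAlgebra F (G1 n m ℓ)) + MonoidAlgebra.of F (G1 n m ℓ) (ag^(2^m)) + 1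
        = MonoidAlgebra.of F (G1 n m ℓ) (ag^(2^m)) + (1+1) := by abel
    _ = MonoidAlgebra.of F (G1 n m ℓ) (ag^(2^m)) := by rw [addself F, add_zero]
  obtain ⟨V, hVval, hApowG, hV2m, hD'pow, hrel5', hrel6'⟩ :=
    master' F m ℓ (by omega) hmℓ ag bg cg (ag^(2^m)) hG1r hG2r hG3r hGc kγa kγb kγc hγvalG n hGa
  -- abbreviations for the units
  set AH := MonoidHom.toHomUnits (MonoidAlgebra.of F (H2 n m ℓ)) ah with hAH
  set DH := U⁻¹ * AH⁻¹ * U * AH with hDH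
  set AG := MonoidHom.toHomUnits (MonoidAlgebra.of F (G1 n m ℓ)) ag with hAG
  set DG := V⁻¹ * AG⁻¹ * V * AG with hDG
  -- relator checks for φ : FG → FH
  have hrelφ : ∀ r ∈ relsG1 n m ℓ, FreeGroup.lift (![AH, U, DH]) r = 1 := by
    intro r hr
    simp only [relsG1, Set.mem_insert_iff, Set.mem_singleton_iff] at hr
    rcases hr with rfl | rfl | rfl | rfl | rfl | rfl
    · simp only [map_pow, FreeGroup.lift_apply_of]
      show AH ^ (2^n) = 1
      exact hApowH
    · simp only [map_pow, FreeGroup.lift_apply_of]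
      show U ^ (2^m) = 1
      rw [hU2m, map_one]
    · simp only [map_pow, FreeGroup.lift_apply_of]
      show DH ^ (2^ℓ) = 1
      exact hDpow
    · simp only [map_mul, map_inv, FreeGroup.lift_apply_of]
      show DH * DH⁻¹ = 1
      exact mul_inv_cancel DH
    · simp only [map_mul, map_inv, map_pow, FreeGroup.lift_apply_of]
      show DH⁻¹ * AH⁻¹ * DH * AH * DH^2 = 1
      exact hrel5
    · simp only [map_mul, map_inv, map_pow, FreeGroup.lift_apply_of]
      show DH⁻¹ * U⁻¹ * DH * U * DH^2 = 1
      exact hrel6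
  -- relator checks for ψ : FH → FG
  have hrelψ : ∀ r ∈ relsH2 n m ℓ, FreeGroup.lift (![AG, V, DG]) r = 1 := by
    intro r hr
    simp only [relsH2, Set.mem_insert_iff, Set.mem_singleton_iff] at hr
    rcases hr with rfl | rfl | rfl | rfl | rfl | rfl
    · simp only [map_pow, FreeGroup.lift_apply_of]
      show AG ^ (2^n) = 1
      exact hApowG
    · simp only [map_mul, map_pow, map_inv, FreeGroup.lift_apply_of]
      show V^(2^m) * (AG^(2^m))⁻¹ = 1
      rw [hV2m, hAG, ← map_pow]
      exact mul_inv_cancel _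
    · simp only [map_pow, FreeGroup.lift_apply_of]
      show DG ^ (2^ℓ) = 1
      exact hD'pow
    · simp only [map_mul, map_inv, FreeGroup.lift_apply_of]
      show DG * DG⁻¹ = 1
      exact mul_inv_cancel DG
    · simp only [map_mul, map_inv, map_pow, FreeGroup.lift_apply_of]
      show DG⁻¹ * AG⁻¹ * DG * AG * DG^2 = 1
      exact hrel5'
    · simp only [map_mul, map_inv, map_pow, FreeGroup.lift_apply_of]
      show DG⁻¹ * V⁻¹ * DG * V * DG^2 = 1
      exact hrel6'
  -- the algebra homomorphisms
  set Φ' := PresentedGroup.toGroup hrelφ with hΦ'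
  set Ψ' := PresentedGroup.toGroup hrelψ with hΨ'
  set Φ := (MonoidAlgebra.lift F (MonoidAlgebra F (H2 n m ℓ)) (G1 n m ℓ))
    ((Units.coeHom (MonoidAlgebra F (H2 n m ℓ))).comp Φ') with hΦdef
  set Ψ := (MonoidAlgebra.lift F (MonoidAlgebra F (G1 n m ℓ)) (H2 n m ℓ))
    ((Units.coeHom (MonoidAlgebra F (G1 n m ℓ))).comp Ψ') with hΨdef
  have Φof : ∀ g : G1 n m ℓ, Φ (MonoidAlgebra.of F (G1 n m ℓ) g) =
      ((Φ' g : (MonoidAlgebra F (H2 n m ℓ))ˣ) : MonoidAlgebra F (H2 n m ℓ)) :=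
    fun g => MonoidAlgebra.lift_of _ _
  have Ψof : ∀ g : H2 n m ℓ, Ψ (MonoidAlgebra.of F (H2 n m ℓ) g) =
      ((Ψ' g : (MonoidAlgebra F (G1 n m ℓ))ˣ) : MonoidAlgebra F (G1 n m ℓ)) :=
    fun g => MonoidAlgebra.lift_of _ _
  have Φ'0 : Φ' ag = AH := PresentedGroup.toGroup.of hrelφ
  have Φ'1 : Φ' bg = U := PresentedGroup.toGroup.of hrelφ
  have Φ'2 : Φ' cg = DH := PresentedGroup.toGroup.of hrelφ
  have Ψ'0 : Ψ' ah = AG := PresentedGroup.toGroup.of hrelψ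
  have Ψ'1 : Ψ' bh = V := PresentedGroup.toGroup.of hrelψ
  have Ψ'2 : Ψ' ch = DG := PresentedGroup.toGroup.of hrelψ
  have Φ0 : Φ (MonoidAlgebra.of F (G1 n m ℓ) ag) = MonoidAlgebra.of F (H2 n m ℓ) ah :=
    (Φof ag).trans (by rw [Φ'0, hAH]; exact MonoidHom.coe_toHomUnits _ _)
  have Φ1 : Φ (MonoidAlgebra.of F (G1 n m ℓ) bg) =
      1 + MonoidAlgebra.of F (H2 n m ℓ) ah + MonoidAlgebra.of F (H2 n m ℓ) bh :=
    (Φof bg).trans (by rw [Φ'1]; exact hUval)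
  have Φ2 : Φ (MonoidAlgebra.of F (G1 n m ℓ) cg) =
      ((DH : (MonoidAlgebra F (H2 n m ℓ))ˣ) : MonoidAlgebra F (H2 n m ℓ)) :=
    (Φof cg).trans (by rw [Φ'2])
  have Ψ0 : Ψ (MonoidAlgebra.of F (H2 n m ℓ) ah) = MonoidAlgebra.of F (G1 n m ℓ) ag :=
    (Ψof ah).trans (by rw [Ψ'0, hAG]; exact MonoidHom.coe_toHomUnits _ _)
  have Ψ1 : Ψ (MonoidAlgebra.of F (H2 n m ℓ) bh) =
      1 + MonoidAlgebra.of F (G1 n m ℓ) ag + MonoidAlgebra.of F (G1 n m ℓ) bg :=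
    (Ψof bh).trans (by rw [Ψ'1]; exact hVval)
  have Ψ2 : Ψ (MonoidAlgebra.of F (H2 n m ℓ) ch) =
      ((DG : (MonoidAlgebra F (G1 n m ℓ))ˣ) : MonoidAlgebra F (G1 n m ℓ)) :=
    (Ψof ch).trans (by rw [Ψ'2])
  -- char 2 collapses
  have hΨu : Ψ (1 + MonoidAlgebra.of F (H2 n m ℓ) ah + MonoidAlgebra.of F (H2 n m ℓ) bh) =
      MonoidAlgebra.of F (G1 n m ℓ) bg := by
    rw [map_add, map_add, map_one, Ψ0, Ψ1]
    calc (1:MonoidAlgebra F (G1 n m ℓ)) + MonoidAlgebra.of F (G1 n m ℓ) ag +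
        (1 + MonoidAlgebra.of F (G1 n m ℓ) ag + MonoidAlgebra.of F (G1 n m ℓ) bg)
        = MonoidAlgebra.of F (G1 n m ℓ) bg +
          ((1+1) + (MonoidAlgebra.of F (G1 n m ℓ) ag + MonoidAlgebra.of F (G1 n m ℓ) ag)) := by
          abel
    _ = MonoidAlgebra.of F (G1 n m ℓ) bg := by rw [addself F, addself F, add_zero, add_zero]
  have hΦv : Φ (1 + MonoidAlgebra.of F (G1 n m ℓ) ag + MonoidAlgebra.of F (G1 n m ℓ) bg) =
      MonoidAlgebra.of F (H2 n m ℓ) bh := by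
    rw [map_add, map_add, map_one, Φ0, Φ1]
    calc (1:MonoidAlgebra F (H2 n m ℓ)) + MonoidAlgebra.of F (H2 n m ℓ) ah +
        (1 + MonoidAlgebra.of F (H2 n m ℓ) ah + MonoidAlgebra.of F (H2 n m ℓ) bh)
        = MonoidAlgebra.of F (H2 n m ℓ) bh +
          ((1+1) + (MonoidAlgebra.of F (H2 n m ℓ) ah + MonoidAlgebra.of F (H2 n m ℓ) ah)) := by
          abel
    _ = MonoidAlgebra.of F (H2 n m ℓ) bh := by rw [addself F, addself F, add_zero, add_zero]
  -- units maps
  set Ψm := Ψ.toRingHom.toMonoidHom with hΨm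
  set Φm := Φ.toRingHom.toMonoidHom with hΦm
  have hmapΨU : Units.map Ψm U = MonoidHom.toHomUnits (MonoidAlgebra.of F (G1 n m ℓ)) bg := by
    apply Units.ext
    rw [Units.coe_map]
    show Ψ ((U : (MonoidAlgebra F (H2 n m ℓ))ˣ) : MonoidAlgebra F (H2 n m ℓ)) = _
    rw [hUval, MonoidHom.coe_toHomUnits]
    exact hΨu
  have hmapΨA : Units.map Ψm AH = AG := by
    apply Units.ext
    rw [Units.coe_map]
    show Ψ ((AH : (MonoidAlgebra F (H2 n m ℓ))ˣ) : MonoidAlgebra F (H2 n m ℓ)) = _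
    rw [hAH, MonoidHom.coe_toHomUnits, hAG, MonoidHom.coe_toHomUnits]
    exact Ψ0
  have hmapΦV : Units.map Φm V = MonoidHom.toHomUnits (MonoidAlgebra.of F (H2 n m ℓ)) bh := by
    apply Units.ext
    rw [Units.coe_map]
    show Φ ((V : (MonoidAlgebra F (G1 n m ℓ))ˣ) : MonoidAlgebra F (G1 n m ℓ)) = _
    rw [hVval, MonoidHom.coe_toHomUnits]
    exact hΦv
  have hmapΦA : Units.map Φm AG = AH := by
    apply Units.ext
    rw [Units.coe_map]
    show Φ ((AG : (MonoidAlgebra F (G1 n m ℓ))ˣ) : MonoidAlgebra F (G1 n m ℓ)) = _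
    rw [hAG, MonoidHom.coe_toHomUnits, hAH, MonoidHom.coe_toHomUnits]
    exact Φ0
  -- composite values on generators
  have q0 : Ψ (Φ (MonoidAlgebra.of F (G1 n m ℓ) ag)) = MonoidAlgebra.of F (G1 n m ℓ) ag := by
    rw [Φ0]; exact Ψ0
  have q1 : Ψ (Φ (MonoidAlgebra.of F (G1 n m ℓ) bg)) = MonoidAlgebra.of F (G1 n m ℓ) bg := by
    rw [Φ1]; exact hΨu
  have q2 : Ψ (Φ (MonoidAlgebra.of F (G1 n m ℓ) cg)) = MonoidAlgebra.of F (G1 n m ℓ) cg := by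
    rw [Φ2]
    calc Ψ ((DH : (MonoidAlgebra F (H2 n m ℓ))ˣ) : MonoidAlgebra F (H2 n m ℓ))
        = ((Units.map Ψm DH : (MonoidAlgebra F (G1 n m ℓ))ˣ) : MonoidAlgebra F (G1 n m ℓ)) :=
          (Units.coe_map Ψm DH).symm
    _ = ((( MonoidHom.toHomUnits (MonoidAlgebra.of F (G1 n m ℓ)) bg)⁻¹ * AG⁻¹ *
          MonoidHom.toHomUnits (MonoidAlgebra.of F (G1 n m ℓ)) bg * AG :
          (MonoidAlgebra F (G1 n m ℓ))ˣ) : MonoidAlgebra F (G1 n m ℓ)) := by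
        rw [hDH, map_mul, map_mul, map_mul, map_inv, map_inv, hmapΨU, hmapΨA]
    _ = MonoidAlgebra.of F (G1 n m ℓ) (bg⁻¹ * ag⁻¹ * bg * ag) := by
        rw [hAG, ← map_inv, ← map_inv, ← map_mul, ← map_mul, ← map_mul,
          MonoidHom.coe_toHomUnits]
    _ = MonoidAlgebra.of F (G1 n m ℓ) cg := by rw [hG1r]
  have p0 : Φ (Ψ (MonoidAlgebra.of F (H2 n m ℓ) ah)) = MonoidAlgebra.of F (H2 n m ℓ) ah := by
    rw [Ψ0]; exact Φ0
  have p1 : Φ (Ψ (MonoidAlgebra.of F (H2 n m ℓ) bh)) = MonoidAlgebra.of F (H2 n m ℓ) bh := by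
    rw [Ψ1]; exact hΦv
  have p2 : Φ (Ψ (MonoidAlgebra.of F (H2 n m ℓ) ch)) = MonoidAlgebra.of F (H2 n m ℓ) ch := by
    rw [Ψ2]
    calc Φ ((DG : (MonoidAlgebra F (G1 n m ℓ))ˣ) : MonoidAlgebra F (G1 n m ℓ))
        = ((Units.map Φm DG : (MonoidAlgebra F (H2 n m ℓ))ˣ) : MonoidAlgebra F (H2 n m ℓ)) :=
          (Units.coe_map Φm DG).symm
    _ = ((( MonoidHom.toHomUnits (MonoidAlgebra.of F (H2 n m ℓ)) bh)⁻¹ * AH⁻¹ *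
          MonoidHom.toHomUnits (MonoidAlgebra.of F (H2 n m ℓ)) bh * AH :
          (MonoidAlgebra F (H2 n m ℓ))ˣ) : MonoidAlgebra F (H2 n m ℓ)) := by
        rw [hDG, map_mul, map_mul, map_mul, map_inv, map_inv, hmapΦV, hmapΦA]
    _ = MonoidAlgebra.of F (H2 n m ℓ) (bh⁻¹ * ah⁻¹ * bh * ah) := by
        rw [hAH, ← map_inv, ← map_inv, ← map_mul, ← map_mul, ← map_mul,
          MonoidHom.coe_toHomUnits]
    _ = MonoidAlgebra.of F (H2 n m ℓ) ch := by rw [hH1r]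
  -- the compositions are the identity
  have hcomp1 : Φ.comp Ψ = AlgHom.id F (MonoidAlgebra F (H2 n m ℓ)) := by
    have qeq : ((Φ.comp Ψ).toRingHom.toMonoidHom).comp (MonoidAlgebra.of F (H2 n m ℓ)) =
        MonoidAlgebra.of F (H2 n m ℓ) :=
      monoidHom_ext_presented _ _ (by intro x; fin_cases x; exacts [p0, p1, p2])
    apply MonoidAlgebra.algHom_ext
    intro x
    rw [← MonoidAlgebra.of_apply]
    show Φ (Ψ (MonoidAlgebra.of F (H2 n m ℓ) x)) = MonoidAlgebra.of F (H2 n m ℓ) x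
    exact DFunLike.congr_fun qeq x
    exact Subsingleton.elim _ _
  have hcomp2 : Ψ.comp Φ = AlgHom.id F (MonoidAlgebra F (G1 n m ℓ)) := by
    have qeq : ((Ψ.comp Φ).toRingHom.toMonoidHom).comp (MonoidAlgebra.of F (G1 n m ℓ)) =
        MonoidAlgebra.of F (G1 n m ℓ) :=
      monoidHom_ext_presented _ _ (by intro x; fin_cases x; exacts [q0, q1, q2])
    apply MonoidAlgebra.algHom_ext
    intro x
    rw [← MonoidAlgebra.of_apply]
    show Ψ (Φ (MonoidAlgebra.of F (G1 n m ℓ) x)) = MonoidAlgebra.of F (G1 n m ℓ) x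
    exact DFunLike.congr_fun qeq x
    exact Subsingleton.elim _ _
  refine ⟨AlgEquiv.ofAlgHom Φ Ψ hcomp1 hcomp2, ?_, ?_⟩
  · show Φ (MonoidAlgebra.of F (G1 n m ℓ) ag) = MonoidAlgebra.of F (H2 n m ℓ) ah
    exact Φ0
  · show Φ (MonoidAlgebra.of F (G1 n m ℓ) bg) =
      MonoidAlgebra.of F (H2 n m ℓ) bh + MonoidAlgebra.of F (H2 n m ℓ) ah + 1
    rw [Φ1]
    abel
end
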